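/- arXiv:math/0202083 — 7 statements merged into one kernel-verified Lean document; each statement's English description precedes it below -/
import Mathlib

section
/- Let n ≥ 1, t₀ ∈ ℝ, and let A : [t₀, ∞) → M_n(ℂ) be a continuous matrix-valued function such that (i) for every t ≥ t₀ the improper Riemann integral Ã(t) := lim_{T→∞} ∫_t^T A(s) ds exists (entrywise), and (ii) the function t ↦ A(t)·Ã(t) is integrable on [t₀, ∞) (entrywise, with respect to Lebesgue measure). If x : [t₀, ∞) → ℂⁿ is differentiable and satisfies x′(t) = A(t) x(t) for all t ≥ t₀, then the limit lim_{t→∞} x(t) exists in ℂⁿ. -/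
open MeasureTheory Filter Set Matrix

set_option maxHeartbeats 2000000
set_option synthInstance.maxHeartbeats 400000

/-- The continuous linear map on `Fin n → ℂ` induced by a matrix. -/
noncomputable def PhiD (n : ℕ) : Matrix (Fin n) (Fin n) ℂ →ₗ[ℂ] ((Fin n → ℂ) →L[ℂ] (Fin n → ℂ)) where
  toFun M := LinearMap.toContinuousLinearMap M.mulVecLin
  map_add' M N := by ext v i; simp [Matrix.mulVecLin_apply, Matrix.add_mulVec, Pi.add_apply]
  map_smul' c M := by ext v i; simp [Matrix.mulVecLin_apply, Matrix.smul_mulVec]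

theorem PhiD_apply {n : ℕ} (M : Matrix (Fin n) (Fin n) ℂ) (v : Fin n → ℂ) :
    PhiD n M v = M *ᵥ v := rfl

theorem PhiD_mul {n : ℕ} (M N : Matrix (Fin n) (Fin n) ℂ) :
    PhiD n (M * N) = PhiD n M * PhiD n N := by
  ext v i
  simp [PhiD_apply, ContinuousLinearMap.mul_apply, Matrix.mulVec_mulVec]

theorem PhiD_cont {n : ℕ} : Continuous (PhiD n) :=
  (PhiD n).continuous_of_finiteDimensional

theorem PhiD_norm_le {n : ℕ} (M : Matrix (Fin n) (Fin n) ℂ) :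
    ‖PhiD n M‖ ≤ ∑ i, ∑ j, ‖M i j‖ := by
  apply ContinuousLinearMap.opNorm_le_bound
  · positivity
  · intro v
    rw [PhiD_apply]
    rw [pi_norm_le_iff_of_nonneg (by positivity)]
    intro i
    calc ‖(M *ᵥ v) i‖ = ‖∑ j, M i j * v j‖ := by rw [Matrix.mulVec, dotProduct]
    _ ≤ ∑ j, ‖M i j * v j‖ := norm_sum_le _ _
    _ ≤ ∑ j, ‖M i j‖ * ‖v‖ := by
        refine Finset.sum_le_sum fun j _ => ?_
        rw [norm_mul]
        exact mul_le_mul_of_nonneg_left (norm_le_pi_norm v j) (norm_nonneg _)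
    _ = (∑ j, ‖M i j‖) * ‖v‖ := by rw [Finset.sum_mul]
    _ ≤ (∑ i, ∑ j, ‖M i j‖) * ‖v‖ := by
        refine mul_le_mul_of_nonneg_right ?_ (norm_nonneg _)
        exact Finset.single_le_sum (f := fun i => ∑ j, ‖M i j‖)
          (fun _ _ => by positivity) (Finset.mem_univ i)

/-- Restriction of scalars as a continuous linear map. -/
noncomputable abbrev RSL (n : ℕ) :
    ((Fin n → ℂ) →L[ℂ] (Fin n → ℂ)) →L[ℝ] ((Fin n → ℂ) →L[ℝ] (Fin n → ℂ)) :=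
  (ContinuousLinearMap.restrictScalarsIsometry ℂ (Fin n → ℂ) (Fin n → ℂ) ℝ ℝ).toContinuousLinearMap

/-- Levinson/Wintner-type asymptotic integration: if the improper integral
`Ã(t) = ∫_t^∞ A(s) ds` exists entrywise and `A·Ã` is integrable on `[t₀,∞)`,
then every solution of `x' = A(t)x` has a limit at infinity. -/
theorem dunkl_stmt0 (n : ℕ) (hn : 1 ≤ n) (t₀ : ℝ)
    (A B : ℝ → Matrix (Fin n) (Fin n) ℂ)
    (hAc : ∀ i j, ContinuousOn (fun t => A t i j) (Ici t₀))
    (hB : ∀ t ∈ Ici t₀, ∀ i j,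
      Tendsto (fun T => ∫ s in t..T, A s i j) atTop (nhds (B t i j)))
    (hAB : ∀ i j, IntegrableOn (fun t => (A t * B t) i j) (Ici t₀))
    (x : ℝ → Fin n → ℂ)
    (hx : ∀ t ∈ Ici t₀, HasDerivWithinAt x (A t *ᵥ x t) (Ici t₀) t) :
    ∃ L : Fin n → ℂ, Tendsto x atTop (nhds L) := by
  classical
  set AA : ℝ → ((Fin n → ℂ) →L[ℂ] (Fin n → ℂ)) := fun t => PhiD n (A t) with hAAdef
  set BB : ℝ → ((Fin n → ℂ) →L[ℂ] (Fin n → ℂ)) := fun t => PhiD n (B t) with hBBdef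
  -- basic interval facts
  have hsub : ∀ a ∈ Ici t₀, ∀ b ∈ Ici t₀, uIcc a b ⊆ Ici t₀ := by
    intro a ha b hb y hy
    exact le_trans (le_min ha hb) hy.1
  have hAi : ∀ i j, ∀ a ∈ Ici t₀, ∀ b ∈ Ici t₀,
      IntervalIntegrable (fun t => A t i j) volume a b := by
    intro i j a ha b hb
    exact ((hAc i j).mono (hsub a ha b hb)).intervalIntegrable
  -- entrywise formula for B
  have hBeq : ∀ t ∈ Ici t₀, ∀ i j, B t i j = B t₀ i j - ∫ s in t₀..t, A s i j := by
    intro t ht i j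
    have h1 : Tendsto (fun T => ∫ s in t..T, A s i j) atTop
        (nhds (B t₀ i j - ∫ s in t₀..t, A s i j)) := by
      have h2 : Tendsto (fun T => (∫ s in t₀..T, A s i j) - ∫ s in t₀..t, A s i j) atTop
          (nhds (B t₀ i j - ∫ s in t₀..t, A s i j)) :=
        (hB t₀ self_mem_Ici i j).sub_const _
      refine h2.congr' ?_
      filter_upwards [eventually_ge_atTop t] with T hT
      exact intervalIntegral.integral_interval_sub_left
        (hAi i j t₀ self_mem_Ici T (le_trans ht hT)) (hAi i j t₀ self_mem_Ici t ht)
    exact tendsto_nhds_unique (hB t ht i j) h1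
  -- entrywise limit of B at ∞ is 0
  have hB0e : ∀ i j, Tendsto (fun t => B t i j) atTop (nhds 0) := by
    intro i j
    have h1 : Tendsto (fun t => B t₀ i j - ∫ s in t₀..t, A s i j) atTop
        (nhds (B t₀ i j - B t₀ i j)) :=
      tendsto_const_nhds.sub (hB t₀ self_mem_Ici i j)
    rw [sub_self] at h1
    refine h1.congr' ?_
    filter_upwards [eventually_ge_atTop t₀] with t ht
    exact (hBeq t ht i j).symm
  -- continuity and integrability of AA
  have hAcont : ContinuousOn AA (Ici t₀) :=
    (PhiD_cont).comp_continuousOn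
      (continuousOn_pi.2 fun i => continuousOn_pi.2 fun j => hAc i j)
  have hPAi : ∀ a ∈ Ici t₀, ∀ b ∈ Ici t₀, IntervalIntegrable AA volume a b := by
    intro a ha b hb
    exact (hAcont.mono (hsub a ha b hb)).intervalIntegrable
  -- operator-level formula for BB
  have hBL : ∀ t ∈ Ici t₀, BB t = BB t₀ - ∫ s in t₀..t, AA s := by
    intro t ht
    ext v i
    have hev := ((ContinuousLinearMap.proj (R := ℂ) (φ := fun _ : Fin n => ℂ) i).comp
        (ContinuousLinearMap.apply ℂ (Fin n → ℂ) v)).intervalIntegral_comp_comm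
        (hPAi t₀ self_mem_Ici t ht)
    simp only [ContinuousLinearMap.coe_comp', Function.comp_apply,
      ContinuousLinearMap.apply_apply, ContinuousLinearMap.proj_apply] at hev
    simp only [hAAdef] at hev
    simp only [ContinuousLinearMap.sub_apply, Pi.sub_apply, ← hev, hAAdef, hBBdef, PhiD_apply]
    simp only [Matrix.mulVec, dotProduct]
    have hterm : ∀ j, B t i j * v j = B t₀ i j * v j - (∫ s in t₀..t, A s i j) * v j :=
      fun j => by rw [hBeq t ht i j, sub_mul]
    rw [Finset.sum_congr rfl fun j _ => hterm j, Finset.sum_sub_distrib]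
    congr 1
    have hintj : ∀ j ∈ Finset.univ, IntervalIntegrable (fun s => A s i j * v j) volume t₀ t :=
      fun j _ => (((hAc i j).mono (hsub t₀ self_mem_Ici t ht)).intervalIntegrable).mul_const _
    rw [intervalIntegral.integral_finset_sum hintj]
    congr 1
    ext j
    rw [intervalIntegral.integral_mul_const]
  -- derivative of BB
  have hBd : ∀ t ∈ Ioi t₀, HasDerivAt BB (-(AA t)) t := by
    intro t ht
    have hmem : Ici t₀ ∈ nhds t := Ici_mem_nhds ht
    have hca : ContinuousAt AA t := hAcont.continuousAt hmem
    have hprim : HasDerivAt (fun u => ∫ s in t₀..u, AA s) (AA t) t := by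
      apply intervalIntegral.integral_hasDerivAt_right
        (hPAi t₀ self_mem_Ici t (mem_Ici.2 (le_of_lt (mem_Ioi.1 ht))))
      · exact ⟨Ici t₀, hmem, hAcont.aestronglyMeasurable measurableSet_Ici⟩
      · exact hca
    have h2 : HasDerivAt (fun u => BB t₀ - ∫ s in t₀..u, AA s) (-(AA t)) t := by
      have h := (hasDerivAt_const t (BB t₀)).sub hprim; rw [zero_sub] at h; exact h
    apply h2.congr_of_eventuallyEq
    filter_upwards [hmem] with u hu
    exact hBL u hu
  have hBca : ∀ t ∈ Ioi t₀, ContinuousAt BB t := fun t ht => (hBd t ht).continuousAt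
  -- BB tends to 0
  have hB0 : Tendsto BB atTop (nhds 0) := by
    have hBm : Tendsto B atTop (nhds (0 : Matrix (Fin n) (Fin n) ℂ)) :=
      tendsto_pi_nhds.2 fun i => tendsto_pi_nhds.2 fun j => hB0e i j
    have := (PhiD_cont.tendsto (0 : Matrix (Fin n) (Fin n) ℂ)).comp hBm
    simp only [map_zero] at this; exact this
  -- derivative of x
  have hxd : ∀ t ∈ Ioi t₀, HasDerivAt x (AA t (x t)) t := fun t ht =>
    (hx t (mem_Ici.2 (le_of_lt (mem_Ioi.1 ht)))).hasDerivAt (Ici_mem_nhds ht)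
  -- the coefficient function g
  set g : ℝ → ℝ := fun t => ‖AA t * BB t‖ with hgdef
  have hgc : ContinuousOn g (Ioi t₀) := by
    apply ContinuousOn.norm
    exact ((hAcont.mono Ioi_subset_Ici_self).mul
      (fun t ht => (hBca t ht).continuousWithinAt))
  have hgi : IntegrableOn g (Ioi t₀) := by
    have hbound : IntegrableOn (fun t => ∑ i, ∑ j, ‖(A t * B t) i j‖) (Ioi t₀) := by
      apply IntegrableOn.mono_set _ Ioi_subset_Ici_self
      apply integrable_finset_sum
      intro i _
      apply integrable_finset_sum
      intro j _
      exact (hAB i j).norm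
    refine Integrable.mono' hbound
      (hgc.aestronglyMeasurable measurableSet_Ioi) ?_
    rw [ae_restrict_iff' measurableSet_Ioi]
    refine ae_of_all _ fun t ht => ?_
    have : AA t * BB t = PhiD n (A t * B t) := (PhiD_mul _ _).symm
    rw [hgdef]
    simp only [norm_norm]
    rw [this]
    exact PhiD_norm_le _
  -- choose t₁ with ‖BB‖ < 1/2 beyond t₁
  have hev : ∀ᶠ t in atTop, ‖BB t‖ < 1/2 := by
    have h0 : Tendsto (fun t => ‖BB t‖) atTop (nhds 0) := by simpa using hB0.norm
    exact h0.eventually_lt_const (by norm_num)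
  obtain ⟨N, hN⟩ := eventually_atTop.1 hev
  set t₁ : ℝ := max N (t₀ + 1) with ht₁def
  have ht₁gt : t₀ < t₁ := lt_of_lt_of_le (by linarith) (le_max_right _ _)
  have hsmall : ∀ t ∈ Ici t₁, ‖BB t‖ < 1/2 := fun t ht =>
    hN t (le_trans (le_max_left _ _) ht)
  have hIci₁ : Ici t₁ ⊆ Ioi t₀ := fun t ht => lt_of_lt_of_le ht₁gt ht
  -- the inverse function R and the transformed solution w
  set R : ℝ → ((Fin n → ℂ) →L[ℂ] (Fin n → ℂ)) := fun t => Ring.inverse (1 - BB t) with hRdef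
  set w : ℝ → (Fin n → ℂ) := fun t => R t (x t) with hwdef
  set w' : ℝ → (Fin n → ℂ) := fun t => -(R t ((AA t * BB t) (w t))) with hw'def
  have hone : ∀ t ∈ Ici t₁, (1 - BB t) * R t = 1 := by
    intro t ht
    have hb1 : ‖BB t‖ < 1 := lt_trans (hsmall t ht) (by norm_num)
    have hrval : R t = ↑(Units.oneSub (BB t) hb1)⁻¹ := NormedRing.inverse_one_sub (BB t) hb1
    rw [hRdef]
    simp only
    rw [NormedRing.inverse_one_sub (BB t) hb1]
    exact (Units.oneSub (BB t) hb1).mul_inv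
  have hone' : ∀ t ∈ Ici t₁, R t * (1 - BB t) = 1 := by
    intro t ht
    have hb1 : ‖BB t‖ < 1 := lt_trans (hsmall t ht) (by norm_num)
    rw [hRdef]
    simp only
    rw [NormedRing.inverse_one_sub (BB t) hb1]
    exact (Units.oneSub (BB t) hb1).inv_mul
  -- norm bound for R
  have hR2 : ∀ t ∈ Ici t₁, ‖R t‖ ≤ 2 := by
    intro t ht
    have h1 : R t = 1 + BB t * R t := by
      have h2 : R t - BB t * R t = 1 := by rw [← hone t ht, sub_mul, one_mul]
      rw [← h2]; abel
    have h3 : ‖R t‖ ≤ ‖(1 : (Fin n → ℂ) →L[ℂ] (Fin n → ℂ))‖ + ‖BB t‖ * ‖R t‖ := by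
      rw [h1]
      exact le_trans (norm_add_le _ _) (by gcongr; · rw [← h1]; exact norm_mul_le _ _)
    have h4 : ‖(1 : (Fin n → ℂ) →L[ℂ] (Fin n → ℂ))‖ ≤ 1 := by
      rw [ContinuousLinearMap.one_def]
      exact ContinuousLinearMap.norm_id_le
    have h5 : ‖BB t‖ * ‖R t‖ ≤ (1/2) * ‖R t‖ :=
      mul_le_mul_of_nonneg_right (le_of_lt (hsmall t ht)) (norm_nonneg _)
    nlinarith [norm_nonneg (R t)]
  -- derivative of R
  have hRd : ∀ t ∈ Ici t₁, HasDerivAt R (-(R t * AA t * R t)) t := by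
    intro t ht
    have ht' : t ∈ Ioi t₀ := hIci₁ ht
    have hb1 : ‖BB t‖ < 1 := lt_trans (hsmall t ht) (by norm_num)
    have hrval : R t = ↑(Units.oneSub (BB t) hb1)⁻¹ := NormedRing.inverse_one_sub (BB t) hb1
    have hsub' : HasDerivAt (fun s => 1 - BB s) (AA t) t := by
      have h := (hasDerivAt_const t (1 : (Fin n → ℂ) →L[ℂ] (Fin n → ℂ))).sub (hBd t ht')
      rw [zero_sub, neg_neg] at h; exact h
    have hF := hasFDerivAt_ringInverse (𝕜 := ℂ) (Units.oneSub (BB t) hb1)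
    have hinv' := (hF.restrictScalars ℝ).comp_hasDerivAt t hsub'
    convert hinv' using 1
    rfl
    rfl
    rfl
    rfl
    simp [ContinuousLinearMap.mulLeftRight_apply, hrval]
  have hRcont : ContinuousOn R (Ici t₁) := fun t ht =>
    ((hRd t ht).continuousAt).continuousWithinAt
  -- derivative of w
  have hwd : ∀ t ∈ Ici t₁, HasDerivAt w (w' t) t := by
    intro t ht
    have ht' : t ∈ Ioi t₀ := hIci₁ ht
    have hinvR : HasDerivAt (fun s => (R s).restrictScalars ℝ)
        ((-(R t * AA t * R t)).restrictScalars ℝ) t :=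
      (RSL n).hasFDerivAt.comp_hasDerivAt t (hRd t ht)
    have hw := hinvR.clm_apply (hxd t ht')
    have hbr : BB t * R t = R t - 1 := by
      have h2 : R t - BB t * R t = 1 := by rw [← hone t ht, sub_mul, one_mul]
      rw [eq_sub_iff_add_eq, ← h2]
      abel
    convert hw using 1
    show -(R t ((AA t * BB t) (R t (x t)))) =
      ((-(R t * AA t * R t)).restrictScalars ℝ) (x t) + ((R t).restrictScalars ℝ) (AA t (x t))
    have h3 : (AA t * BB t) (R t (x t)) = AA t ((BB t * R t) (x t)) := by
      simp [ContinuousLinearMap.mul_apply]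
    rw [h3, hbr]
    show -(R t (AA t ((R t - 1) (x t)))) = -((R t * AA t * R t) (x t)) + R t (AA t (x t))
    simp only [ContinuousLinearMap.sub_apply, ContinuousLinearMap.one_apply, map_sub,
      ContinuousLinearMap.mul_apply]
    abel
    rfl
    rfl
    rfl
    rfl
  have hwc : ContinuousOn w (Ici t₁) := fun t ht =>
    ((hwd t ht).continuousAt).continuousWithinAt
  -- norm bound on w'
  have hw'norm : ∀ t ∈ Ici t₁, ‖w' t‖ ≤ 2 * (g t * ‖w t‖) := by
    intro t ht
    rw [hw'def]
    simp only [norm_neg]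
    calc ‖R t ((AA t * BB t) (w t))‖ ≤ ‖R t‖ * ‖(AA t * BB t) (w t)‖ :=
          ContinuousLinearMap.le_opNorm _ _
    _ ≤ 2 * ‖(AA t * BB t) (w t)‖ := by
        exact mul_le_mul_of_nonneg_right (hR2 t ht) (norm_nonneg _)
    _ ≤ 2 * (g t * ‖w t‖) := by
        refine mul_le_mul_of_nonneg_left ?_ (by norm_num)
        exact ContinuousLinearMap.le_opNorm _ _
  -- continuity of w'
  have hw'cont : ContinuousOn w' (Ici t₁) := by
    rw [hw'def]
    apply ContinuousOn.neg
    apply ContinuousOn.clm_apply hRcont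
    apply ContinuousOn.clm_apply
    · exact (hAcont.mono (fun t ht => mem_Ici.2 (le_of_lt (mem_Ioi.1 (hIci₁ ht))))).mul
        (fun t ht => (hBca t (hIci₁ ht)).continuousWithinAt)
    · exact hwc
  -- FTC for w
  have hw_ftc : ∀ a b : ℝ, t₁ ≤ a → a ≤ b → w b - w a = ∫ s in a..b, w' s := by
    intro a b ha hab
    have huIcc : uIcc a b ⊆ Ici t₁ := fun y hy => le_trans (le_min ha (le_trans ha hab)) hy.1
    rw [intervalIntegral.integral_eq_sub_of_hasDerivAt
      (fun t ht => hwd t (huIcc ht))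
      ((hw'cont.mono huIcc).intervalIntegrable)]
  -- interval integrability of g
  have hgii : ∀ a b : ℝ, t₁ ≤ a → t₁ ≤ b → IntervalIntegrable g volume a b := by
    intro a b ha hb
    have : uIcc a b ⊆ Ioi t₀ := fun y hy => lt_of_lt_of_le ht₁gt (le_trans (le_min ha hb) hy.1)
    exact (hgc.mono this).intervalIntegrable
  -- tail smallness of ∫ g
  have hGI : IntegrableOn g (Ioi t₁) := hgi.mono_set (Ioi_subset_Ioi (le_of_lt ht₁gt))
  have hFlim : Tendsto (fun T => ∫ s in t₁..T, g s) atTop (nhds (∫ s in Ioi t₁, g s)) :=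
    intervalIntegral_tendsto_integral_Ioi t₁ hGI tendsto_id
  have htail : ∃ t₂, t₁ ≤ t₂ ∧ ∀ a b : ℝ, t₂ ≤ a → a ≤ b → (∫ s in a..b, g s) ≤ 1/8 := by
    have hc : ∀ᶠ T in atTop, |(∫ s in t₁..T, g s) - ∫ s in Ioi t₁, g s| < 1/16 := by
      have := hFlim.sub_const (∫ s in Ioi t₁, g s)
      rw [sub_self] at this
      have h2 := this.abs
      rw [abs_zero] at h2
      exact h2.eventually_lt_const (by norm_num)
    obtain ⟨N₂, hN₂⟩ := eventually_atTop.1 hc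
    refine ⟨max N₂ t₁, le_max_right _ _, ?_⟩
    intro a b ha hab
    have ha' : t₁ ≤ a := le_trans (le_max_right _ _) ha
    have hb' : t₁ ≤ b := le_trans ha' hab
    have hsplit : (∫ s in a..b, g s) = (∫ s in t₁..b, g s) - ∫ s in t₁..a, g s :=
      (intervalIntegral.integral_interval_sub_left (hgii t₁ b le_rfl hb')
        (hgii t₁ a le_rfl ha')).symm
    have h1 := hN₂ a (le_trans (le_max_left _ _) ha)
    have h2 := hN₂ b (le_trans (le_trans (le_max_left _ _) ha) hab)
    rw [hsplit]
    rw [abs_lt] at h1 h2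
    linarith [h1.1, h1.2, h2.1, h2.2]
  obtain ⟨t₂, ht₂, htail⟩ := htail
  -- boundedness of w on [t₂, ∞)
  have hbdd : ∀ t, t₂ ≤ t → ‖w t‖ ≤ 2 * ‖w t₂‖ := by
    intro T hT
    -- maximum of ‖w‖ on [t₂, T]
    have hcompact : IsCompact (Icc t₂ T) := isCompact_Icc
    have hne : (Icc t₂ T).Nonempty := ⟨t₂, le_rfl, hT⟩
    have hwn : ContinuousOn (fun t => ‖w t‖) (Icc t₂ T) :=
      (hwc.mono (fun y hy => le_trans ht₂ hy.1)).norm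
    obtain ⟨τ, hτmem, hτmax⟩ := hcompact.exists_isMaxOn hne hwn
    have hkey : ∀ t ∈ Icc t₂ T, ‖w t‖ ≤ ‖w t₂‖ + (1/4) * ‖w τ‖ := by
      intro t htmem
      have hta : t₁ ≤ t := le_trans ht₂ htmem.1
      have hdiff : w t - w t₂ = ∫ s in t₂..t, w' s := hw_ftc t₂ t ht₂ htmem.1
      have hnorm : ‖w t - w t₂‖ ≤ ∫ s in t₂..t, ‖w' s‖ := by
        rw [hdiff]
        exact intervalIntegral.norm_integral_le_integral_norm htmem.1
      have hmono : (∫ s in t₂..t, ‖w' s‖) ≤ ∫ s in t₂..t, 2 * (g s * ‖w τ‖) := by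
        apply intervalIntegral.integral_mono_on htmem.1
        · apply ContinuousOn.intervalIntegrable
          apply ContinuousOn.norm
          apply hw'cont.mono
          intro y hy
          exact le_trans ht₂ (le_trans (le_min le_rfl htmem.1) hy.1)
        · exact ((hgii t₂ t ht₂ hta).mul_const _).const_mul 2
        · intro s hsmem
          have hs₁ : s ∈ Ici t₁ := le_trans ht₂ hsmem.1
          calc ‖w' s‖ ≤ 2 * (g s * ‖w s‖) := hw'norm s hs₁
          _ ≤ 2 * (g s * ‖w τ‖) := by
              have hws : ‖w s‖ ≤ ‖w τ‖ := hτmax ⟨hsmem.1, le_trans hsmem.2 htmem.2⟩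
              have hg0 : 0 ≤ g s := norm_nonneg _
              nlinarith
      have hconst : (∫ s in t₂..t, 2 * (g s * ‖w τ‖)) = 2 * ‖w τ‖ * ∫ s in t₂..t, g s := by
        rw [show (fun s => 2 * (g s * ‖w τ‖)) = fun s => (2 * ‖w τ‖) * g s by
          ext s; ring, intervalIntegral.integral_const_mul]
      have hint_small : (∫ s in t₂..t, g s) ≤ 1/8 := htail t₂ t le_rfl htmem.1
      have h8 : 2 * ‖w τ‖ * (∫ s in t₂..t, g s) ≤ 2 * ‖w τ‖ * (1/8) := by
        apply mul_le_mul_of_nonneg_left hint_small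
        positivity
      have htri : ‖w t‖ ≤ ‖w t₂‖ + ‖w t - w t₂‖ := by
        have := norm_add_le (w t₂) (w t - w t₂)
        simpa using this
      calc ‖w t‖ ≤ ‖w t₂‖ + ‖w t - w t₂‖ := htri
      _ ≤ ‖w t₂‖ + ∫ s in t₂..t, ‖w' s‖ := by linarith
      _ ≤ ‖w t₂‖ + 2 * ‖w τ‖ * (1/8) := by
          rw [hconst] at hmono
          linarith
      _ ≤ ‖w t₂‖ + (1/4) * ‖w τ‖ := by linarith
    have hτbound : ‖w τ‖ ≤ 2 * ‖w t₂‖ := by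
      have := hkey τ hτmem
      linarith [norm_nonneg (w t₂), norm_nonneg (w τ)]
    have := hkey T ⟨hT, le_rfl⟩
    have hτT : ‖w T‖ ≤ ‖w t₂‖ + (1/4) * ‖w τ‖ := this
    linarith [norm_nonneg (w t₂), norm_nonneg (w τ)]
  -- integrability of w' on (t₂, ∞)
  have hw'int : IntegrableOn w' (Ioi t₂) := by
    have hIoi₂ : Ioi t₂ ⊆ Ici t₁ := fun y hy => le_trans ht₂ (le_of_lt hy)
    refine Integrable.mono'
      ((hGI.mono_set (Ioi_subset_Ioi ht₂)).const_mul (4 * ‖w t₂‖))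
      ((hw'cont.mono hIoi₂).aestronglyMeasurable measurableSet_Ioi) ?_
    rw [ae_restrict_iff' measurableSet_Ioi]
    refine ae_of_all _ fun t ht => ?_
    have ht₁' : t ∈ Ici t₁ := hIoi₂ ht
    calc ‖w' t‖ ≤ 2 * (g t * ‖w t‖) := hw'norm t ht₁'
    _ ≤ 2 * (g t * (2 * ‖w t₂‖)) := by
        have := hbdd t (le_of_lt ht)
        have hg0 : 0 ≤ g t := norm_nonneg _
        nlinarith
    _ = 4 * ‖w t₂‖ * g t := by ring
  -- limit of w
  have hIlim : Tendsto (fun T => ∫ s in t₂..T, w' s) atTop (nhds (∫ s in Ioi t₂, w' s)) :=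
    intervalIntegral_tendsto_integral_Ioi t₂ hw'int tendsto_id
  have hwlim : Tendsto w atTop (nhds (w t₂ + ∫ s in Ioi t₂, w' s)) := by
    have h1 : Tendsto (fun T => w t₂ + ∫ s in t₂..T, w' s) atTop
        (nhds (w t₂ + ∫ s in Ioi t₂, w' s)) := tendsto_const_nhds.add hIlim
    refine h1.congr' ?_
    filter_upwards [eventually_ge_atTop t₂] with T hT
    have h := hw_ftc t₂ T ht₂ hT
    rw [← h]
    abel
  -- x in terms of w
  have hxw : ∀ t ∈ Ici t₁, x t = w t - BB t (w t) := by
    intro t ht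
    have h1 : x t = ((1 - BB t) * R t) (x t) := by rw [hone t ht]; simp
    calc x t = ((1 - BB t) * R t) (x t) := h1
    _ = (1 - BB t) (R t (x t)) := by rw [ContinuousLinearMap.mul_apply]
    _ = w t - BB t (w t) := by
        simp [hwdef, ContinuousLinearMap.sub_apply]
  -- conclusion
  refine ⟨w t₂ + ∫ s in Ioi t₂, w' s, ?_⟩
  have hterm : Tendsto (fun t => BB t (w t)) atTop (nhds 0) := by
    have happ : Continuous fun p : ((Fin n → ℂ) →L[ℂ] (Fin n → ℂ)) × (Fin n → ℂ) => p.1 p.2 :=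
      isBoundedBilinearMap_apply.continuous
    have := (happ.tendsto ((0 : (Fin n → ℂ) →L[ℂ] (Fin n → ℂ)),
      w t₂ + ∫ s in Ioi t₂, w' s)).comp (hB0.prodMk_nhds hwlim)
    simpa [Function.comp_def] using this
  have hfinal : Tendsto (fun t => w t - BB t (w t)) atTop
      (nhds (w t₂ + ∫ s in Ioi t₂, w' s)) := by
    have := hwlim.sub hterm
    simpa using this
  refine hfinal.congr' ?_
  filter_upwards [eventually_ge_atTop t₁] with t ht
  exact (hxw t ht).symm
end

section
/- Let n ≥ 1, t₀ ∈ ℝ, and let A : [t₀, ∞) → M_n(ℂ) be a continuous matrix-valued function such that (i) for every t ≥ t₀ the improper Riemann integral Ã(t) := lim_{T→∞} ∫_t^T A(s) ds exists (entrywise), and (ii) the function t ↦ A(t)·Ã(t) is integrable on [t₀, ∞). If x : [t₀, ∞) → ℂⁿ is differentiable, satisfies x′(t) = A(t) x(t) for all t ≥ t₀, and x(t₀) ≠ 0, then lim_{t→∞} x(t) exists and is different from 0. -/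
open MeasureTheory Filter Set Matrix Topology

noncomputable def dunklΦ (n : ℕ) : Matrix (Fin n) (Fin n) ℂ →ₗ[ℂ] ((Fin n → ℂ) →L[ℂ] (Fin n → ℂ)) :=
  (LinearMap.toContinuousLinearMap.toLinearMap).comp Matrix.toLin'.toLinearMap

lemma dunklΦ_apply {n : ℕ} (M : Matrix (Fin n) (Fin n) ℂ) (v : Fin n → ℂ) :
    dunklΦ n M v = M *ᵥ v := by
  simp [dunklΦ, Matrix.toLin'_apply]

lemma dunklΦ_mul {n : ℕ} (M N : Matrix (Fin n) (Fin n) ℂ) :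
    dunklΦ n (M * N) = dunklΦ n M ∘L dunklΦ n N := by
  ext v i
  simp [dunklΦ_apply, Matrix.mulVec_mulVec]

lemma dunklΦ_decomp {n : ℕ} (M : Matrix (Fin n) (Fin n) ℂ) :
    dunklΦ n M = ∑ i : Fin n, ∑ j : Fin n, M i j • dunklΦ n (Matrix.single i j 1) := by
  conv_lhs => rw [matrix_eq_sum_single M]
  rw [map_sum]
  refine Finset.sum_congr rfl fun i _ => ?_
  rw [map_sum]
  refine Finset.sum_congr rfl fun j _ => ?_
  rw [← _root_.map_smul]
  congr 1
  rw [smul_single, smul_eq_mul, mul_one]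

set_option maxHeartbeats 2000000

/-- Levinson/Wintner-type asymptotic integration: under the integrability conditions
on `A` and `Ã(t) = ∫_t^∞ A(s) ds`, every solution of `x' = A(t)x` that is nonzero at `t₀`
has a nonzero limit at infinity. -/
theorem dunkl_stmt1 (n : ℕ) (hn : 1 ≤ n) (t₀ : ℝ)
    (A B : ℝ → Matrix (Fin n) (Fin n) ℂ)
    (hAc : ∀ i j, ContinuousOn (fun t => A t i j) (Ici t₀))
    (hB : ∀ t ∈ Ici t₀, ∀ i j,
      Tendsto (fun T => ∫ s in t..T, A s i j) atTop (nhds (B t i j)))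
    (hAB : ∀ i j, IntegrableOn (fun t => (A t * B t) i j) (Ici t₀))
    (x : ℝ → Fin n → ℂ)
    (hx : ∀ t ∈ Ici t₀, HasDerivWithinAt x (A t *ᵥ x t) (Ici t₀) t)
    (hx0 : x t₀ ≠ 0) :
    ∃ L : Fin n → ℂ, L ≠ 0 ∧ Tendsto x atTop (nhds L) := by
  classical
  set Ac : ℝ → ((Fin n → ℂ) →L[ℂ] (Fin n → ℂ)) := fun t => dunklΦ n (A t) with hAcdef
  set Bc : ℝ → ((Fin n → ℂ) →L[ℂ] (Fin n → ℂ)) := fun t => dunklΦ n (B t) with hBcdef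
  -- interval integrability of entries of A
  have hAint : ∀ a ∈ Ici t₀, ∀ b ∈ Ici t₀, ∀ i j,
      IntervalIntegrable (fun s => A s i j) volume a b := by
    intro a ha b hb i j
    exact ((hAc i j).mono (fun s hs => le_trans (le_inf ha hb) hs.1)).intervalIntegrable
  -- B entries via the fundamental identity
  have hBeq : ∀ t ∈ Ici t₀, ∀ i j, B t i j = B t₀ i j - ∫ s in t₀..t, A s i j := by
    intro t ht i j
    have h1 := hB t₀ self_mem_Ici i j
    have h2 := hB t ht i j
    have h3 : Tendsto (fun T => ∫ s in t₀..T, A s i j) atTop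
        (nhds ((∫ s in t₀..t, A s i j) + B t i j)) := by
      refine (tendsto_const_nhds.add h2).congr' ?_
      filter_upwards [eventually_ge_atTop t] with T hT
      exact intervalIntegral.integral_add_adjacent_intervals
        (hAint t₀ self_mem_Ici t ht i j) (hAint t ht T (le_trans ht hT) i j)
    have := tendsto_nhds_unique h1 h3
    linear_combination -this
  -- derivative of B entries
  have hBderiv : ∀ t ∈ Ioi t₀, ∀ i j, HasDerivAt (fun s => B s i j) (-(A t i j)) t := by
    intro t ht i j
    have hmeas : StronglyMeasurableAtFilter (fun s => A s i j) (𝓝 t) volume :=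
      ContinuousOn.stronglyMeasurableAtFilter isOpen_Ioi
        ((hAc i j).mono Ioi_subset_Ici_self) t ht
    have hca : ContinuousAt (fun s => A s i j) t :=
      (hAc i j).continuousAt (Ici_mem_nhds ht)
    have hFTC : HasDerivAt (fun s => ∫ u in t₀..s, A u i j) (A t i j) t :=
      intervalIntegral.integral_hasDerivAt_right
        (hAint t₀ self_mem_Ici t (Set.mem_Ici.mpr (le_of_lt ht)) i j) hmeas hca
    have hF : HasDerivAt (fun s => B t₀ i j - ∫ u in t₀..s, A u i j) (-(A t i j)) t := by
      simpa using hFTC.const_sub (B t₀ i j)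
    refine (Filter.EventuallyEq.hasDerivAt_iff ?_).mpr hF
    filter_upwards [Ici_mem_nhds ht] with s hs
    exact hBeq s hs i j
  -- derivative of Bc
  have hBcderiv : ∀ t ∈ Ioi t₀, HasDerivAt Bc (-(Ac t)) t := by
    intro t ht
    have h1 : HasDerivAt
        (fun s => ∑ i : Fin n, ∑ j : Fin n, B s i j • dunklΦ n (Matrix.single i j 1))
        (∑ i : Fin n, ∑ j : Fin n, (-(A t i j)) • dunklΦ n (Matrix.single i j 1)) t := by
      refine HasDerivAt.fun_sum fun i _ => HasDerivAt.fun_sum fun j _ => ?_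
      exact (hBderiv t ht i j).smul_const (𝕜' := ℂ) (dunklΦ n (Matrix.single i j 1))
    have h2 : (fun s => ∑ i : Fin n, ∑ j : Fin n,
        B s i j • dunklΦ n (Matrix.single i j 1)) = Bc := by
      funext s; rw [hBcdef]; exact (dunklΦ_decomp (B s)).symm
    have h3 : (∑ i : Fin n, ∑ j : Fin n, (-(A t i j)) • dunklΦ n (Matrix.single i j 1))
        = -(Ac t) := by
      rw [hAcdef]
      show _ = -(dunklΦ n (A t))
      rw [dunklΦ_decomp (A t), ← Finset.sum_neg_distrib]
      refine Finset.sum_congr rfl fun i _ => ?_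
      rw [← Finset.sum_neg_distrib]
      refine Finset.sum_congr rfl fun j _ => ?_
      exact neg_smul (A t i j) (dunklΦ n (Matrix.single i j 1))
    rw [← h2, ← h3]
    exact h1
  -- continuity of Ac
  have hAcCont : ContinuousOn Ac (Ici t₀) := by
    have : ContinuousOn
        (fun t => ∑ i : Fin n, ∑ j : Fin n, A t i j • dunklΦ n (Matrix.single i j 1))
        (Ici t₀) := by
      refine continuousOn_finset_sum _ fun i _ => continuousOn_finset_sum _ fun j _ => ?_
      exact (hAc i j).smul continuousOn_const
    refine this.congr fun t _ => ?_
    rw [hAcdef]; exact dunklΦ_decomp (A t)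
  -- continuity of x
  have hxCont : ContinuousOn x (Ici t₀) := fun t ht => (hx t ht).continuousWithinAt
  -- derivative of x in CLM form
  have hxDeriv : ∀ t ∈ Ioi t₀, HasDerivAt x (Ac t (x t)) t := by
    intro t ht
    have := (hx t (Set.mem_Ici.mpr (le_of_lt ht))).hasDerivAt (Ici_mem_nhds ht)
    rwa [hAcdef, show dunklΦ n (A t) (x t) = A t *ᵥ x t from dunklΦ_apply _ _]
  -- Bc tends to 0
  have hBc0 : Tendsto Bc atTop (nhds 0) := by
    have hent : ∀ i j, Tendsto (fun t => B t i j) atTop (nhds 0) := by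
      intro i j
      have h1 : Tendsto (fun t => B t₀ i j - ∫ s in t₀..t, A s i j) atTop
          (nhds (B t₀ i j - B t₀ i j)) :=
        tendsto_const_nhds.sub (hB t₀ self_mem_Ici i j)
      rw [sub_self] at h1
      refine h1.congr' ?_
      filter_upwards [eventually_ge_atTop t₀] with t ht
      exact (hBeq t ht i j).symm
    have : Tendsto
        (fun t => ∑ i : Fin n, ∑ j : Fin n, B t i j • dunklΦ n (Matrix.single i j 1))
        atTop (nhds (∑ i : Fin n, ∑ j : Fin n,
          (0 : ℂ) • dunklΦ n (Matrix.single i j 1))) := by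
      refine tendsto_finset_sum _ fun i _ => tendsto_finset_sum _ fun j _ => ?_
      exact (hent i j).smul_const _
    have hz : (∑ i : Fin n, ∑ j : Fin n,
        (0 : ℂ) • dunklΦ n (Matrix.single i j 1)) = 0 :=
      Finset.sum_eq_zero fun i _ => Finset.sum_eq_zero fun j _ =>
        zero_smul ℂ (dunklΦ n (Matrix.single i j 1))
    rw [hz] at this
    refine this.congr fun t => ?_
    rw [hBcdef]; exact (dunklΦ_decomp (B t)).symm
  -- the integrable coefficient
  set c : ℝ → ℝ := fun t => ‖Ac t * Bc t‖ with hcdef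
  have hABc : ∀ t, Ac t * Bc t = dunklΦ n (A t * B t) := by
    intro t; rw [hAcdef, hBcdef]; exact (dunklΦ_mul _ _).symm
  have hABint : IntegrableOn (fun t => Ac t * Bc t) (Ici t₀) := by
    have : IntegrableOn
        (fun t => ∑ i : Fin n, ∑ j : Fin n, (A t * B t) i j • dunklΦ n (Matrix.single i j 1))
        (Ici t₀) := by
      refine integrable_finsetSum (f := fun i t => ∑ j : Fin n, (A t * B t) i j • dunklΦ n (Matrix.single i j 1)) _ fun i _ => integrable_finsetSum (f := fun j t => (A t * B t) i j • dunklΦ n (Matrix.single i j 1)) _ fun j _ => ?_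
      exact (hAB i j).smul_const _
    refine this.congr_fun (fun t _ => ?_) measurableSet_Ici
    rw [hABc t]; exact (dunklΦ_decomp _).symm
  have hcInt : IntegrableOn c (Ici t₀) := hABint.norm
  have hcNonneg : ∀ t, 0 ≤ c t := fun t => norm_nonneg _
  have hBcCont : ContinuousOn Bc (Ioi t₀) := by
    intro t ht
    exact ((hBcderiv t ht).continuousAt).continuousWithinAt
  have hcCont : ContinuousOn c (Ioi t₀) := by
    exact (((hAcCont.mono Ioi_subset_Ici_self).mul hBcCont)).norm
  -- splitting the integral of c and the tail estimate
  have hsplit : ∀ r ∈ Ici t₀, (∫ t in Ici t₀, c t) = (∫ t in t₀..r, c t) + ∫ t in Ici r, c t := by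
    intro r hr
    have hdisj : Disjoint (Ico t₀ r) (Ici r) :=
      Set.disjoint_left.mpr fun a ha hb => absurd hb (not_le.mpr ha.2)
    have hunion : Ico t₀ r ∪ Ici r = Ici t₀ := Ico_union_Ici_eq_Ici hr
    have h1 : IntegrableOn c (Ico t₀ r) := hcInt.mono_set (fun a ha => ha.1)
    have h2 : IntegrableOn c (Ici r) := hcInt.mono_set (Ici_subset_Ici.mpr hr)
    rw [← hunion, setIntegral_union hdisj measurableSet_Ici h1 h2]
    congr 1
    rw [intervalIntegral.integral_of_le hr, integral_Ico_eq_integral_Ioo,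
      integral_Ioc_eq_integral_Ioo]
  have htail0 : Tendsto (fun r => ∫ t in Ici r, c t) atTop (nhds 0) := by
    have hIoi : (∫ t in Ioi t₀, c t) = ∫ t in Ici t₀, c t := integral_Ici_eq_integral_Ioi.symm
    have h1 : Tendsto (fun r => (∫ t in Ici t₀, c t) - ∫ t in t₀..r, c t) atTop
        (nhds ((∫ t in Ici t₀, c t) - ∫ t in Ioi t₀, c t)) :=
      tendsto_const_nhds.sub (intervalIntegral_tendsto_integral_Ioi t₀
        (hcInt.mono_set Ioi_subset_Ici_self) tendsto_id)
    rw [hIoi, sub_self] at h1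
    refine h1.congr' ?_
    filter_upwards [eventually_ge_atTop t₀] with r hr
    rw [hsplit r hr]; ring
  -- choice of t₂
  obtain ⟨t₂, ht₂gt, hB2, htail⟩ : ∃ t₂, t₀ < t₂ ∧ (∀ t, t₂ ≤ t → ‖Bc t‖ ≤ 1/2) ∧
      (∫ t in Ici t₂, c t) ≤ 1/8 := by
    have h1 : ∀ᶠ t in atTop, ‖Bc t‖ ≤ 1/2 := by
      have hb := hBc0.norm
      rw [norm_zero] at hb
      exact (hb.eventually_lt_const (by norm_num : (0:ℝ) < 1/2)).mono fun t h => le_of_lt h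
    have h2 : ∀ᶠ r in atTop, (∫ t in Ici r, c t) ≤ 1/8 :=
      (htail0.eventually_lt_const (by norm_num : (0:ℝ) < 1/8)).mono fun t h => le_of_lt h
    obtain ⟨a, ha⟩ := eventually_atTop.mp (h1.and h2)
    refine ⟨max a (t₀+1), lt_of_lt_of_le (by linarith) (le_max_right _ _), ?_, ?_⟩
    · intro t ht; exact (ha t (le_trans (le_max_left _ _) ht)).1
    · exact (ha (max a (t₀+1)) (le_max_left _ _)).2
  have ht₂ge : t₀ ≤ t₂ := le_of_lt ht₂gt
  -- units
  have hIsU : ∀ t, t₂ ≤ t → IsUnit (1 - Bc t) := fun t ht =>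
    (Units.oneSub (Bc t) (lt_of_le_of_lt (hB2 t ht) (by norm_num))).isUnit
  set inv : ℝ → ((Fin n → ℂ) →L[ℂ] (Fin n → ℂ)) := fun t => Ring.inverse (1 - Bc t)
    with hinvdef
  have hinv_mul : ∀ t, t₂ ≤ t → (1 - Bc t) * inv t = 1 := fun t ht =>
    Ring.mul_inverse_cancel _ (hIsU t ht)
  have hmul_inv : ∀ t, t₂ ≤ t → inv t * (1 - Bc t) = 1 := fun t ht =>
    Ring.inverse_mul_cancel _ (hIsU t ht)
  have hinv_norm : ∀ t, t₂ ≤ t → ‖inv t‖ ≤ 2 := by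
    intro t ht
    have h1 : inv t = 1 + inv t * Bc t := by
      have h := hmul_inv t ht
      rw [mul_sub, mul_one] at h
      exact sub_eq_iff_eq_add.mp h
    have h2 : ‖inv t‖ ≤ 1 + ‖inv t‖ * (1/2) := by
      calc ‖inv t‖ = ‖1 + inv t * Bc t‖ := by rw [← h1]
        _ ≤ ‖(1 : (Fin n → ℂ) →L[ℂ] (Fin n → ℂ))‖ + ‖inv t * Bc t‖ := norm_add_le _ _
        _ ≤ 1 + ‖inv t‖ * ‖Bc t‖ := by
            refine add_le_add ?_ (norm_mul_le _ _)
            rw [ContinuousLinearMap.one_def]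
            exact ContinuousLinearMap.norm_id_le
        _ ≤ 1 + ‖inv t‖ * (1/2) :=
            add_le_add_right (mul_le_mul_of_nonneg_left (hB2 t ht) (norm_nonneg _)) 1
    linarith
  -- definition of y
  set y : ℝ → (Fin n → ℂ) := fun t => inv t (x t) with hydef
  set g : ℝ → (Fin n → ℂ) := fun t => -((inv t * (Ac t * Bc t)) (y t)) with hgdef
  have hxy : ∀ t, t₂ ≤ t → (1 - Bc t) (y t) = x t := by
    intro t ht
    have h : ((1 - Bc t) * inv t) (x t) = (1 : (Fin n → ℂ) →L[ℂ] (Fin n → ℂ)) (x t) := by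
      rw [hinv_mul t ht]
    rw [ContinuousLinearMap.mul_apply, ContinuousLinearMap.one_apply] at h
    exact h
  have hinvCont : ∀ t, t₂ ≤ t → ContinuousAt inv t := by
    intro t ht
    obtain ⟨u, hu⟩ := hIsU t ht
    have hBcont : ContinuousAt (fun s => 1 - Bc s) t :=
      continuousAt_const.sub ((hBcderiv t (lt_of_lt_of_le ht₂gt ht)).continuousAt)
    have hRinv : ContinuousAt Ring.inverse (1 - Bc t) := by
      rw [← hu]
      exact NormedRing.inverse_continuousAt u
    have h3 := ContinuousAt.comp (f := fun s => 1 - Bc s) hRinv hBcont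
    rw [hinvdef]
    exact h3
  have hyCont : ∀ t, t₂ ≤ t → ContinuousAt y t := by
    intro t ht
    have h1 : ContinuousAt (fun s => (inv s, x s)) t :=
      (hinvCont t ht).prodMk
        (hxCont.continuousAt (Ici_mem_nhds (lt_of_lt_of_le ht₂gt ht)))
    have h2 := isBoundedBilinearMap_apply.continuous.continuousAt
      (x := ((inv t, x t) : ((Fin n → ℂ) →L[ℂ] (Fin n → ℂ)) × (Fin n → ℂ)))
    have h3 := ContinuousAt.comp (f := fun s => (inv s, x s)) h2 h1
    rw [hydef]
    simpa [Function.comp_def] using h3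
  have hyDeriv : ∀ t, t₂ ≤ t → HasDerivAt y (g t) t := by
    intro t ht
    simp only [hgdef]
    have htgt : t₀ < t := lt_of_lt_of_le ht₂gt ht
    obtain ⟨u, hu⟩ := hIsU t ht
    have hinvu : (↑u⁻¹ : (Fin n → ℂ) →L[ℂ] (Fin n → ℂ)) = inv t := by
      rw [hinvdef]
      show _ = Ring.inverse (1 - Bc t)
      rw [← hu, Ring.inverse_unit]
    have h1 : HasDerivAt (fun s => 1 - Bc s) (Ac t) t := by
      simpa using (hBcderiv t htgt).const_sub 1
    have h2 : HasDerivAt inv (-(inv t * Ac t * inv t)) t := by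
      rw [hinvdef]
      have hF := (hasFDerivAt_ringInverse (𝕜 := ℂ) u).restrictScalars ℝ
      rw [hu] at hF
      have h3 := hF.comp_hasDerivAt t h1
      simpa [ContinuousLinearMap.mulLeftRight_apply, hinvu, Function.comp_def] using h3
    set ρ : ((Fin n → ℂ) →L[ℂ] (Fin n → ℂ)) →L[ℝ] ((Fin n → ℂ) →L[ℝ] (Fin n → ℂ)) :=
      (ContinuousLinearMap.restrictScalarsIsometry ℂ (Fin n → ℂ) (Fin n → ℂ) ℝ
        ℝ).toContinuousLinearMap with hρdef
    have h2' : HasDerivAt (fun s => ρ (inv s)) (ρ (-(inv t * Ac t * inv t))) t :=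
      ρ.hasFDerivAt.comp_hasDerivAt t h2
    have h3 := h2'.clm_apply (hxDeriv t htgt)
    have hρa : ∀ (M : (Fin n → ℂ) →L[ℂ] (Fin n → ℂ)) (v : Fin n → ℂ), (ρ M) v = M v :=
      fun M v => rfl
    have hw : (inv t) ((1 - Bc t) (y t)) = y t := by
      rw [← ContinuousLinearMap.mul_apply, hmul_inv t ht, ContinuousLinearMap.one_apply]
    have h6 : (ρ (-(inv t * Ac t * inv t))) (x t) + (ρ (inv t)) ((Ac t) (x t))
        = -((inv t * (Ac t * Bc t)) (y t)) := by
      rw [hρa, hρa]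
      conv_lhs => rw [← hxy t ht]
      have hL : (-(inv t * Ac t * inv t)) ((1 - Bc t) (y t))
          = -((inv t) ((Ac t) (y t))) := by
        rw [ContinuousLinearMap.neg_apply, ContinuousLinearMap.mul_apply, hw,
          ContinuousLinearMap.mul_apply]
      have hR : (inv t) ((Ac t) ((1 - Bc t) (y t)))
          = (inv t) ((Ac t) (y t)) - (inv t) ((Ac t) ((Bc t) (y t))) := by
        rw [ContinuousLinearMap.sub_apply, ContinuousLinearMap.one_apply, map_sub, map_sub]
      have hG : -((inv t * (Ac t * Bc t)) (y t))
          = -((inv t) ((Ac t) ((Bc t) (y t)))) := by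
        rw [ContinuousLinearMap.mul_apply, ContinuousLinearMap.mul_apply]
      rw [hL, hR, hG]
      abel
    rw [hydef, ← h6]
    exact h3
  -- continuity of g on Ici t₂
  have hyContOn : ContinuousOn y (Ici t₂) := fun t ht => (hyCont t ht).continuousWithinAt
  have hgCont : ContinuousOn g (Ici t₂) := by
    intro t ht
    have htgt : t₀ < t := lt_of_lt_of_le ht₂gt ht
    have h1 : ContinuousAt (fun s => inv s * (Ac s * Bc s)) t :=
      (hinvCont t ht).mul ((hAcCont.continuousAt (Ici_mem_nhds htgt)).mul
        ((hBcderiv t htgt).continuousAt))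
    have h2 : ContinuousAt (fun s => ((inv s * (Ac s * Bc s) :
        (Fin n → ℂ) →L[ℂ] (Fin n → ℂ)), y s)) t := h1.prodMk (hyCont t ht)
    have h3 := ContinuousAt.comp (f := fun s => ((inv s * (Ac s * Bc s) :
        (Fin n → ℂ) →L[ℂ] (Fin n → ℂ)), y s))
      (isBoundedBilinearMap_apply.continuous.continuousAt) h2
    have h4 : ContinuousAt (fun s => (inv s * (Ac s * Bc s)) (y s)) t := by
      simpa [Function.comp_def] using h3
    have h5 := h4.neg
    simp only [hgdef]
    exact h5.continuousWithinAt
  -- fundamental theorem of calculus for y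
  have hFTC : ∀ T, t₂ ≤ T → y T = y t₂ + ∫ s in t₂..T, g s := by
    intro T hT
    have hderiv : ∀ s ∈ uIcc t₂ T, HasDerivAt y (g s) s := by
      intro s hs
      rw [uIcc_of_le hT] at hs
      exact hyDeriv s hs.1
    have hint : IntervalIntegrable g volume t₂ T := by
      refine (hgCont.mono ?_).intervalIntegrable
      rw [uIcc_of_le hT]; exact fun a ha => ha.1
    have h := intervalIntegral.integral_eq_sub_of_hasDerivAt hderiv hint
    rw [h]; abel
  -- pointwise bound on g
  have hgle : ∀ s, t₂ ≤ s → ‖g s‖ ≤ 2 * c s * ‖y s‖ := by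
    intro s hs
    simp only [hgdef]
    calc ‖-((inv s * (Ac s * Bc s)) (y s))‖
        = ‖(inv s * (Ac s * Bc s)) (y s)‖ := norm_neg _
      _ ≤ ‖inv s * (Ac s * Bc s)‖ * ‖y s‖ := ContinuousLinearMap.le_opNorm _ _
      _ ≤ (‖inv s‖ * ‖Ac s * Bc s‖) * ‖y s‖ :=
          mul_le_mul_of_nonneg_right (norm_mul_le _ _) (norm_nonneg _)
      _ ≤ (2 * ‖Ac s * Bc s‖) * ‖y s‖ := by
          refine mul_le_mul_of_nonneg_right ?_ (norm_nonneg _)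
          exact mul_le_mul_of_nonneg_right (hinv_norm s hs) (norm_nonneg _)
      _ ≤ 2 * c s * ‖y s‖ := by
          have hcs : ‖Ac s * Bc s‖ ≤ c s := by rw [hcdef]
          nlinarith [norm_nonneg (y s), norm_nonneg (Ac s * Bc s)]
  -- interval tail bound for c
  have hcIntTail : ∀ T, t₂ ≤ T → (∫ s in t₂..T, c s) ≤ 1/8 := by
    intro T hT
    rw [intervalIntegral.integral_of_le hT]
    refine le_trans (setIntegral_mono_set (hcInt.mono_set (Ici_subset_Ici.mpr ht₂ge))
      (Filter.Eventually.of_forall fun t => hcNonneg t)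
      (HasSubset.Subset.eventuallyLE (fun a ha => le_of_lt ha.1))) htail
  -- boundedness of y
  have hybound : ∀ T, t₂ ≤ T → ‖y T‖ ≤ 4/3 * ‖y t₂‖ := by
    intro T hT
    obtain ⟨tm, htm, hmax⟩ := isCompact_Icc.exists_isMaxOn (nonempty_Icc.mpr hT)
      (continuous_norm.comp_continuousOn (hyContOn.mono Icc_subset_Ici_self) :
        ContinuousOn (fun t => ‖y t‖) (Icc t₂ T))
    have hmax' : ∀ s ∈ Icc t₂ T, ‖y s‖ ≤ ‖y tm‖ := fun s hs => hmax hs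
    have hKnn : (0:ℝ) ≤ ‖y tm‖ := norm_nonneg _
    have hIcc : Icc t₂ tm ⊆ Icc t₂ T := Icc_subset_Icc le_rfl htm.2
    have hint1 : IntervalIntegrable (fun s => ‖g s‖) volume t₂ tm := by
      refine ((hgCont.mono ?_).norm).intervalIntegrable
      rw [uIcc_of_le htm.1]; exact fun a ha => ha.1
    have hint2 : IntervalIntegrable (fun s => 2 * c s * ‖y tm‖) volume t₂ tm := by
      refine ContinuousOn.intervalIntegrable ?_
      refine (continuousOn_const.mul (hcCont.mono ?_)).mul continuousOn_const
      rw [uIcc_of_le htm.1]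
      exact fun a ha => lt_of_lt_of_le ht₂gt ha.1
    have h1 : ‖y tm - y t₂‖ ≤ ∫ s in t₂..tm, ‖g s‖ := by
      have heq : y tm - y t₂ = ∫ s in t₂..tm, g s := by rw [hFTC tm htm.1]; abel
      rw [heq]
      exact intervalIntegral.norm_integral_le_integral_norm htm.1
    have h2 : (∫ s in t₂..tm, ‖g s‖) ≤ ∫ s in t₂..tm, 2 * c s * ‖y tm‖ := by
      refine intervalIntegral.integral_mono_on htm.1 hint1 hint2 fun s hs => ?_
      refine le_trans (hgle s hs.1) ?_
      have := hmax' s (hIcc hs)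
      nlinarith [hcNonneg s]
    have h3 : (∫ s in t₂..tm, 2 * c s * ‖y tm‖) ≤ 2 * ‖y tm‖ * (1/8) := by
      have heq : (∫ s in t₂..tm, 2 * c s * ‖y tm‖)
          = 2 * ‖y tm‖ * ∫ s in t₂..tm, c s := by
        rw [← intervalIntegral.integral_const_mul]
        refine intervalIntegral.integral_congr fun s _ => ?_
        ring
      rw [heq]
      exact mul_le_mul_of_nonneg_left (hcIntTail tm htm.1) (by positivity)
    have h4 : ‖y tm‖ ≤ ‖y t₂‖ + ‖y tm - y t₂‖ := by
      have := norm_add_le (y t₂) (y tm - y t₂)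
      simpa using this
    have h5 : ‖y tm‖ ≤ 4/3 * ‖y t₂‖ := by linarith
    exact le_trans (hmax' T ⟨hT, le_rfl⟩) h5
  -- integrability of g on the tail
  have hgInt : IntegrableOn g (Ioi t₂) := by
    refine Integrable.mono' (g := fun t => 2 * c t * (4/3 * ‖y t₂‖)) ?_ ?_ ?_
    · have : IntegrableOn c (Ioi t₂) :=
        hcInt.mono_set (fun a ha => le_trans ht₂ge (le_of_lt ha))
      have h2 := (this.const_mul 2).mul_const (4/3 * ‖y t₂‖)
      simpa [mul_assoc] using h2
    · exact (hgCont.mono Ioi_subset_Ici_self).aestronglyMeasurable measurableSet_Ioi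
    · refine (ae_restrict_mem measurableSet_Ioi).mono fun t ht => ?_
      refine le_trans (hgle t (le_of_lt ht)) ?_
      have := hybound t (le_of_lt ht)
      nlinarith [hcNonneg t]
  -- the limit of y
  have hylim : Tendsto y atTop (nhds (y t₂ + ∫ s in Ioi t₂, g s)) := by
    have h1 := intervalIntegral_tendsto_integral_Ioi t₂ hgInt tendsto_id
    have h2 := tendsto_const_nhds (x := y t₂) (f := atTop (α := ℝ)) |>.add h1
    refine h2.congr' ?_
    filter_upwards [eventually_ge_atTop t₂] with T hT
    exact (hFTC T hT).symm
  set Ly : Fin n → ℂ := y t₂ + ∫ s in Ioi t₂, g s with hLydef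
  -- x never vanishes on [t₀, ∞)
  have hxne : ∀ T, t₀ ≤ T → x T ≠ 0 := by
    intro T hT hxT
    obtain ⟨C, hC⟩ := (isCompact_Icc (a := t₀) (b := T)).exists_bound_of_continuousOn
      (hAcCont.mono Icc_subset_Ici_self)
    set σ : ℝ → ℝ := fun s => t₀ + T - s with hσdef
    have hσmaps : ∀ s ∈ Icc t₀ T, σ s ∈ Icc t₀ T := by
      intro s hs
      simp only [hσdef]
      constructor <;> [linarith [hs.2]; linarith [hs.1]]
    have hGcont : ContinuousOn (fun r => x (σ r)) (Icc t₀ T) := by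
      refine hxCont.comp ?_ ?_
      · exact (continuous_const.sub continuous_id).continuousOn
      · exact fun s hs => (hσmaps s hs).1
    have hG' : ∀ s ∈ Ico t₀ T, HasDerivWithinAt (fun r => x (σ r))
        ((-1 : ℝ) • (Ac (σ s)) (x (σ s))) (Ici s) s := by
      intro s hs
      have hσs : t₀ < σ s := by simp only [hσdef]; linarith [hs.2]
      have hx' := hxDeriv (σ s) hσs
      have hσd : HasDerivWithinAt σ (-1 : ℝ) (Ici s) s := by
        simpa [hσdef] using (((hasDerivAt_id s).const_sub (t₀ + T)).hasDerivWithinAt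
          (s := Ici s))
      exact hx'.scomp_hasDerivWithinAt s hσd
    have hbound : ∀ s ∈ Ico t₀ T, ‖(-1 : ℝ) • (Ac (σ s)) (x (σ s))‖
        ≤ C * ‖x (σ s)‖ + 0 := by
      intro s hs
      have h1 : ‖(-1 : ℝ) • (Ac (σ s)) (x (σ s))‖ = ‖(Ac (σ s)) (x (σ s))‖ := by
        rw [neg_one_smul, norm_neg]
      rw [h1, add_zero]
      refine le_trans (ContinuousLinearMap.le_opNorm _ _) ?_
      refine mul_le_mul_of_nonneg_right ?_ (norm_nonneg _)
      exact hC (σ s) (hσmaps s (mem_Icc_of_Ico hs))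
    have h0 : ‖x (σ t₀)‖ ≤ (0:ℝ) := by
      have : σ t₀ = T := by simp [hσdef]
      rw [this, hxT, norm_zero]
    have hgron := norm_le_gronwallBound_of_norm_deriv_right_le hGcont hG' h0 hbound
      T ⟨hT, le_rfl⟩
    rw [gronwallBound_ε0, zero_mul] at hgron
    have hσT : σ T = t₀ := by simp [hσdef]
    rw [hσT] at hgron
    exact hx0 (norm_le_zero_iff.mp hgron)
  have hy₂ : y t₂ ≠ 0 := by
    intro h
    refine hxne t₂ ht₂ge ?_
    rw [← hxy t₂ le_rfl, h, map_zero]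
  have hy₂pos : (0:ℝ) < ‖y t₂‖ := norm_pos_iff.mpr hy₂
  -- Ly is nonzero
  have hLy : Ly ≠ 0 := by
    have h1 : ‖Ly - y t₂‖ ≤ 1/3 * ‖y t₂‖ := by
      have heq : Ly - y t₂ = ∫ s in Ioi t₂, g s := by rw [hLydef]; abel
      rw [heq]
      have hb1 : ‖∫ s in Ioi t₂, g s‖ ≤ ∫ s in Ioi t₂, ‖g s‖ :=
        norm_integral_le_integral_norm _
      have hcc : IntegrableOn c (Ioi t₂) :=
        hcInt.mono_set (fun a ha => le_trans ht₂ge (le_of_lt ha))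
      have hb2 : (∫ s in Ioi t₂, ‖g s‖) ≤ ∫ s in Ioi t₂, 2 * c s * (4/3 * ‖y t₂‖) := by
        refine setIntegral_mono_on hgInt.norm ?_ measurableSet_Ioi fun s hs => ?_
        · have h2 := (hcc.const_mul 2).mul_const (4/3 * ‖y t₂‖)
          simpa [mul_assoc, IntegrableOn] using h2
        · refine le_trans (hgle s (le_of_lt hs)) ?_
          have := hybound s (le_of_lt hs)
          nlinarith [hcNonneg s]
      have hb3 : (∫ s in Ioi t₂, 2 * c s * (4/3 * ‖y t₂‖))
          = (2 * (4/3 * ‖y t₂‖)) * ∫ s in Ioi t₂, c s := by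
        rw [← integral_const_mul]
        refine setIntegral_congr_fun measurableSet_Ioi fun s _ => ?_
        ring
      have hb4 : (∫ s in Ioi t₂, c s) ≤ 1/8 := by
        refine le_trans ?_ htail
        rw [integral_Ici_eq_integral_Ioi]
      calc ‖∫ s in Ioi t₂, g s‖ ≤ ∫ s in Ioi t₂, ‖g s‖ := hb1
        _ ≤ (2 * (4/3 * ‖y t₂‖)) * ∫ s in Ioi t₂, c s := by rw [← hb3]; exact hb2
        _ ≤ 1/3 * ‖y t₂‖ := by nlinarith [hy₂pos.le]
    intro h0
    rw [h0, zero_sub, norm_neg] at h1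
    linarith
  -- limit of x
  have hxlim : Tendsto x atTop (nhds Ly) := by
    have hBy0 : Tendsto (fun t => (Bc t) (y t)) atTop (nhds 0) := by
      have hlim : Tendsto (fun t => ‖Bc t‖ * (4/3 * ‖y t₂‖)) atTop (nhds 0) := by
        have := hBc0.norm.mul_const (4/3 * ‖y t₂‖)
        rwa [norm_zero, zero_mul] at this
      refine squeeze_zero_norm' ?_ hlim
      filter_upwards [eventually_ge_atTop t₂] with t ht
      calc ‖(Bc t) (y t)‖ ≤ ‖Bc t‖ * ‖y t‖ := ContinuousLinearMap.le_opNorm _ _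
        _ ≤ ‖Bc t‖ * (4/3 * ‖y t₂‖) :=
            mul_le_mul_of_nonneg_left (hybound t ht) (norm_nonneg _)
    have h2 : Tendsto (fun t => y t - (Bc t) (y t)) atTop (nhds (Ly - 0)) :=
      hylim.sub hBy0
    rw [sub_zero] at h2
    refine h2.congr' ?_
    filter_upwards [eventually_ge_atTop t₂] with t ht
    rw [← hxy t ht, ContinuousLinearMap.sub_apply, ContinuousLinearMap.one_apply]
  exact ⟨Ly, hLy, hxlim⟩
end

section
/- Let n ≥ 1, t₀ ∈ ℝ, and let A : [t₀, ∞) → M_n(ℂ) be a continuous matrix-valued function such that (i) for every t ≥ t₀ the improper Riemann integral Ã(t) := lim_{T→∞} ∫_t^T A(s) ds exists (entrywise), and (ii) the function t ↦ A(t)·Ã(t) is integrable on [t₀, ∞). Then for every index 1 ≤ j ≤ n there exist t₁ ≥ t₀ and a differentiable function x : [t₁, ∞) → ℂⁿ with x′(t) = A(t) x(t) for all t ≥ t₁ and lim_{t→∞} x(t) = e_j, where e_j is the j-th standard unit vector of ℂⁿ. -/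
open MeasureTheory Filter Set Matrix intervalIntegral

set_option linter.unusedSectionVars false

section helpers
variable {E : Type*} [NormedAddCommGroup E] [NormedSpace ℝ E] [CompleteSpace E] {g : ℝ → E}

lemma tail_eq (hg : Integrable g) (a t : ℝ) :
    (∫ s in Ioi t, g s) = (∫ s in Ioi a, g s) - ∫ s in a..t, g s := by
  have h1 : ∀ b : ℝ, (∫ s in Iic b, g s) + (∫ s in Ioi b, g s) = ∫ s, g s := by
    intro b
    simpa [compl_Iic] using integral_add_compl measurableSet_Iic hg
  have h2 := integral_Iic_sub_Iic (μ := volume) (f := g) (a := a) (b := t)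
    hg.integrableOn hg.integrableOn
  have ht' : (∫ s in Iic t, g s) = (∫ s, g s) - ∫ s in Ioi t, g s :=
    eq_sub_of_add_eq (h1 t)
  have ha' : (∫ s in Iic a, g s) = (∫ s, g s) - ∫ s in Ioi a, g s :=
    eq_sub_of_add_eq (h1 a)
  rw [ht', ha'] at h2
  rw [← h2]
  abel

lemma tail_tendsto (hg : Integrable g) :
    Tendsto (fun t => ∫ s in Ioi t, g s) atTop (nhds 0) := by
  have : (fun t => ∫ s in Ioi t, g s)
      = fun t => (∫ s in Ioi (0:ℝ), g s) - ∫ s in (0:ℝ)..t, g s := funext (tail_eq hg 0)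
  rw [this]
  have h := intervalIntegral_tendsto_integral_Ioi (0:ℝ) hg.integrableOn tendsto_id
  have h2 := (tendsto_const_nhds (x := ∫ s in Ioi (0:ℝ), g s)).sub h
  simpa using h2

lemma tail_continuous (hg : Integrable g) :
    Continuous (fun t => ∫ s in Ioi t, g s) := by
  have : (fun t => ∫ s in Ioi t, g s)
      = fun t => (∫ s in Ioi (0:ℝ), g s) - ∫ s in (0:ℝ)..t, g s := funext (tail_eq hg 0)
  rw [this]
  exact continuous_const.sub (intervalIntegral.continuous_primitive
    (fun a b => hg.intervalIntegrable) 0)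

lemma primitive_hasDerivWithinAt {f : ℝ → E} {a t : ℝ}
    (hf : ContinuousOn f (Ici a)) (ht : t ∈ Ici a) :
    HasDerivWithinAt (fun u => ∫ s in a..u, f s) (f t) (Ici a) t := by
  have hab : IntervalIntegrable f volume a t :=
    (hf.mono (by rw [uIcc_of_le ht]; exact Icc_subset_Ici_self)).intervalIntegrable
  rcases eq_or_lt_of_le (mem_Ici.1 ht) with rfl | hlt
  · exact intervalIntegral.integral_hasDerivWithinAt_right hab
      ⟨Ici a, mem_of_superset self_mem_nhdsWithin Ioi_subset_Ici_self,
        hf.aestronglyMeasurable measurableSet_Ici⟩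
      ((hf a ht).mono Ioi_subset_Ici_self)
  · exact (intervalIntegral.integral_hasDerivAt_right hab
      ⟨Ici a, Ici_mem_nhds hlt, hf.aestronglyMeasurable measurableSet_Ici⟩
      (hf.continuousAt (Ici_mem_nhds hlt))).hasDerivWithinAt

lemma tail_hasDerivWithinAt (hg : Integrable g) {a t : ℝ}
    (hc : ContinuousOn g (Ici a)) (ht : t ∈ Ici a) :
    HasDerivWithinAt (fun u => ∫ s in Ioi u, g s) (-(g t)) (Ici a) t := by
  have : (fun u => ∫ s in Ioi u, g s)
      = fun u => (∫ s in Ioi a, g s) - ∫ s in a..u, g s := funext (tail_eq hg a)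
  rw [this]
  exact (primitive_hasDerivWithinAt hc ht).const_sub _

end helpers

section FixedPoint

variable {F : Type*} [NormedAddCommGroup F] [NormedSpace ℂ F] [CompleteSpace F]

lemma exists_sol (C : ℝ → (F →L[ℂ] F)) (t₁ : ℝ) (hC : ContinuousOn C (Ici t₁))
    (hCi : IntegrableOn C (Ici t₁)) (hsmall : (∫ s in Ioi t₁, ‖C s‖) ≤ 1/2) (v : F) :
    ∃ (y : ℝ → F) (M : ℝ), (∀ t, ‖y t‖ ≤ M) ∧
      (∀ t ∈ Ici t₁, HasDerivWithinAt y (-(C t (y t))) (Ici t₁) t) ∧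
      Tendsto y atTop (nhds v) := by
  classical
  set ind : BoundedContinuousFunction ℝ F → ℝ → F :=
    fun y => (Ici t₁).indicator (fun s => C s (y s)) with hind
  -- integrability of the indicator
  have hCnorm : Integrable ((Ici t₁).indicator (fun s => ‖C s‖)) volume :=
    MeasureTheory.IntegrableOn.integrable_indicator hCi.norm measurableSet_Ici
  have haesm : ∀ y : BoundedContinuousFunction ℝ F,
      AEStronglyMeasurable (fun s => C s (y s)) (volume.restrict (Ici t₁)) := fun y =>
    (hC.clm_apply y.continuous.continuousOn).aestronglyMeasurable measurableSet_Ici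
  have hind_int : ∀ y : BoundedContinuousFunction ℝ F, Integrable (ind y) volume := by
    intro y
    have : IntegrableOn (fun s => C s (y s)) (Ici t₁) volume := by
      refine Integrable.mono' (hCi.norm.mul_const ‖y‖) (haesm y) ?_
      filter_upwards with s
      exact (C s).le_opNorm (y s) |>.trans
        (mul_le_mul_of_nonneg_left (y.norm_coe_le_norm s) (norm_nonneg _))
    exact MeasureTheory.IntegrableOn.integrable_indicator this measurableSet_Ici
  -- the operator
  have hbound : ∀ (y : BoundedContinuousFunction ℝ F) (t : ℝ),
      ‖v + ∫ s in Ioi t, ind y s‖ ≤ ‖v‖ + ∫ s, ‖ind y s‖ := by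
    intro y t
    refine (norm_add_le _ _).trans (add_le_add le_rfl ?_)
    refine (MeasureTheory.norm_integral_le_integral_norm _).trans ?_
    exact setIntegral_le_integral (hind_int y).norm
      (Filter.Eventually.of_forall fun s => norm_nonneg _)
  set T : BoundedContinuousFunction ℝ F → BoundedContinuousFunction ℝ F := fun y =>
    BoundedContinuousFunction.ofNormedAddCommGroup
      (fun t => v + ∫ s in Ioi t, ind y s)
      (continuous_const.add (tail_continuous (hind_int y)))
      (‖v‖ + ∫ s, ‖ind y s‖) (hbound y) with hT
  have hTapp : ∀ (y : BoundedContinuousFunction ℝ F) (t : ℝ),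
      T y t = v + ∫ s in Ioi t, ind y s := fun y t => rfl
  -- Lipschitz
  have lip : LipschitzWith 2⁻¹ T := by
    apply LipschitzWith.of_dist_le_mul
    intro y z
    refine (BoundedContinuousFunction.dist_le (by positivity)).2 fun t => ?_
    rw [dist_eq_norm, hTapp, hTapp, add_sub_add_left_eq_sub,
      ← integral_sub ((hind_int y).restrict) ((hind_int z).restrict)]
    have hgint : Integrable (fun s => (Ici t₁).indicator (fun s => ‖C s‖) s * dist y z)
        volume := hCnorm.mul_const _
    have hptwise : ∀ s, ‖ind y s - ind z s‖
        ≤ (Ici t₁).indicator (fun s => ‖C s‖) s * dist y z := by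
      intro s
      by_cases hs : s ∈ Ici t₁
      · simp only [hind, indicator_of_mem hs]
        rw [← map_sub]
        refine ((C s).le_opNorm _).trans ?_
        refine mul_le_mul_of_nonneg_left ?_ (norm_nonneg _)
        rw [← dist_eq_norm]
        exact BoundedContinuousFunction.dist_coe_le_dist s
      · simp [hind, indicator_of_notMem hs]
    calc ‖∫ s in Ioi t, (ind y s - ind z s)‖
        ≤ ∫ s in Ioi t, (Ici t₁).indicator (fun s => ‖C s‖) s * dist y z := by
          exact MeasureTheory.norm_integral_le_of_norm_le hgint.restrict
            (Filter.Eventually.of_forall fun s => hptwise s)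
      _ ≤ ∫ s, (Ici t₁).indicator (fun s => ‖C s‖) s * dist y z := by
          refine setIntegral_le_integral hgint ?_
          filter_upwards with s
          exact mul_nonneg (indicator_nonneg (fun s _ => norm_nonneg _) s) dist_nonneg
      _ = (∫ s in Ioi t₁, ‖C s‖) * dist y z := by
          rw [MeasureTheory.integral_mul_const, MeasureTheory.integral_indicator measurableSet_Ici,
            integral_Ici_eq_integral_Ioi]
      _ ≤ 2⁻¹ * dist y z := by
          refine mul_le_mul_of_nonneg_right ?_ dist_nonneg
          simpa using hsmall
  have cw : ContractingWith 2⁻¹ T := ⟨by rw [← NNReal.coe_lt_coe]; norm_num, lip⟩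
  set y : BoundedContinuousFunction ℝ F := cw.fixedPoint T with hy
  have yfix : T y = y := cw.fixedPoint_isFixedPt
  have yEq : ∀ t, y t = v + ∫ s in Ioi t, ind y s := fun t =>
    (congrFun (congrArg DFunLike.coe yfix) t).symm.trans (hTapp y t)
  have hcont_ind : ContinuousOn (ind y) (Ici t₁) :=
    ContinuousOn.congr (hC.clm_apply y.continuous.continuousOn)
      (fun s hs => indicator_of_mem hs _)
  refine ⟨fun t => y t, ‖y‖, fun t => y.norm_coe_le_norm t, ?_, ?_⟩
  · intro t ht
    have hd := (tail_hasDerivWithinAt (hind_int y) hcont_ind ht).const_add v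
    have hfun : (fun u => v + ∫ s in Ioi u, ind y s) = fun u => y u :=
      funext fun u => (yEq u).symm
    rw [hfun] at hd
    have : ind y t = C t (y t) := indicator_of_mem ht _
    rwa [this] at hd
  · have := (tail_tendsto (hind_int y)).const_add v
    rw [add_zero] at this
    have hfun : (fun t => v + ∫ s in Ioi t, ind y s) = fun t => y t :=
      funext fun u => (yEq u).symm
    rwa [hfun] at this


end FixedPoint

section Main

variable (n : ℕ)

noncomputable def PhiL : Matrix (Fin n) (Fin n) ℂ →ₗ[ℂ] ((Fin n → ℂ) →L[ℂ] (Fin n → ℂ)) :=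
  LinearMap.toContinuousLinearMap.toLinearMap.comp Matrix.toLin'.toLinearMap

lemma PhiL_apply (M : Matrix (Fin n) (Fin n) ℂ) (v : Fin n → ℂ) :
    PhiL n M v = M *ᵥ v := by
  simp [PhiL, Matrix.toLin'_apply]

lemma PhiL_continuous : Continuous (PhiL n) :=
  (PhiL n).continuous_of_finiteDimensional

noncomputable def bMat (t₀ : ℝ) (A B : ℝ → Matrix (Fin n) (Fin n) ℂ) :
    ℝ → Matrix (Fin n) (Fin n) ℂ :=
  fun t i k => B t₀ i k - ∫ s in t₀..t, A s i k

noncomputable def Cmap (t₀ : ℝ) (A B : ℝ → Matrix (Fin n) (Fin n) ℂ) :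
    ℝ → ((Fin n → ℂ) →L[ℂ] (Fin n → ℂ)) :=
  fun t => Ring.inverse (1 - PhiL n (bMat n t₀ A B t)) * PhiL n (A t * B t)

end Main

lemma integrable_indicator_Ici' {E : Type*} [NormedAddCommGroup E] {f : ℝ → E} {a : ℝ}
    (h : IntegrableOn f (Ici a)) : Integrable ((Ici a).indicator f) :=
  h.integrable_indicator measurableSet_Ici

set_option maxHeartbeats 4000000 in
/-- Levinson/Wintner-type asymptotic integration: under the integrability conditions
on `A` and `Ã(t) = ∫_t^∞ A(s) ds`, for every index `j` there is a solution of
`x' = A(t)x` on some `[t₁,∞)` tending to the `j`-th standard unit vector at infinity. -/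
theorem dunkl_stmt2 (n : ℕ) (hn : 1 ≤ n) (t₀ : ℝ)
    (A B : ℝ → Matrix (Fin n) (Fin n) ℂ)
    (hAc : ∀ i j, ContinuousOn (fun t => A t i j) (Ici t₀))
    (hB : ∀ t ∈ Ici t₀, ∀ i j,
      Tendsto (fun T => ∫ s in t..T, A s i j) atTop (nhds (B t i j)))
    (hAB : ∀ i j, IntegrableOn (fun t => (A t * B t) i j) (Ici t₀)) :
    ∀ j : Fin n, ∃ t₁ : ℝ, t₀ ≤ t₁ ∧ ∃ x : ℝ → Fin n → ℂ,
      (∀ t ∈ Ici t₁, HasDerivWithinAt x (A t *ᵥ x t) (Ici t₁) t) ∧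
      Tendsto x atTop (nhds (Pi.single j 1)) := by
  intro j
  haveI : Nonempty (Fin n) := ⟨⟨0, hn⟩⟩
  classical
  -- interval integrability of the entries of A
  have hIA : ∀ (i k : Fin n) (u v : ℝ), t₀ ≤ u → t₀ ≤ v →
      IntervalIntegrable (fun s => A s i k) volume u v := by
    intro i k u v hu hv
    apply ContinuousOn.intervalIntegrable
    exact (hAc i k).mono fun s hs => mem_Ici.2 (le_trans (le_min hu hv) hs.1)
  -- bMat agrees with B on [t₀, ∞)
  have hbMB : ∀ t ∈ Ici t₀, bMat n t₀ A B t = B t := by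
    intro t ht
    funext i k
    have h1 : Tendsto (fun T => ∫ s in t..T, A s i k) atTop (nhds (B t i k)) := hB t ht i k
    have h2 : (fun T => ∫ s in t..T, A s i k) =ᶠ[atTop]
        fun T => (∫ s in t₀..T, A s i k) - ∫ s in t₀..t, A s i k := by
      filter_upwards [eventually_ge_atTop t] with T hT
      rw [intervalIntegral.integral_interval_sub_left
        (hIA i k t₀ T le_rfl (le_trans ht hT)) (hIA i k t₀ t le_rfl ht)]
    have h3 : Tendsto (fun T => (∫ s in t₀..T, A s i k) - ∫ s in t₀..t, A s i k)
        atTop (nhds (B t₀ i k - ∫ s in t₀..t, A s i k)) :=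
      (hB t₀ self_mem_Ici i k).sub_const _
    have h4 := tendsto_nhds_unique (h1.congr' h2) h3
    simp only [bMat]
    rw [← h4]
  -- derivative of bMat
  have hbMd : ∀ (i k : Fin n), ∀ t ∈ Ici t₀,
      HasDerivWithinAt (fun u => bMat n t₀ A B u i k) (-(A t i k)) (Ici t₀) t := by
    intro i k t ht
    exact (primitive_hasDerivWithinAt (hAc i k) ht).const_sub _
  have hbMc : ContinuousOn (bMat n t₀ A B) (Ici t₀) :=
    continuousOn_pi.2 fun i => continuousOn_pi.2 fun k =>
      fun t ht => (hbMd i k t ht).continuousWithinAt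
  -- integrability of Φ (A * B)
  have hABi : IntegrableOn (fun s => PhiL n (A s * B s)) (Ici t₀) := by
    have heq : (fun s => PhiL n (A s * B s)) = fun s =>
        ∑ i : Fin n, ∑ k : Fin n, ((A s * B s) i k) • PhiL n (Matrix.single i k 1) := by
      funext s
      conv_lhs => rw [matrix_eq_sum_single (A s * B s)]
      rw [map_sum]
      refine Finset.sum_congr rfl fun i _ => ?_
      rw [map_sum]
      refine Finset.sum_congr rfl fun k _ => ?_
      have hsm : ((A s * B s) i k) • Matrix.single i k (1:ℂ)
          = Matrix.single i k ((A s * B s) i k) := by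
        rw [Matrix.smul_single, smul_eq_mul, mul_one]
      rw [← hsm, _root_.map_smul]
    rw [heq]
    exact integrable_finset_sum _ fun i _ => integrable_finset_sum _ fun k _ =>
      (hAB i k).smul_const (PhiL n (Matrix.single i k 1))
  -- bMat tends to 0
  have hbM0 : Tendsto (bMat n t₀ A B) atTop (nhds 0) := by
    refine tendsto_pi_nhds.2 fun i => tendsto_pi_nhds.2 fun k => ?_
    have := (hB t₀ self_mem_Ici i k).const_sub (B t₀ i k)
    simpa [bMat] using this
  have hΦbM0 : Tendsto (fun t => PhiL n (bMat n t₀ A B t)) atTop (nhds 0) := by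
    have := ((PhiL_continuous n).tendsto 0).comp hbM0
    rwa [map_zero] at this
  -- eventual smallness
  have e1 : ∀ᶠ t in atTop, ‖PhiL n (bMat n t₀ A B t)‖ < 2⁻¹ := by
    have h0 : Tendsto (fun t => ‖PhiL n (bMat n t₀ A B t)‖) atTop (nhds 0) := by
      simpa using hΦbM0.norm
    exact h0.eventually_lt_const (by norm_num)
  have hg₀i : Integrable ((Ici t₀).indicator (fun s => PhiL n (A s * B s))) :=
    integrable_indicator_Ici' hABi
  have e2 : ∀ᶠ t in atTop,
      (∫ s in Ioi t, ‖(Ici t₀).indicator (fun s => PhiL n (A s * B s)) s‖) ≤ 8⁻¹ :=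
    (tail_tendsto hg₀i.norm).eventually_le_const (by norm_num)
  obtain ⟨t₁, hP⟩ := eventually_atTop.1 ((e1.and e2).and (eventually_ge_atTop t₀))
  have ht₀t₁ : t₀ ≤ t₁ := (hP t₁ le_rfl).2
  have hsub : Ici t₁ ⊆ Ici t₀ := Ici_subset_Ici.2 ht₀t₁
  refine ⟨t₁, ht₀t₁, ?_⟩
  -- invertibility and norm bounds
  have hunit : ∀ t ∈ Ici t₁, IsUnit (1 - PhiL n (bMat n t₀ A B t)) := fun t ht =>
    isUnit_one_sub_of_norm_lt_one (lt_trans (hP t ht).1.1 (by norm_num))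
  have hRbound : ∀ t ∈ Ici t₁, ‖Ring.inverse (1 - PhiL n (bMat n t₀ A B t))‖ ≤ 2 := by
    intro t ht
    have hb := (hP t ht).1.1
    have hb1 : ‖PhiL n (bMat n t₀ A B t)‖ < 1 := lt_trans hb (by norm_num)
    rw [← geom_series_eq_inverse _ hb1]
    refine (tsum_geometric_le_of_norm_lt_one _ hb1).trans ?_
    rw [norm_one]
    have hpos : (0:ℝ) < 1 - ‖PhiL n (bMat n t₀ A B t)‖ := by
      have := norm_nonneg (PhiL n (bMat n t₀ A B t)); linarith
    have h2 : (1 - ‖PhiL n (bMat n t₀ A B t)‖)⁻¹ ≤ 2 := by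
      rw [inv_le_comm₀ hpos (by norm_num : (0:ℝ) < 2)]
      norm_num at hb ⊢
      linarith
    linarith
  -- continuity of Cmap on [t₁, ∞)
  have hAB_cont : ContinuousOn (fun t => PhiL n (A t * B t)) (Ici t₁) := by
    have h1 : ContinuousOn (fun t => PhiL n (A t * bMat n t₀ A B t)) (Ici t₁) := by
      refine (PhiL_continuous n).comp_continuousOn ?_
      refine continuousOn_pi.2 fun i => continuousOn_pi.2 fun k => ?_
      simp only [Matrix.mul_apply]
      refine continuousOn_finset_sum _ fun l _ => ?_
      exact ((hAc i l).mono hsub).mul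
        (((continuousOn_pi.1 ((continuousOn_pi.1 (hbMc.mono hsub)) l)) k))
    refine h1.congr fun t ht => ?_
    simp only [hbMB t (hsub ht)]
  have hC_cont : ContinuousOn (Cmap n t₀ A B) (Ici t₁) := by
    have hR_cont : ContinuousOn
        (fun t => Ring.inverse (1 - PhiL n (bMat n t₀ A B t))) (Ici t₁) := by
      intro t ht
      obtain ⟨u, hu⟩ := hunit t ht
      have hc1 : ContinuousWithinAt (fun t => 1 - PhiL n (bMat n t₀ A B t)) (Ici t₁) t :=
        continuousWithinAt_const.sub
          (((PhiL_continuous n).comp_continuousOn (hbMc.mono hsub)) t ht)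
      have hinv : ContinuousAt Ring.inverse
          ((fun t => 1 - PhiL n (bMat n t₀ A B t)) t) := by
        rw [show (fun t => 1 - PhiL n (bMat n t₀ A B t)) t = (u : _) from hu.symm]
        exact NormedRing.inverse_continuousAt u
      exact hinv.tendsto.comp hc1
    exact hR_cont.mul hAB_cont
  -- integrability of Cmap on [t₁, ∞)
  have hC_int : IntegrableOn (Cmap n t₀ A B) (Ici t₁) := by
    refine Integrable.mono' (((hABi.mono_set hsub).norm).const_mul 2)
      (hC_cont.aestronglyMeasurable measurableSet_Ici) ?_
    refine (ae_restrict_iff' measurableSet_Ici).2 (Filter.Eventually.of_forall fun s hs => ?_)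
    exact (norm_mul_le _ _).trans
      (mul_le_mul_of_nonneg_right (hRbound s hs) (norm_nonneg _))
  -- smallness of the tail of Cmap
  have hC_small : (∫ s in Ioi t₁, ‖Cmap n t₀ A B s‖) ≤ 1/2 := by
    have h8 := (hP t₁ le_rfl).1.2
    have hmono : (∫ s in Ioi t₁, ‖Cmap n t₀ A B s‖)
        ≤ ∫ s in Ioi t₁, 2 * ‖(Ici t₀).indicator (fun s => PhiL n (A s * B s)) s‖ := by
      refine setIntegral_mono_on (MeasureTheory.IntegrableOn.mono_set hC_int.norm Ioi_subset_Ici_self)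
        (((hg₀i.norm).const_mul 2).integrableOn) measurableSet_Ioi ?_
      intro s hs
      have hs' : s ∈ Ici t₀ := le_trans ht₀t₁ (le_of_lt hs)
      rw [indicator_of_mem hs']
      exact (norm_mul_le _ _).trans
        (mul_le_mul_of_nonneg_right (hRbound s (mem_Ici.2 (le_of_lt hs))) (norm_nonneg _))
    have heq : (∫ s in Ioi t₁, 2 * ‖(Ici t₀).indicator (fun s => PhiL n (A s * B s)) s‖)
        = 2 * ∫ s in Ioi t₁, ‖(Ici t₀).indicator (fun s => PhiL n (A s * B s)) s‖ :=
      MeasureTheory.integral_const_mul _ _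
    have h9 : (2:ℝ) * (∫ s in Ioi t₁, ‖(Ici t₀).indicator (fun s => PhiL n (A s * B s)) s‖)
        ≤ 2 * 8⁻¹ := by
      exact mul_le_mul_of_nonneg_left h8 (by norm_num)
    rw [heq] at hmono
    linarith
  -- solve the transformed system
  obtain ⟨y, M, hyM, hyd, hylim⟩ :=
    exists_sol (Cmap n t₀ A B) t₁ hC_cont hC_int hC_small (Pi.single j 1)
  refine ⟨fun t => y t - bMat n t₀ A B t *ᵥ y t, ?_, ?_⟩
  · -- the ODE
    intro t ht
    have hyd_t := hyd t ht
    have hABbM : A t * B t = A t * bMat n t₀ A B t := by rw [hbMB t (hsub ht)]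
    have key : (1 - PhiL n (bMat n t₀ A B t)) * Cmap n t₀ A B t
        = PhiL n (A t * bMat n t₀ A B t) := by
      show (1 - PhiL n (bMat n t₀ A B t)) *
        (Ring.inverse (1 - PhiL n (bMat n t₀ A B t)) * PhiL n (A t * B t)) = _
      rw [← mul_assoc, Ring.mul_inverse_cancel _ (hunit t ht), one_mul, hABbM]
    have keyv : Cmap n t₀ A B t (y t) - bMat n t₀ A B t *ᵥ (Cmap n t₀ A B t (y t))
        = A t *ᵥ (bMat n t₀ A B t *ᵥ y t) := by
      have h := congrArg (fun (L : (Fin n → ℂ) →L[ℂ] (Fin n → ℂ)) => L (y t)) key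
      simp only [ContinuousLinearMap.mul_apply, ContinuousLinearMap.sub_apply,
        ContinuousLinearMap.one_apply] at h
      rw [PhiL_apply, PhiL_apply, ← Matrix.mulVec_mulVec] at h
      exact h
    refine hasDerivWithinAt_pi.2 fun i => ?_
    have hyi : ∀ k, HasDerivWithinAt (fun u => y u k)
        (-(Cmap n t₀ A B t (y t)) k) (Ici t₁) t := fun k => hasDerivWithinAt_pi.1 hyd_t k
    have hsum : HasDerivWithinAt (fun u => ∑ k, bMat n t₀ A B u i k * y u k)
        (∑ k, (-(A t i k) * y t k + bMat n t₀ A B t i k * (-(Cmap n t₀ A B t (y t)) k)))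
        (Ici t₁) t :=
      HasDerivWithinAt.fun_sum fun k _ => ((hbMd i k t (hsub ht)).mono hsub).fun_mul (hyi k)
    have hmain : HasDerivWithinAt (fun u => y u i - ∑ k, bMat n t₀ A B u i k * y u k)
        ((-(Cmap n t₀ A B t (y t))) i
          - ∑ k, (-(A t i k) * y t k + bMat n t₀ A B t i k * (-(Cmap n t₀ A B t (y t)) k)))
        (Ici t₁) t := (hyi i).sub hsum
    have hfun : (fun u => (y u - bMat n t₀ A B u *ᵥ y u) i)
        = fun u => y u i - ∑ k, bMat n t₀ A B u i k * y u k := by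
      funext u
      simp [Matrix.mulVec, dotProduct]
    rw [hfun]
    convert hmain using 1
    · rfl
    have kv := congrFun keyv i
    simp only [Matrix.mulVec, dotProduct, Pi.sub_apply, Pi.neg_apply] at kv ⊢
    simp only [Finset.sum_add_distrib, neg_mul, mul_neg, Finset.sum_neg_distrib,
      mul_sub, Finset.sum_sub_distrib]
    linear_combination kv
  · -- the limit
    have h1 : Tendsto (fun t => bMat n t₀ A B t *ᵥ y t) atTop (nhds 0) := by
      apply squeeze_zero_norm (a := fun t => ‖PhiL n (bMat n t₀ A B t)‖ * M)
      · intro t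
        rw [← PhiL_apply n (bMat n t₀ A B t) (y t)]
        exact ((PhiL n (bMat n t₀ A B t)).le_opNorm (y t)).trans
          (mul_le_mul_of_nonneg_left (hyM t) (norm_nonneg _))
      · have h0 : Tendsto (fun t => ‖PhiL n (bMat n t₀ A B t)‖) atTop (nhds 0) := by
          simpa using hΦbM0.norm
        simpa using h0.mul_const M
    have := hylim.sub h1
    simpa using this
end

section
/- Let t₀ ∈ ℝ and let φ : [t₀, ∞) → ℝ be a C¹ function with φ(t) > 0 and φ′(t) ≥ 0 for all t ≥ t₀, and lim_{t→∞} φ(t) = ∞, and let c ∈ ℝ with c ≠ 0. Then for every t ≥ t₀ the improper integral I(t) := lim_{T→∞} ∫_t^T (φ′(s)/φ(s)) e^{−i c φ(s)} ds exists in ℂ, and |I(t)| ≤ 4/(|c| φ(t)). -/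
open MeasureTheory Filter Set

noncomputable def Efn (c : ℝ) (u : ℝ) : ℂ := Complex.exp (-(Complex.I * (c : ℂ) * (u : ℂ)))

lemma Efn_norm (c u : ℝ) : ‖Efn c u‖ = 1 := by
  simp [Efn, Complex.norm_exp]

lemma Efn_hasDerivAt (c : ℝ) (u : ℝ) :
    HasDerivAt (Efn c) (Efn c u * -(Complex.I * c)) u := by
  have h1 : HasDerivAt (fun u : ℝ => (u : ℂ)) 1 u := by
    simpa using (hasDerivAt_id u).ofReal_comp
  have h2 : HasDerivAt (fun u : ℝ => -(Complex.I * c * (u : ℂ))) (-(Complex.I * c)) u := by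
    have := (h1.const_mul (Complex.I * c)).neg; simp only [mul_one] at this; exact this
  have h3 : HasDerivAt (fun u : ℝ => Complex.exp (-(Complex.I * c * (u : ℂ))))
      (Complex.exp (-(Complex.I * c * (u : ℂ))) * -(Complex.I * c)) u :=
    (Complex.hasDerivAt_exp (-(Complex.I * c * (u : ℂ)))).comp u h2
  exact h3

lemma aux_tendsto (c : ℝ) (hc : c ≠ 0) (a : ℝ) (ha : 0 < a) :
    ∃ I : ℂ, Tendsto (fun x : ℝ => ∫ u in a..x, ((u : ℂ))⁻¹ * Efn c u) atTop (nhds I) ∧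
      ‖I‖ ≤ 2 / (|c| * a) := by
  set k : ℂ := -(Complex.I * c) with hk
  have hk0 : k ≠ 0 := by
    simp [hk, Complex.ext_iff, hc]
  -- integrability of E u * u⁻² on Ioi a
  have hint : IntegrableOn (fun u : ℝ => Efn c u * ((u : ℂ))⁻¹ ^ 2) (Ioi a) := by
    have hmeas : AEStronglyMeasurable (fun u : ℝ => Efn c u * ((u : ℂ))⁻¹ ^ 2)
        (volume.restrict (Ioi a)) := by
      apply ContinuousOn.aestronglyMeasurable _ measurableSet_Ioi
      intro u hu
      have hu0 : (u : ℂ) ≠ 0 := by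
        exact_mod_cast (ha.trans hu).ne'
      exact ((Complex.continuous_exp.comp (by continuity)).continuousWithinAt.mul
        (((Complex.continuous_ofReal.continuousWithinAt).inv₀ hu0).pow 2))
    refine Integrable.mono' (g := fun u : ℝ => u ^ (-2 : ℝ))
      (integrableOn_Ioi_rpow_of_lt (by norm_num) ha) hmeas ?_
    filter_upwards [ae_restrict_mem measurableSet_Ioi] with u hu
    have hu0 : (0:ℝ) < u := ha.trans hu
    rw [norm_mul, Efn_norm, one_mul, norm_pow, norm_inv, Complex.norm_real,
      Real.norm_of_nonneg hu0.le, Real.rpow_neg hu0.le]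
    rw [show ((2:ℝ)) = ((2:ℕ):ℝ) by norm_num, Real.rpow_natCast]
    simp [inv_pow]
  set J : ℂ := ∫ u in Ioi a, Efn c u * ((u : ℂ))⁻¹ ^ 2 with hJ
  have hInt2 : ∫ u in Ioi a, u ^ (-2:ℝ) = a⁻¹ := by
    rw [integral_Ioi_rpow_of_lt (by norm_num) ha]
    norm_num [Real.rpow_neg_one]
  have hJnorm : ‖J‖ ≤ a⁻¹ := by
    rw [← hInt2]
    refine norm_integral_le_of_norm_le ((integrableOn_Ioi_rpow_of_lt (by norm_num) ha)) ?_
    filter_upwards [ae_restrict_mem measurableSet_Ioi] with u hu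
    have hu0 : (0:ℝ) < u := ha.trans hu
    rw [norm_mul, Efn_norm, one_mul, norm_pow, norm_inv, Complex.norm_real,
      Real.norm_of_nonneg hu0.le, Real.rpow_neg hu0.le]
    rw [show ((2:ℝ)) = ((2:ℕ):ℝ) by norm_num, Real.rpow_natCast]
    simp [inv_pow]
  refine ⟨k⁻¹ * (0 - Efn c a * (a : ℂ)⁻¹ + J), ?_, ?_⟩
  · -- eventual formula
    have hform : ∀ x : ℝ, a ≤ x →
        (∫ u in a..x, ((u : ℂ))⁻¹ * Efn c u)
          = k⁻¹ * (Efn c x * (x : ℂ)⁻¹ - Efn c a * (a : ℂ)⁻¹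
              + ∫ u in a..x, Efn c u * ((u : ℂ))⁻¹ ^ 2) := by
      intro x hx
      have hderiv : ∀ u ∈ uIcc a x,
          HasDerivAt (fun u : ℝ => Efn c u * ((u : ℂ))⁻¹)
            (k * (((u : ℂ))⁻¹ * Efn c u) - Efn c u * ((u : ℂ))⁻¹ ^ 2) u := by
        intro u hu
        rw [uIcc_of_le hx] at hu
        have hu0 : (0:ℝ) < u := lt_of_lt_of_le ha hu.1
        have huC : (u : ℂ) ≠ 0 := by exact_mod_cast hu0.ne'
        have h1 : HasDerivAt (fun u : ℝ => (u : ℂ)) 1 u := by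
          simpa using (hasDerivAt_id u).ofReal_comp
        have h2 : HasDerivAt (fun y : ℝ => ((y : ℂ))⁻¹) (-((u : ℂ) ^ 2)⁻¹) u :=
          (hasDerivAt_inv huC).comp_ofReal
        have := (Efn_hasDerivAt c u).mul h2
        refine this.congr_deriv ?_
        rw [hk]
        ring
      have hcont1 : ContinuousOn (fun u : ℝ => k * (((u : ℂ))⁻¹ * Efn c u)
          - Efn c u * ((u : ℂ))⁻¹ ^ 2) (uIcc a x) := by
        rw [uIcc_of_le hx]
        intro u hu
        have hu0 : (u : ℂ) ≠ 0 := by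
          exact_mod_cast (lt_of_lt_of_le ha hu.1).ne'
        have hE : ContinuousWithinAt (Efn c) (Icc a x) u :=
          (Complex.continuous_exp.comp (by continuity)).continuousWithinAt
        have hi : ContinuousWithinAt (fun u : ℝ => ((u : ℂ))⁻¹) (Icc a x) u :=
          (Complex.continuous_ofReal.continuousWithinAt).inv₀ hu0
        exact ((continuousWithinAt_const.mul (hi.mul hE)).sub (hE.mul (hi.pow 2)))
      have hFTC := intervalIntegral.integral_eq_sub_of_hasDerivAt
        (by simpa [uIcc_of_le hx] using hderiv) (hcont1.intervalIntegrable)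
      have hsplit : IntervalIntegrable (fun u : ℝ => ((u:ℂ))⁻¹ * Efn c u) volume a x := by
        apply ContinuousOn.intervalIntegrable
        rw [uIcc_of_le hx]
        intro u hu
        have hu0 : (u : ℂ) ≠ 0 := by
          exact_mod_cast (lt_of_lt_of_le ha hu.1).ne'
        exact ((Complex.continuous_ofReal.continuousWithinAt).inv₀ hu0).mul
          (Complex.continuous_exp.comp (by continuity)).continuousWithinAt
      have hsplit2 : IntervalIntegrable (fun u : ℝ => Efn c u * ((u:ℂ))⁻¹ ^ 2) volume a x := by
        apply ContinuousOn.intervalIntegrable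
        rw [uIcc_of_le hx]
        intro u hu
        have hu0 : (u : ℂ) ≠ 0 := by
          exact_mod_cast (lt_of_lt_of_le ha hu.1).ne'
        exact (Complex.continuous_exp.comp (by continuity)).continuousWithinAt.mul
          (((Complex.continuous_ofReal.continuousWithinAt).inv₀ hu0).pow 2)
      rw [intervalIntegral.integral_sub ((hsplit.const_mul k)) hsplit2,
        intervalIntegral.integral_const_mul] at hFTC
      rw [inv_mul_eq_div, eq_div_iff hk0]
      linear_combination hFTC
    -- limits
    have hlim1 : Tendsto (fun x : ℝ => Efn c x * (x : ℂ)⁻¹) atTop (nhds 0) := by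
      refine squeeze_zero_norm' (a := fun x : ℝ => x⁻¹) ?_ tendsto_inv_atTop_zero
      filter_upwards [eventually_gt_atTop 0] with x hx
      rw [norm_mul, Efn_norm, one_mul, norm_inv, Complex.norm_real,
        Real.norm_of_nonneg hx.le]
    have hlim2 : Tendsto (fun x : ℝ => ∫ u in a..x, Efn c u * ((u:ℂ))⁻¹ ^ 2) atTop (nhds J) :=
      intervalIntegral_tendsto_integral_Ioi a hint tendsto_id
    have := (((hlim1.sub (tendsto_const_nhds (x := Efn c a * (a : ℂ)⁻¹))).add hlim2).const_mul
      (k⁻¹))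
    apply this.congr'
    filter_upwards [eventually_ge_atTop a] with x hx
    exact (hform x hx).symm
  · -- bound
    have hnormk : ‖k⁻¹‖ = |c|⁻¹ := by
      rw [norm_inv, hk, norm_neg, norm_mul, Complex.norm_I, one_mul, Complex.norm_real,
        Real.norm_eq_abs]
    rw [norm_mul, hnormk]
    have h1 : ‖(0:ℂ) - Efn c a * (a:ℂ)⁻¹ + J‖ ≤ a⁻¹ + a⁻¹ := by
      refine (norm_add_le _ _).trans (add_le_add ?_ hJnorm)
      rw [zero_sub, norm_neg, norm_mul, Efn_norm, one_mul, norm_inv, Complex.norm_real,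
        Real.norm_of_nonneg ha.le]
    calc |c|⁻¹ * ‖(0:ℂ) - Efn c a * (a:ℂ)⁻¹ + J‖ ≤ |c|⁻¹ * (a⁻¹ + a⁻¹) := by
          exact mul_le_mul_of_nonneg_left h1 (by positivity)
      _ = 2 / (|c| * a) := by field_simp; ring

lemma Efn_continuous (c : ℝ) : Continuous (Efn c) := by
  unfold Efn; continuity

/-- For a `C¹` function `φ` on `[t₀,∞)` which is positive, nondecreasing and tends to
infinity, and `c ≠ 0`, the improper integral `∫_t^∞ (φ'/φ) e^{-icφ} ds` exists and is
bounded by `4 / (|c| φ(t))`. -/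
theorem dunkl_stmt5 (t₀ : ℝ) (φ φ' : ℝ → ℝ)
    (hderiv : ∀ t ∈ Ici t₀, HasDerivWithinAt φ (φ' t) (Ici t₀) t)
    (hcont : ContinuousOn φ' (Ici t₀))
    (hpos : ∀ t ∈ Ici t₀, 0 < φ t)
    (hmono : ∀ t ∈ Ici t₀, 0 ≤ φ' t)
    (htop : Tendsto φ atTop atTop)
    (c : ℝ) (hc : c ≠ 0) :
    ∀ t ∈ Ici t₀, ∃ I : ℂ,
      Tendsto (fun T : ℝ =>
          ∫ s in t..T, ((φ' s / φ s : ℝ) : ℂ) *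
            Complex.exp (-(Complex.I * (c : ℂ) * ((φ s : ℝ) : ℂ))))
        atTop (nhds I) ∧
      ‖I‖ ≤ 4 / (|c| * φ t) := by
  intro t ht
  set a : ℝ := φ t with haeq
  have ha : 0 < a := hpos t ht
  obtain ⟨I, hI, hIb⟩ := aux_tendsto c hc a ha
  refine ⟨I, ?_, ?_⟩
  · -- change of variables for each T ≥ t
    have key : ∀ T : ℝ, t ≤ T →
        (∫ s in t..T, ((φ' s / φ s : ℝ) : ℂ) *
            Complex.exp (-(Complex.I * (c : ℂ) * ((φ s : ℝ) : ℂ))))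
          = ∫ u in a..(φ T), ((u : ℂ))⁻¹ * Efn c u := by
      intro T hT
      have hsub : uIcc t T ⊆ Ici t₀ := by
        rw [uIcc_of_le hT]
        exact Icc_subset_Ici_self.trans (Ici_subset_Ici.mpr ht)
      have hf : ContinuousOn φ (uIcc t T) := fun s hs =>
        ((hderiv s (hsub hs)).continuousWithinAt).mono hsub
      have hff' : ∀ x ∈ Ioo (min t T) (max t T), HasDerivWithinAt φ (φ' x) (Ioi x) x := by
        intro x hx
        have hx' : x ∈ Ici t₀ := by
          have : t ≤ x := by
            rcases hx with ⟨h1, _⟩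
            simpa [min_eq_left hT] using h1.le
          exact le_trans ht this
        exact (hderiv x hx').mono (Ioi_subset_Ici_iff.mpr (le_refl x) |>.trans
          (Ici_subset_Ici.mpr hx'))
      have hf' : ContinuousOn φ' (uIcc t T) := hcont.mono hsub
      have hg : ContinuousOn (fun u : ℝ => ((u : ℂ))⁻¹ * Efn c u) (φ '' uIcc t T) := by
        intro u hu
        obtain ⟨s, hs, rfl⟩ := hu
        have hu0 : (φ s : ℂ) ≠ 0 := by exact_mod_cast (hpos s (hsub hs)).ne'
        exact ((Complex.continuous_ofReal.continuousWithinAt).inv₀ hu0).mul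
          (Efn_continuous c).continuousWithinAt
      have := intervalIntegral.integral_comp_smul_deriv'' hf hff' hf' hg
      rw [← this]
      apply intervalIntegral.integral_congr
      intro s _
      show ((φ' s / φ s : ℝ) : ℂ) * Complex.exp (-(Complex.I * (c : ℂ) * ((φ s : ℝ) : ℂ)))
        = φ' s • ((((φ s : ℝ) : ℂ))⁻¹ * Efn c (φ s))
      rw [Complex.real_smul, Efn]
      push_cast
      ring
    have hlim : Tendsto (fun T : ℝ => ∫ u in a..(φ T), ((u : ℂ))⁻¹ * Efn c u)
        atTop (nhds I) := hI.comp htop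
    apply hlim.congr'
    filter_upwards [eventually_ge_atTop t] with T hT
    exact (key T hT).symm
  · refine hIb.trans ?_
    have h0 : 0 < |c| * a := by positivity
    rw [div_le_div_iff₀ h0 h0]
    nlinarith
end

section
/- Let N ≥ 1, let G be a finite subgroup of the orthogonal group O(ℝᴺ), let R₊ ⊂ ℝᴺ be a finite set of nonzero vectors such that the reflection σ_α (given by σ_α z = z − 2(⟨α,z⟩/⟨α,α⟩)α) belongs to G for every α ∈ R₊, and let k : R₊ → [0,∞). Let y ∈ ℝᴺ satisfy ⟨α, g y⟩ ≠ 0 for all α ∈ R₊ and all g ∈ G. Let κ : (0,∞) → ℝᴺ be a C¹ curve such that there is δ > 0 with ⟨α, κ(t)⟩ > δ|κ(t)| for all α ∈ R₊ and all t > 0, lim_{t→∞} |κ(t)| = ∞, and ⟨α, κ′(t)⟩ > 0 for all α ∈ R₊ and t > 0. Suppose F : (0,∞) → ℂ^G is differentiable and satisfies, for all t > 0 and all g ∈ G, F_g′(t) = Σ_{α ∈ R₊} k(α) (⟨α, κ′(t)⟩/⟨α, κ(t)⟩) e^{−i⟨α, κ(t)⟩⟨α, g y⟩} F_{σ_α g}(t).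 Then lim_{t→∞} F(t) exists in ℂ^G, and if F(t₁) ≠ 0 for some t₁ > 0 then this limit is different from 0. -/
open MeasureTheory Filter Set

theorem aux_alg (kc qc pc m e f df : ℂ) (hp : pc ≠ 0) (hm : m ≠ 0) :
    kc * (qc/pc) * e * f
      + (kc/m) * (((-(qc*m)*e) * pc - e * qc)/pc^2 * f + (e/pc) * df)
    = (kc/m) * ((e/pc) * df - e * (qc/pc^2) * f) := by
  field_simp [hp, hm]
  ring

theorem mvt_varbound {E : Type*} [NormedAddCommGroup E] [NormedSpace ℝ E]
    {f f' : ℝ → E} {B B' : ℝ → ℝ} {a b : ℝ} (hab : a ≤ b)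
    (hf : ∀ t ∈ Icc a b, HasDerivAt f (f' t) t)
    (hB : ∀ t ∈ Icc a b, HasDerivAt B (B' t) t)
    (hb : ∀ t ∈ Icc a b, ‖f' t‖ ≤ B' t) :
    ‖f b - f a‖ ≤ B b - B a := by
  have h := image_norm_le_of_norm_deriv_right_le_deriv_boundary'
    (f := fun t => f t - f a) (f' := f') (a := a) (b := b)
    (B := fun t => B t - B a) (B' := B')
    (fun t ht => ((hf t ht).continuousAt.continuousWithinAt).sub continuousWithinAt_const)
    (fun t ht => ((hf t (Ico_subset_Icc_self ht)).sub_const (f a)).hasDerivWithinAt)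
    (by simp)
    (fun t ht => ((hB t ht).continuousAt.continuousWithinAt).sub continuousWithinAt_const)
    (fun t ht => ((hB t (Ico_subset_Icc_self ht)).sub_const (B a)).hasDerivWithinAt)
    (fun t ht => hb t (Ico_subset_Icc_self ht))
  simpa using h (right_mem_Icc.2 hab)

theorem aux_pair (kb nb d pa pb qb : ℝ) (hpa : 0 < pa) (hpb : 0 < pb)
    (hqb : 0 ≤ qb) (hkb : 0 ≤ kb) (hd : 0 < d) (h : d * pb ≤ nb * pa) :
    pa⁻¹ * (kb * (qb/pb)) ≤ kb * nb/d * (qb/pb^2) := by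
  have e1 : pa⁻¹ * (kb * (qb/pb)) = kb * qb/(pa*pb) := by
    field_simp
  have e2 : kb * nb/d * (qb/pb^2) = kb * nb * qb/(d*pb^2) := by
    field_simp
  rw [e1, e2, div_le_div_iff₀ (by positivity) (by positivity)]
  nlinarith [mul_le_mul_of_nonneg_left h (show (0:ℝ) ≤ kb*qb*pb by positivity)]

set_option maxHeartbeats 2000000 in
/-- Asymptotics along admissible curves for the system of ODEs satisfied by the
(normalized) Dunkl kernel vector field `F = (F_g)_{g ∈ G}`: the limit of `F(t)` as
`t → ∞` exists, and is nonzero provided `F` is nonzero somewhere. -/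
theorem dunkl_stmt6 (N : ℕ) (hN : 1 ≤ N)
    (G : Subgroup (EuclideanSpace ℝ (Fin N) ≃ₗᵢ[ℝ] EuclideanSpace ℝ (Fin N)))
    [Finite G]
    (R : Finset (EuclideanSpace ℝ (Fin N))) (hR0 : ∀ α ∈ R, α ≠ 0)
    (σ : EuclideanSpace ℝ (Fin N) → G)
    (hσ : ∀ α ∈ R, ∀ z : EuclideanSpace ℝ (Fin N),
      ((σ α : EuclideanSpace ℝ (Fin N) ≃ₗᵢ[ℝ] EuclideanSpace ℝ (Fin N)) z)
        = z - ((2 * (inner ℝ α z : ℝ) / (inner ℝ α α : ℝ)) • α))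
    (k : EuclideanSpace ℝ (Fin N) → ℝ) (hk : ∀ α ∈ R, 0 ≤ k α)
    (y : EuclideanSpace ℝ (Fin N))
    (hy : ∀ α ∈ R, ∀ g : G,
      (inner ℝ α ((g : EuclideanSpace ℝ (Fin N) ≃ₗᵢ[ℝ] EuclideanSpace ℝ (Fin N)) y) : ℝ) ≠ 0)
    (κ κ' : ℝ → EuclideanSpace ℝ (Fin N))
    (hκd : ∀ t ∈ Ioi (0 : ℝ), HasDerivAt κ (κ' t) t)
    (hκ'c : ContinuousOn κ' (Ioi 0))
    (δ : ℝ) (hδ : 0 < δ)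
    (hκδ : ∀ α ∈ R, ∀ t ∈ Ioi (0 : ℝ), δ * ‖κ t‖ < (inner ℝ α (κ t) : ℝ))
    (hκtop : Tendsto (fun t => ‖κ t‖) atTop atTop)
    (hκ'C : ∀ α ∈ R, ∀ t ∈ Ioi (0 : ℝ), 0 < (inner ℝ α (κ' t) : ℝ))
    (F : ℝ → G → ℂ)
    (hF : ∀ t ∈ Ioi (0 : ℝ), ∀ g : G,
      HasDerivAt (fun s => F s g)
        (∑ α ∈ R, (k α : ℂ) * (((inner ℝ α (κ' t) : ℝ) : ℂ) / ((inner ℝ α (κ t) : ℝ) : ℂ)) *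
          Complex.exp (-(Complex.I * ((inner ℝ α (κ t) : ℝ) : ℂ) *
            ((inner ℝ α ((g : EuclideanSpace ℝ (Fin N) ≃ₗᵢ[ℝ] EuclideanSpace ℝ (Fin N)) y) : ℝ) : ℂ))) *
          F t (σ α * g)) t) :
    ∃ L : G → ℂ, Tendsto F atTop (nhds L) ∧ ((∃ t₁ ∈ Ioi (0 : ℝ), F t₁ ≠ 0) → L ≠ 0) := by
  haveI : Fintype G := Fintype.ofFinite G
  -- scalar functions
  set P : EuclideanSpace ℝ (Fin N) → ℝ → ℝ := fun α t => (inner ℝ α (κ t) : ℝ) with hP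
  set Q : EuclideanSpace ℝ (Fin N) → ℝ → ℝ := fun α t => (inner ℝ α (κ' t) : ℝ) with hQ
  set lam : EuclideanSpace ℝ (Fin N) → G → ℝ := fun α g =>
    (inner ℝ α ((g : EuclideanSpace ℝ (Fin N) ≃ₗᵢ[ℝ] EuclideanSpace ℝ (Fin N)) y) : ℝ) with hlam
  set Ee : EuclideanSpace ℝ (Fin N) → G → ℝ → ℂ := fun α g t =>
    Complex.exp (-(Complex.I * (P α t : ℂ) * (lam α g : ℂ))) with hEe
  set DF : ℝ → G → ℂ := fun t g =>
    ∑ α ∈ R, (k α : ℂ) * ((Q α t : ℂ) / (P α t : ℂ)) * Ee α g t * F t (σ α * g) with hDF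
  have hF' : ∀ t ∈ Ioi (0:ℝ), ∀ g : G, HasDerivAt (fun s => F s g) (DF t g) t := hF
  have hlam0 : ∀ α ∈ R, ∀ g : G, lam α g ≠ 0 := hy
  -- positivity
  have hPpos : ∀ α ∈ R, ∀ t ∈ Ioi (0:ℝ), 0 < P α t := by
    intro α hα t ht
    have h := hκδ α hα t ht
    rw [hP]
    nlinarith [norm_nonneg (κ t)]
  have hPκ : ∀ α ∈ R, ∀ t ∈ Ioi (0:ℝ), δ * ‖κ t‖ < P α t := hκδ
  have hPle : ∀ (α : EuclideanSpace ℝ (Fin N)), ∀ t, P α t ≤ ‖α‖ * ‖κ t‖ :=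
    fun α t => real_inner_le_norm α (κ t)
  have hκpos : ∀ α ∈ R, ∀ t ∈ Ioi (0:ℝ), 0 < ‖κ t‖ := by
    intro α hα t ht
    have h1 := hPpos α hα t ht
    have h2 := hPle α t
    nlinarith [norm_nonneg α, norm_nonneg (κ t)]
  have hQpos : ∀ α ∈ R, ∀ t ∈ Ioi (0:ℝ), 0 < Q α t := hκ'C
  -- derivatives of scalar functions
  have hPd : ∀ (α : EuclideanSpace ℝ (Fin N)), ∀ t ∈ Ioi (0:ℝ),
      HasDerivAt (fun s => P α s) (Q α t) t := by
    intro α t ht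
    exact ((innerSL ℝ α).hasFDerivAt.comp_hasDerivAt t (hκd t ht))
  have hPdC : ∀ (α : EuclideanSpace ℝ (Fin N)), ∀ t ∈ Ioi (0:ℝ),
      HasDerivAt (fun s => ((P α s : ℝ) : ℂ)) ((Q α t : ℝ) : ℂ) t := by
    intro α t ht
    exact Complex.ofRealCLM.hasFDerivAt.comp_hasDerivAt t (hPd α t ht)
  have hEd : ∀ (α : EuclideanSpace ℝ (Fin N)) (g : G), ∀ t ∈ Ioi (0:ℝ),
      HasDerivAt (fun s => Ee α g s)
        ((-(((Q α t : ℝ):ℂ) * ((lam α g : ℝ):ℂ)) * Complex.I) * Ee α g t) t := by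
    intro α g t ht
    have h1 : HasDerivAt (fun s => -(Complex.I * ((P α s : ℝ):ℂ) * ((lam α g : ℝ):ℂ)))
        (-(Complex.I * ((Q α t : ℝ):ℂ) * ((lam α g : ℝ):ℂ))) t := by
      exact (((hPdC α t ht).const_mul Complex.I).mul_const _).neg
    have h2 := h1.cexp
    rw [hEe]
    convert h2 using 1
    ring
  -- corrected function Hv (integration by parts) and its derivative DH
  set Hv : ℝ → G → ℂ := fun t g => F t g + ∑ α ∈ R,
    ((k α : ℂ)/(Complex.I * ((lam α g : ℝ):ℂ))) *
      ((Ee α g t / ((P α t : ℝ):ℂ)) * F t (σ α * g)) with hHv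
  set DH : ℝ → G → ℂ := fun t g => ∑ α ∈ R,
    ((k α : ℂ)/(Complex.I * ((lam α g : ℝ):ℂ))) *
      ((Ee α g t / ((P α t : ℝ):ℂ)) * DF t (σ α * g)
        - Ee α g t * (((Q α t : ℝ):ℂ)/((P α t : ℝ):ℂ)^2) * F t (σ α * g)) with hDH
  have hHd : ∀ t ∈ Ioi (0:ℝ), ∀ g : G, HasDerivAt (fun s => Hv s g) (DH t g) t := by
    intro t ht g
    have hterm : ∀ α ∈ R, HasDerivAt
        (fun s => ((k α : ℂ)/(Complex.I * ((lam α g : ℝ):ℂ))) *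
          ((Ee α g s / ((P α s : ℝ):ℂ)) * F s (σ α * g)))
        (((k α : ℂ)/(Complex.I * ((lam α g : ℝ):ℂ))) *
          (((-(((Q α t : ℝ):ℂ) * (Complex.I * ((lam α g : ℝ):ℂ))) * Ee α g t) * ((P α t : ℝ):ℂ)
              - Ee α g t * ((Q α t : ℝ):ℂ)) / ((P α t : ℝ):ℂ)^2 * F t (σ α * g)
            + (Ee α g t / ((P α t : ℝ):ℂ)) * DF t (σ α * g))) t := by
      intro α hα
      have hPne : ((P α t : ℝ) : ℂ) ≠ 0 := by
        exact_mod_cast (hPpos α hα t ht).ne'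
      have hEd' : HasDerivAt (fun s => Ee α g s)
          (-(((Q α t : ℝ):ℂ) * (Complex.I * ((lam α g : ℝ):ℂ))) * Ee α g t) t := by
        convert hEd α g t ht using 1
        ring
      exact (((hEd'.div (hPdC α t ht) hPne).mul (hF' t ht (σ α * g))).const_mul _)
    have htot := (hF' t ht g).add (HasDerivAt.fun_sum hterm)
    have hfun : (fun s => Hv s g) = (fun s => F s g + ∑ α ∈ R,
        ((k α : ℂ)/(Complex.I * ((lam α g : ℝ):ℂ))) *
          ((Ee α g s / ((P α s : ℝ):ℂ)) * F s (σ α * g))) := by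
      funext s; rw [hHv]
    rw [hfun]
    refine htot.congr_deriv (Eq.symm ?_)
    rw [hDH, hDF]
    rw [← Finset.sum_add_distrib]
    refine Finset.sum_congr rfl (fun α hα => ?_)
    have hPne : ((P α t : ℝ) : ℂ) ≠ 0 := by
      exact_mod_cast (hPpos α hα t ht).ne'
    have hmne : Complex.I * ((lam α g : ℝ):ℂ) ≠ 0 :=
      mul_ne_zero Complex.I_ne_zero (by exact_mod_cast hlam0 α hα g)
    exact (aux_alg _ _ _ _ _ _ _ hPne hmne).symm
  -- norm one of the exponential
  have hEn : ∀ (α : EuclideanSpace ℝ (Fin N)) (g : G) (t : ℝ), ‖Ee α g t‖ = 1 := by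
    intro α g t
    rw [hEe]
    simp [Complex.norm_exp]
  -- the minimum of |lam| and 1
  have hlmS : (1:ℝ) ∈ insert (1:ℝ) ((R ×ˢ (Finset.univ : Finset G)).image
      fun pr => |lam pr.1 pr.2|) := Finset.mem_insert_self _ _
  set lmS : Finset ℝ := insert (1:ℝ) ((R ×ˢ (Finset.univ : Finset G)).image
      fun pr => |lam pr.1 pr.2|) with hlmSdef
  set lm : ℝ := lmS.min' ⟨1, hlmS⟩ with hlmdef
  have hlm1 : lm ≤ 1 := Finset.min'_le _ _ hlmS
  have hlmle : ∀ α ∈ R, ∀ g : G, lm ≤ |lam α g| := by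
    intro α hα g
    refine Finset.min'_le _ _ ?_
    refine Finset.mem_insert_of_mem (Finset.mem_image.2 ⟨(α, g), ?_, rfl⟩)
    exact Finset.mem_product.2 ⟨hα, Finset.mem_univ g⟩
  have hlmpos : 0 < lm := by
    have hmem : lm ∈ lmS := lmS.min'_mem ⟨1, hlmS⟩
    have hmem' : lm = 1 ∨ lm ∈ Finset.image (fun pr => |lam pr.1 pr.2|)
        (R ×ˢ (Finset.univ : Finset G)) := by
      simpa [hlmSdef, Finset.mem_insert] using hmem
    rcases hmem' with h | h
    · rw [h]; norm_num
    · rcases Finset.mem_image.1 h with ⟨pr, hpr, hval⟩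
      rw [← hval]
      exact abs_pos.2 (hlam0 pr.1 (Finset.mem_product.1 hpr).1 pr.2)
  -- constants and comparison functions
  set K : ℝ := ∑ α ∈ R, k α with hK
  set cP : EuclideanSpace ℝ (Fin N) → ℝ := fun α => k α/lm + K * k α * ‖α‖/(lm*δ) with hcP
  have hcPnn : ∀ α ∈ R, 0 ≤ cP α := by
    intro α hα
    have h1 := hk α hα
    have h2 : 0 ≤ K := Finset.sum_nonneg hk
    rw [hcP]
    positivity
  set Φ : ℝ → ℝ := fun t => ∑ α ∈ R, cP α * (-(P α t)⁻¹) with hΦ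
  set Φ' : ℝ → ℝ := fun t => ∑ α ∈ R, cP α * (Q α t/(P α t)^2) with hΦ'
  set Ψ : ℝ → ℝ := fun t => ∑ α ∈ R, k α/lm * (P α t)⁻¹ with hΨ
  set Sf : ℝ → ℝ := fun t => ∑ β ∈ R, k β * ‖β‖/δ * (Q β t/(P β t)^2) with hSf
  have hΦ'nn : ∀ t ∈ Ioi (0:ℝ), 0 ≤ Φ' t := by
    intro t ht
    refine Finset.sum_nonneg fun α hα => ?_
    have h1 := hcPnn α hα
    have h2 := (hPpos α hα t ht)
    have h3 := (hQpos α hα t ht).le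
    positivity
  have hΦnp : ∀ t ∈ Ioi (0:ℝ), Φ t ≤ 0 := by
    intro t ht
    refine Finset.sum_nonpos fun α hα => ?_
    have h1 := hcPnn α hα
    have h2 := (hPpos α hα t ht)
    have h3 : (0:ℝ) ≤ (P α t)⁻¹ := by positivity
    nlinarith [mul_nonneg h1 h3]
  have hΨnn : ∀ t ∈ Ioi (0:ℝ), 0 ≤ Ψ t := by
    intro t ht
    refine Finset.sum_nonneg fun α hα => ?_
    have h1 := hk α hα
    have h2 := (hPpos α hα t ht)
    positivity
  have hFnorm : ∀ (t : ℝ) (g : G), ‖F t g‖ ≤ ‖F t‖ := fun t g => norm_le_pi_norm (F t) g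
  -- bound on DF
  have hDFb : ∀ t ∈ Ioi (0:ℝ), ∀ g : G,
      ‖DF t g‖ ≤ (∑ β ∈ R, k β * (Q β t/P β t)) * ‖F t‖ := by
    intro t ht g
    rw [hDF]
    refine (norm_sum_le _ _).trans ?_
    rw [Finset.sum_mul]
    refine Finset.sum_le_sum fun β hβ => ?_
    have hkβ := hk β hβ
    have hPp := hPpos β hβ t ht
    have hQp := hQpos β hβ t ht
    have heq : ‖(k β : ℂ) * (((Q β t:ℝ):ℂ)/((P β t:ℝ):ℂ)) * Ee β g t * F t (σ β * g)‖
        = k β * (Q β t/P β t) * ‖F t (σ β * g)‖ := by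
      rw [norm_mul, norm_mul, norm_mul, norm_div, hEn]
      simp only [Complex.norm_real, Real.norm_eq_abs]
      rw [abs_of_nonneg hkβ, abs_of_pos hPp, abs_of_pos hQp]
      ring
    rw [heq]
    have hnn : 0 ≤ k β * (Q β t / P β t) := by positivity
    exact mul_le_mul_of_nonneg_left (hFnorm t _) hnn
  -- bound on Hv - F
  have hHFb : ∀ t ∈ Ioi (0:ℝ), ‖Hv t - F t‖ ≤ Ψ t * ‖F t‖ := by
    intro t ht
    have hnn : 0 ≤ Ψ t * ‖F t‖ := mul_nonneg (hΨnn t ht) (norm_nonneg _)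
    rw [pi_norm_le_iff_of_nonneg hnn]
    intro g
    have heq : (Hv t - F t) g = ∑ α ∈ R,
        ((k α : ℂ)/(Complex.I * ((lam α g : ℝ):ℂ))) *
          (Ee α g t / ((P α t : ℝ):ℂ) * F t (σ α * g)) := by
      simp [hHv]
    rw [heq]
    refine (norm_sum_le _ _).trans ?_
    rw [hΨ, Finset.sum_mul]
    refine Finset.sum_le_sum fun α hα => ?_
    have hkα := hk α hα
    have hPp := hPpos α hα t ht
    have hl := hlmle α hα g
    have hla : 0 < |lam α g| := abs_pos.2 (hlam0 α hα g)
    have heq2 : ‖((k α : ℂ)/(Complex.I * ((lam α g : ℝ):ℂ))) *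
        (Ee α g t / ((P α t : ℝ):ℂ) * F t (σ α * g))‖
        = k α/|lam α g| * ((P α t)⁻¹ * ‖F t (σ α * g)‖) := by
      rw [norm_mul, norm_div, norm_mul, norm_mul, norm_div, hEn, Complex.norm_I]
      simp only [Complex.norm_real, Real.norm_eq_abs]
      rw [abs_of_nonneg hkα, abs_of_pos hPp]
      rw [one_mul, one_div]
    rw [heq2]
    calc k α/|lam α g| * ((P α t)⁻¹ * ‖F t (σ α * g)‖)
        ≤ k α/lm * ((P α t)⁻¹ * ‖F t‖) := by
          have h1 : k α/|lam α g| ≤ k α/lm := div_le_div_of_nonneg_left hkα hlmpos hl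
          have h2 : (P α t)⁻¹ * ‖F t (σ α * g)‖ ≤ (P α t)⁻¹ * ‖F t‖ := by
            have h5 : 0 ≤ (P α t)⁻¹ := by positivity
            exact mul_le_mul_of_nonneg_left (hFnorm t _) h5
          have h3 : 0 ≤ (P α t)⁻¹ * ‖F t (σ α * g)‖ :=
            mul_nonneg (by positivity) (norm_nonneg _)
          have h4 : 0 ≤ k α/lm := div_nonneg hkα hlmpos.le
          exact mul_le_mul h1 h2 h3 h4
      _ = k α/lm * (P α t)⁻¹ * ‖F t‖ := by ring
  -- bound on DH
  have hDHb : ∀ t ∈ Ioi (0:ℝ), ∀ g : G, ‖DH t g‖ ≤ Φ' t * ‖F t‖ := by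
    intro t ht g
    rw [hDH]
    refine (norm_sum_le _ _).trans ?_
    have step1 : ∀ α ∈ R, ‖((k α:ℂ)/(Complex.I * ((lam α g:ℝ):ℂ))) *
        (Ee α g t / ((P α t:ℝ):ℂ) * DF t (σ α * g)
          - Ee α g t * (((Q α t:ℝ):ℂ)/((P α t:ℝ):ℂ)^2) * F t (σ α * g))‖
        ≤ k α/lm * ((P α t)⁻¹ * ((∑ β ∈ R, k β * (Q β t/P β t)) * ‖F t‖)
            + Q α t/(P α t)^2 * ‖F t‖) := by
      intro α hα
      have hkα := hk α hα
      have hPp := hPpos α hα t ht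
      have hQp := hQpos α hα t ht
      have hl := hlmle α hα g
      have hla : 0 < |lam α g| := abs_pos.2 (hlam0 α hα g)
      have hC : ‖((k α:ℂ)/(Complex.I * ((lam α g:ℝ):ℂ)))‖ = k α/|lam α g| := by
        rw [norm_div, norm_mul, Complex.norm_I]
        simp only [Complex.norm_real, Real.norm_eq_abs]
        rw [abs_of_nonneg hkα, one_mul]
      have hA : ‖Ee α g t / ((P α t:ℝ):ℂ) * DF t (σ α * g)‖
          ≤ (P α t)⁻¹ * ((∑ β ∈ R, k β * (Q β t/P β t)) * ‖F t‖) := by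
        rw [norm_mul, norm_div, hEn]
        simp only [Complex.norm_real, Real.norm_eq_abs]
        rw [abs_of_pos hPp, one_div]
        exact mul_le_mul_of_nonneg_left (hDFb t ht _) (by positivity)
      have hB : ‖Ee α g t * (((Q α t:ℝ):ℂ)/((P α t:ℝ):ℂ)^2) * F t (σ α * g)‖
          ≤ Q α t/(P α t)^2 * ‖F t‖ := by
        rw [norm_mul, norm_mul, hEn, norm_div, norm_pow]
        simp only [Complex.norm_real, Real.norm_eq_abs]
        rw [abs_of_pos hPp, abs_of_pos hQp, one_mul]
        exact mul_le_mul_of_nonneg_left (hFnorm t _) (by positivity)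
      calc ‖((k α:ℂ)/(Complex.I * ((lam α g:ℝ):ℂ))) *
          (Ee α g t / ((P α t:ℝ):ℂ) * DF t (σ α * g)
            - Ee α g t * (((Q α t:ℝ):ℂ)/((P α t:ℝ):ℂ)^2) * F t (σ α * g))‖
          = k α/|lam α g| * ‖Ee α g t / ((P α t:ℝ):ℂ) * DF t (σ α * g)
            - Ee α g t * (((Q α t:ℝ):ℂ)/((P α t:ℝ):ℂ)^2) * F t (σ α * g)‖ := by
            rw [norm_mul, hC]
        _ ≤ k α/|lam α g| * ((P α t)⁻¹ * ((∑ β ∈ R, k β * (Q β t/P β t)) * ‖F t‖)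
            + Q α t/(P α t)^2 * ‖F t‖) := by
            refine mul_le_mul_of_nonneg_left ?_ (by positivity)
            exact (norm_sub_le _ _).trans (add_le_add hA hB)
        _ ≤ k α/lm * ((P α t)⁻¹ * ((∑ β ∈ R, k β * (Q β t/P β t)) * ‖F t‖)
            + Q α t/(P α t)^2 * ‖F t‖) := by
            refine mul_le_mul_of_nonneg_right
              (div_le_div_of_nonneg_left hkα hlmpos hl) ?_
            have hnn1 : 0 ≤ (∑ β ∈ R, k β * (Q β t/P β t)) := by
              refine Finset.sum_nonneg fun β hβ => ?_
              have := hk β hβ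
              have := (hQpos β hβ t ht).le
              have := hPpos β hβ t ht
              positivity
            positivity
    refine (Finset.sum_le_sum step1).trans ?_
    -- exchange sums
    have step2 : ∀ α ∈ R, k α/lm * ((P α t)⁻¹ * ((∑ β ∈ R, k β * (Q β t/P β t)) * ‖F t‖)
          + Q α t/(P α t)^2 * ‖F t‖)
        ≤ k α/lm * (Sf t * ‖F t‖ + Q α t/(P α t)^2 * ‖F t‖) := by
      intro α hα
      have hkα := hk α hα
      refine mul_le_mul_of_nonneg_left ?_ (by positivity)
      refine add_le_add_left ?_ _
      calc (P α t)⁻¹ * ((∑ β ∈ R, k β * (Q β t/P β t)) * ‖F t‖)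
          = ∑ β ∈ R, (P α t)⁻¹ * (k β * (Q β t/P β t) * ‖F t‖) := by
            rw [Finset.sum_mul, Finset.mul_sum]
        _ ≤ ∑ β ∈ R, k β * ‖β‖/δ * (Q β t/(P β t)^2) * ‖F t‖ := by
            refine Finset.sum_le_sum fun β hβ => ?_
            have h1 := aux_pair (k β) ‖β‖ δ (P α t) (P β t) (Q β t)
              (hPpos α hα t ht) (hPpos β hβ t ht) (hQpos β hβ t ht).le (hk β hβ) hδ
              (by
                have h2 := hPκ α hα t ht
                have h3 := hPle β t
                nlinarith [norm_nonneg β])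
            calc (P α t)⁻¹ * (k β * (Q β t/P β t) * ‖F t‖)
                = ((P α t)⁻¹ * (k β * (Q β t/P β t))) * ‖F t‖ := by ring
              _ ≤ (k β * ‖β‖/δ * (Q β t/(P β t)^2)) * ‖F t‖ :=
                  mul_le_mul_of_nonneg_right h1 (norm_nonneg _)
        _ = Sf t * ‖F t‖ := by rw [hSf, Finset.sum_mul]
    refine (Finset.sum_le_sum step2).trans ?_
    -- final algebraic identity
    have hsum1 : (∑ α ∈ R, k α/lm) = K/lm := by rw [hK, Finset.sum_div]
    have key : (∑ α ∈ R, k α/lm * (Sf t * ‖F t‖ + Q α t/(P α t)^2 * ‖F t‖))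
        = Φ' t * ‖F t‖ := by
      have h1 : (∑ α ∈ R, k α/lm * (Sf t * ‖F t‖ + Q α t/(P α t)^2 * ‖F t‖))
          = (∑ α ∈ R, k α/lm * (Sf t * ‖F t‖))
            + ∑ α ∈ R, k α/lm * (Q α t/(P α t)^2 * ‖F t‖) := by
        rw [← Finset.sum_add_distrib]
        exact Finset.sum_congr rfl fun α _ => by ring
      have h2 : (∑ α ∈ R, k α/lm * (Sf t * ‖F t‖))
          = (∑ α ∈ R, k α/lm) * (Sf t * ‖F t‖) :=
        (Finset.sum_mul R (fun α => k α/lm) (Sf t * ‖F t‖)).symm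
      have h3 : (∑ α ∈ R, k α/lm) * (Sf t * ‖F t‖)
          = (K/lm) * Sf t * ‖F t‖ := by rw [hsum1, mul_assoc]
      have h4 : (K/lm) * Sf t = ∑ α ∈ R, (K/lm) * (k α * ‖α‖/δ * (Q α t/(P α t)^2)) := by
        rw [hSf]
        exact Finset.mul_sum R (fun β => k β * ‖β‖/δ * (Q β t/(P β t)^2)) (K/lm)
      have h5 : (∑ α ∈ R, (K/lm) * (k α * ‖α‖/δ * (Q α t/(P α t)^2))) * ‖F t‖
          = ∑ α ∈ R, (K/lm) * (k α * ‖α‖/δ * (Q α t/(P α t)^2)) * ‖F t‖ :=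
        Finset.sum_mul R _ ‖F t‖
      have h6 : Φ' t * ‖F t‖ = ∑ α ∈ R, cP α * (Q α t/(P α t)^2) * ‖F t‖ := by
        rw [hΦ']
        exact Finset.sum_mul R (fun α => cP α * (Q α t/(P α t)^2)) ‖F t‖
      rw [h1, h2, h3, h4, h5, h6, ← Finset.sum_add_distrib]
      refine Finset.sum_congr rfl fun α _ => ?_
      rw [hcP]
      ring
    exact le_of_eq key
  -- derivative of Φ
  have hΦd : ∀ t ∈ Ioi (0:ℝ), HasDerivAt Φ (Φ' t) t := by
    intro t ht
    rw [hΦ, hΦ']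
    refine HasDerivAt.fun_sum fun α hα => ?_
    have h := (((hPd α t ht).inv (hPpos α hα t ht).ne').neg).const_mul (cP α)
    exact h.congr_deriv (by ring)
  -- monotonicity of P
  have hPmono : ∀ α ∈ R, ∀ s ∈ Ioi (0:ℝ), ∀ t ∈ Ioi (0:ℝ), s ≤ t → P α s ≤ P α t := by
    intro α hα s hs t ht hst
    rcases eq_or_lt_of_le hst with rfl | h
    · exact le_refl _
    have hmono : StrictMonoOn (P α) (Ioi 0) := by
      refine strictMonoOn_of_deriv_pos (convex_Ioi 0) ?_ ?_
      · intro x hx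
        exact (hPd α x hx).continuousAt.continuousWithinAt
      · intro x hx
        rw [interior_Ioi] at hx
        rw [(hPd α x hx).deriv]
        exact hQpos α hα x hx
    exact (hmono hs ht h).le
  have hΨmono : ∀ s ∈ Ioi (0:ℝ), ∀ t ∈ Ioi (0:ℝ), s ≤ t → Ψ t ≤ Ψ s := by
    intro s hs t ht hst
    rw [hΨ]
    refine Finset.sum_le_sum fun α hα => ?_
    have h1 := hPmono α hα s hs t ht hst
    have h2 := hPpos α hα s hs
    refine mul_le_mul_of_nonneg_left ?_ (div_nonneg (hk α hα) hlmpos.le)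
    exact inv_anti₀ h2 h1
  have hΦmono : ∀ s ∈ Ioi (0:ℝ), ∀ t ∈ Ioi (0:ℝ), s ≤ t → Φ s ≤ Φ t := by
    intro s hs t ht hst
    rw [hΦ]
    refine Finset.sum_le_sum fun α hα => ?_
    have h1 := hPmono α hα s hs t ht hst
    have h2 := hPpos α hα s hs
    refine mul_le_mul_of_nonneg_left ?_ (hcPnn α hα)
    exact neg_le_neg (inv_anti₀ h2 h1)
  -- epsilon function and its smallness
  set eps : ℝ → ℝ := fun t => 2 * Ψ t - Φ t with hepsdef
  have hepsnn : ∀ t ∈ Ioi (0:ℝ), 0 ≤ eps t := by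
    intro t ht
    have h1 := hΨnn t ht
    have h2 := hΦnp t ht
    rw [hepsdef]
    dsimp only
    linarith
  have hepsmono : ∀ s ∈ Ioi (0:ℝ), ∀ t ∈ Ioi (0:ℝ), s ≤ t → eps t ≤ eps s := by
    intro s hs t ht hst
    have h1 := hΨmono s hs t ht hst
    have h2 := hΦmono s hs t ht hst
    rw [hepsdef]
    dsimp only
    linarith
  set C0 : ℝ := ∑ α ∈ R, (2*(k α/lm) + cP α)/δ with hC0
  have hC0nn : 0 ≤ C0 := by
    rw [hC0]
    refine Finset.sum_nonneg fun α hα => ?_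
    have h1 := hk α hα
    have h2 := hcPnn α hα
    positivity
  have hepsbound : ∀ t ∈ Ioi (0:ℝ), 0 < ‖κ t‖ → eps t ≤ C0/‖κ t‖ := by
    intro t ht hκt
    have heq : eps t = ∑ α ∈ R, (2*(k α/lm) + cP α) * (P α t)⁻¹ := by
      rw [hepsdef]
      dsimp only
      rw [hΨ, hΦ, Finset.mul_sum R (fun α => k α/lm * (P α t)⁻¹) 2, ← Finset.sum_sub_distrib]
      exact Finset.sum_congr rfl fun α _ => by ring
    rw [heq, hC0, Finset.sum_div]
    refine Finset.sum_le_sum fun α hα => ?_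
    have h1 := hPκ α hα t ht
    have h2 := hPpos α hα t ht
    have h3 : (P α t)⁻¹ ≤ (δ * ‖κ t‖)⁻¹ := by
      refine inv_anti₀ (by positivity) h1.le
    have h4 : 0 ≤ 2*(k α/lm) + cP α := by
      have := hk α hα
      have := hcPnn α hα
      positivity
    calc (2*(k α/lm) + cP α) * (P α t)⁻¹ ≤ (2*(k α/lm) + cP α) * (δ * ‖κ t‖)⁻¹ :=
        mul_le_mul_of_nonneg_left h3 h4
      _ = (2*(k α/lm) + cP α)/δ/‖κ t‖ := by
        rw [div_div]
        ring
  have hepssmall : ∀ η > (0:ℝ), ∀ b : ℝ, ∃ t0, b < t0 ∧ 0 < t0 ∧ eps t0 ≤ η := by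
    intro η hη b
    have h1 : ∀ᶠ t in atTop, max 1 ((C0+1)/η) ≤ ‖κ t‖ := hκtop.eventually_ge_atTop _
    have h2 : ∀ᶠ t in atTop, max b 0 < t := eventually_gt_atTop _
    obtain ⟨t0, ht1, ht2⟩ := (h1.and h2).exists
    have ht0b : b < t0 := lt_of_le_of_lt (le_max_left b 0) ht2
    have ht0pos : 0 < t0 := lt_of_le_of_lt (le_max_right b 0) ht2
    have hκ1 : (1:ℝ) ≤ ‖κ t0‖ := le_trans (le_max_left _ _) ht1
    have hκ2 : (C0+1)/η ≤ ‖κ t0‖ := le_trans (le_max_right _ _) ht1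
    refine ⟨t0, ht0b, ht0pos, ?_⟩
    have hb := hepsbound t0 ht0pos (by linarith)
    have h3 : C0/‖κ t0‖ ≤ η := by
      rw [div_le_iff₀ (by linarith)]
      have h4 : η * ((C0+1)/η) ≤ η * ‖κ t0‖ := mul_le_mul_of_nonneg_left hκ2 hη.le
      rw [mul_div_cancel₀ _ (ne_of_gt hη)] at h4
      linarith
    exact le_trans hb h3
  -- vector-valued facts
  have hFd : ∀ x ∈ Ioi (0:ℝ), HasDerivAt F (DF x) x := fun x hx =>
    hasDerivAt_pi.2 (fun g => hF' x hx g)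
  have hHvd : ∀ x ∈ Ioi (0:ℝ), HasDerivAt Hv (DH x) x := fun x hx =>
    hasDerivAt_pi.2 (fun g => hHd x hx g)
  have hDHn : ∀ x ∈ Ioi (0:ℝ), ‖DH x‖ ≤ Φ' x * ‖F x‖ := by
    intro x hx
    have hnn : 0 ≤ Φ' x * ‖F x‖ := mul_nonneg (hΦ'nn x hx) (norm_nonneg _)
    exact (pi_norm_le_iff_of_nonneg hnn).2 (fun g => hDHb x hx g)
  have hFcont : ∀ x ∈ Ioi (0:ℝ), ContinuousAt F x := fun x hx => (hFd x hx).continuousAt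
  -- main estimate
  have hEst : ∀ s ∈ Ioi (0:ℝ), ∀ t, s ≤ t → ∀ M, 0 ≤ M →
      (∀ τ ∈ Icc s t, ‖F τ‖ ≤ M) → ‖F t - F s‖ ≤ eps s * M := by
    intro s hs t hst M hM hbound
    have ht : t ∈ Ioi (0:ℝ) := lt_of_lt_of_le hs hst
    have hsub : Icc s t ⊆ Ioi (0:ℝ) := fun τ hτ => lt_of_lt_of_le hs hτ.1
    have hHest : ‖Hv t - Hv s‖ ≤ M * Φ t - M * Φ s := by
      refine mvt_varbound (f := Hv) (f' := fun τ => DH τ) (B := fun τ => M * Φ τ)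
        (B' := fun τ => M * Φ' τ) hst ?_ ?_ ?_
      · exact fun τ hτ => hHvd τ (hsub hτ)
      · exact fun τ hτ => (hΦd τ (hsub hτ)).const_mul M
      · intro τ hτ
        calc ‖DH τ‖ ≤ Φ' τ * ‖F τ‖ := hDHn τ (hsub hτ)
          _ ≤ Φ' τ * M := mul_le_mul_of_nonneg_left (hbound τ hτ) (hΦ'nn τ (hsub hτ))
          _ = M * Φ' τ := mul_comm _ _
    have hdecomp : F t - F s = -(Hv t - F t) + (Hv t - Hv s) + (Hv s - F s) := by abel
    have h1 : ‖F t - F s‖ ≤ ‖Hv t - F t‖ + ‖Hv t - Hv s‖ + ‖Hv s - F s‖ := by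
      rw [hdecomp]
      refine (norm_add_le _ _).trans ?_
      have := (norm_add_le (-(Hv t - F t)) (Hv t - Hv s))
      rw [norm_neg] at this
      linarith
    have h2 := hHFb t ht
    have h3 := hHFb s hs
    have h4 : Ψ t ≤ Ψ s := hΨmono s hs t ht hst
    have h5 : ‖F t‖ ≤ M := hbound t ⟨hst, le_refl t⟩
    have h6 : ‖F s‖ ≤ M := hbound s ⟨le_refl s, hst⟩
    have h7 : Φ t ≤ 0 := hΦnp t ht
    have h8 : 0 ≤ Ψ t := hΨnn t ht
    have h9 : 0 ≤ Ψ s := hΨnn s hs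
    have h10 : Ψ t * ‖F t‖ ≤ Ψ s * M :=
      mul_le_mul h4 h5 (norm_nonneg _) h9
    have h11 : Ψ s * ‖F s‖ ≤ Ψ s * M := mul_le_mul_of_nonneg_left h6 h9
    rw [hepsdef]
    dsimp only
    have h12 : M * Φ t ≤ 0 := mul_nonpos_of_nonneg_of_nonpos hM h7
    nlinarith [mul_nonneg hM (neg_nonneg.2 (hΦnp s hs))]
  clear_value P Q lam Ee DF Hv DH lmS lm K cP Φ Φ' Ψ Sf eps C0
  -- bootstrap: global bound from a point with small eps
  have hBoot : ∀ s ∈ Ioi (0:ℝ), eps s ≤ 1/2 → ∀ t, s ≤ t → ‖F t‖ ≤ 2 * ‖F s‖ := by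
    intro s hs hes t hst
    have hne : (Icc s t).Nonempty := nonempty_Icc.2 hst
    have hsub : Icc s t ⊆ Ioi (0:ℝ) := fun τ hτ => lt_of_lt_of_le hs hτ.1
    have hcont : ContinuousOn (fun τ => ‖F τ‖) (Icc s t) :=
      fun τ hτ => ((hFcont τ (hsub hτ)).norm).continuousWithinAt
    obtain ⟨τ0, hτ0mem, hτ0max⟩ := isCompact_Icc.exists_isMaxOn hne hcont
    have hM : ∀ τ ∈ Icc s t, ‖F τ‖ ≤ ‖F τ0‖ := fun τ hτ => (isMaxOn_iff.1 hτ0max) τ hτ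
    have hMest := hEst s hs τ0 hτ0mem.1 ‖F τ0‖ (norm_nonneg _)
      (fun τ hτ => hM τ ⟨hτ.1, le_trans hτ.2 hτ0mem.2⟩)
    have h1 : ‖F τ0‖ ≤ ‖F s‖ + eps s * ‖F τ0‖ := by
      have hdec : F τ0 = F s + (F τ0 - F s) := by abel
      calc ‖F τ0‖ = ‖F s + (F τ0 - F s)‖ := by rw [← hdec]
        _ ≤ ‖F s‖ + ‖F τ0 - F s‖ := norm_add_le _ _
        _ ≤ ‖F s‖ + eps s * ‖F τ0‖ := by linarith [hMest]
    have h2 : eps s * ‖F τ0‖ ≤ (1/2) * ‖F τ0‖ :=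
      mul_le_mul_of_nonneg_right hes (norm_nonneg _)
    have h3 : ‖F τ0‖ ≤ 2 * ‖F s‖ := by linarith
    exact le_trans (hM t (right_mem_Icc.2 hst)) h3
  -- base point
  obtain ⟨s0, -, hs0pos, hs0eps⟩ := hepssmall (1/2) (by norm_num) 0
  set B : ℝ := 2 * ‖F s0‖ with hB
  have hBnn : 0 ≤ B := by rw [hB]; positivity
  have hglob : ∀ t, s0 ≤ t → ‖F t‖ ≤ B := fun t ht => hBoot s0 hs0pos hs0eps t ht
  -- Cauchy and limit
  have hcauchy : Cauchy (Filter.map F atTop) := by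
    refine Metric.cauchy_iff.2 ⟨Filter.map_neBot, fun ε hε => ?_⟩
    obtain ⟨s1, hs1gt, hs1pos, hs1eps⟩ := hepssmall (ε/(2*B+1)) (by positivity) s0
    refine ⟨F '' Ici s1, Filter.image_mem_map (Ici_mem_atTop s1), ?_⟩
    rintro x ⟨u, hu, rfl⟩ y ⟨v, hv, rfl⟩
    have key : ∀ w, w ∈ Ici s1 → ‖F w - F s1‖ ≤ eps s1 * B := by
      intro w hw
      exact hEst s1 hs1pos w hw B hBnn (fun τ hτ => hglob τ (le_trans hs1gt.le hτ.1))
    have h1 := key u hu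
    have h2 := key v hv
    have hd : dist (F u) (F v) ≤ ‖F u - F s1‖ + ‖F v - F s1‖ := by
      rw [dist_eq_norm]
      have hdec : F u - F v = (F u - F s1) - (F v - F s1) := by abel
      rw [hdec]
      exact norm_sub_le _ _
    have h3 : eps s1 * B ≤ (ε/(2*B+1)) * B := mul_le_mul_of_nonneg_right hs1eps hBnn
    have h4 : 2 * ((ε/(2*B+1)) * B) < ε := by
      have h5 : (ε/(2*B+1)) * (2*B+1) = ε := div_mul_cancel₀ _ (by positivity)
      nlinarith [mul_pos hε (show (0:ℝ) < 1 by norm_num), div_pos hε (show (0:ℝ) < 2*B+1 by positivity)]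
    linarith
  obtain ⟨L, hL⟩ := CompleteSpace.complete hcauchy
  have hLt : Tendsto F atTop (nhds L) := hL
  refine ⟨L, hLt, ?_⟩
  rintro ⟨t1, ht1, hFt1⟩
  obtain ⟨s2, hs2gt, hs2pos, hs2eps⟩ := hepssmall (1/4) (by norm_num) t1
  -- F s2 ≠ 0 via backwards Gronwall
  have hFs2 : F s2 ≠ 0 := by
    intro hzero
    set c : ℝ → ℝ := fun x => ∑ β ∈ R, k β * (Q β x/P β x) with hc
    have hcnn : ∀ x ∈ Ioi (0:ℝ), 0 ≤ c x := by
      intro x hx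
      refine Finset.sum_nonneg fun β hβ => ?_
      have h1 := hk β hβ
      have h2 := hPpos β hβ x hx
      have h3 := (hQpos β hβ x hx).le
      positivity
    have hDFn : ∀ x ∈ Ioi (0:ℝ), ‖DF x‖ ≤ c x * ‖F x‖ := by
      intro x hx
      have hnn : 0 ≤ c x * ‖F x‖ := mul_nonneg (hcnn x hx) (norm_nonneg _)
      exact (pi_norm_le_iff_of_nonneg hnn).2 (fun g => hDFb x hx g)
    have hsub2 : Icc t1 s2 ⊆ Ioi (0:ℝ) := fun τ hτ => lt_of_lt_of_le ht1 hτ.1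
    have hccont : ContinuousOn c (Icc t1 s2) := by
      rw [hc]
      refine continuousOn_finset_sum R fun β hβ => ?_
      refine continuousOn_const.mul (ContinuousOn.div ?_ ?_ ?_)
      · rw [hQ]
        exact (innerSL ℝ β).continuous.comp_continuousOn (hκ'c.mono hsub2)
      · exact fun x hx => (hPd β x (hsub2 hx)).continuousAt.continuousWithinAt
      · exact fun x hx => (hPpos β hβ x (hsub2 hx)).ne'
    obtain ⟨x0, hx0mem, hx0max⟩ :=
      isCompact_Icc.exists_isMaxOn (nonempty_Icc.2 hs2gt.le) hccont
    have hφmem : ∀ τ ∈ Icc t1 s2, t1 + s2 - τ ∈ Icc t1 s2 := by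
      intro τ hτ
      exact ⟨by linarith [hτ.2], by linarith [hτ.1]⟩
    have hrevd : ∀ τ ∈ Icc t1 s2,
        HasDerivAt (fun τ => F (t1 + s2 - τ)) ((-1 : ℝ) • DF (t1 + s2 - τ)) τ := by
      intro τ hτ
      have hφ : HasDerivAt (fun τ : ℝ => t1 + s2 - τ) (-1 : ℝ) τ := by
        simpa using (hasDerivAt_id' (x := τ)).const_sub (t1+s2)
      have := (hFd _ (hsub2 (hφmem τ hτ))).scomp τ hφ
      exact this
    have hrevcont : ContinuousOn (fun τ => F (t1 + s2 - τ)) (Icc t1 s2) :=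
      fun τ hτ => ((hrevd τ hτ).continuousAt).continuousWithinAt
    have hrev0 : ‖F (t1 + s2 - t1)‖ ≤ 0 := by
      rw [show t1 + s2 - t1 = s2 by ring, hzero, norm_zero]
    have hboundrev : ∀ τ ∈ Ico t1 s2,
        ‖(-1:ℝ) • DF (t1+s2-τ)‖ ≤ c x0 * ‖F (t1 + s2 - τ)‖ + 0 := by
      intro τ hτ
      have hτ' : τ ∈ Icc t1 s2 := Ico_subset_Icc_self hτ
      have hx := hφmem τ hτ'
      have h1 := hDFn _ (hsub2 hx)
      have h2 : c (t1+s2-τ) ≤ c x0 := (isMaxOn_iff.1 hx0max) _ hx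
      rw [norm_smul, add_zero]
      have h3 : ‖(-1:ℝ)‖ = 1 := by norm_num
      rw [h3, one_mul]
      calc ‖DF (t1+s2-τ)‖ ≤ c (t1+s2-τ) * ‖F (t1+s2-τ)‖ := h1
        _ ≤ c x0 * ‖F (t1+s2-τ)‖ := mul_le_mul_of_nonneg_right h2 (norm_nonneg _)
    have hgron := norm_le_gronwallBound_of_norm_deriv_right_le hrevcont
      (fun x hx => (hrevd x (Ico_subset_Icc_self hx)).hasDerivWithinAt) hrev0
      hboundrev s2 (right_mem_Icc.2 hs2gt.le)
    rw [gronwallBound_ε0_δ0] at hgron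
    have hft1 : ‖F t1‖ ≤ 0 := by
      rw [show t1 = t1 + s2 - s2 by ring]
      exact hgron
    exact hFt1 (norm_le_zero_iff.1 hft1)
  -- conclude L ≠ 0
  have hFs2n : 0 < ‖F s2‖ := norm_pos_iff.2 hFs2
  have hstep : ∀ t, s2 ≤ t → ‖F t - F s2‖ ≤ eps s2 * (2 * ‖F s2‖) := by
    intro t ht'
    refine hEst s2 hs2pos t ht' (2*‖F s2‖) (by positivity) ?_
    intro τ hτ
    exact hBoot s2 hs2pos (le_trans hs2eps (by norm_num)) τ hτ.1
  have hLdist : ‖L - F s2‖ ≤ eps s2 * (2 * ‖F s2‖) := by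
    have htend : Tendsto (fun t => ‖F t - F s2‖) atTop (nhds ‖L - F s2‖) :=
      (hLt.sub tendsto_const_nhds).norm
    exact le_of_tendsto htend (eventually_atTop.2 ⟨s2, hstep⟩)
  have h1 : eps s2 * (2*‖F s2‖) ≤ (1/4) * (2*‖F s2‖) :=
    mul_le_mul_of_nonneg_right hs2eps (by positivity)
  have h2 : ‖F s2‖ ≤ ‖L‖ + ‖L - F s2‖ := by
    have hdec : F s2 = L - (L - F s2) := by abel
    calc ‖F s2‖ = ‖L - (L - F s2)‖ := by rw [← hdec]
      _ ≤ ‖L‖ + ‖L - F s2‖ := norm_sub_le _ _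
  have h3 : 0 < ‖L‖ := by linarith
  exact norm_pos_iff.1 h3
end

section
/- Let k > 0 be real. Then for every u ∈ ℂ, D_k(u) = e^{u} Σ_{n=0}^∞ ((k)_n/((2k+1)_n n!)) (−2u)ⁿ, where (a)_n = a(a+1)···(a+n−1) denotes the Pochhammer symbol (rising factorial) and the series converges absolutely; that is, D_k(u) = e^{u} · ₁F₁(k, 2k+1, −2u) with the confluent hypergeometric series ₁F₁. -/
open MeasureTheory Filter Set

lemma poch_pos {x : ℝ} (hx : 0 < x) (n : ℕ) : 0 < (ascPochhammer ℝ n).eval x := by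
  induction n with
  | zero => simp
  | succ n ih =>
    rw [ascPochhammer_succ_right]
    simp only [Polynomial.eval_mul, Polynomial.eval_add, Polynomial.eval_X,
      Polynomial.eval_natCast]
    positivity

lemma poch_mono {x y : ℝ} (hx : 0 < x) (hxy : x ≤ y) (n : ℕ) :
    (ascPochhammer ℝ n).eval x ≤ (ascPochhammer ℝ n).eval y := by
  induction n with
  | zero => simp
  | succ n ih =>
    rw [ascPochhammer_succ_right]
    simp only [Polynomial.eval_mul, Polynomial.eval_add, Polynomial.eval_X,
      Polynomial.eval_natCast]
    have h1 := poch_pos hx n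
    have h2 : (0:ℝ) < x + n := by positivity
    nlinarith

lemma gamma_poch {x : ℝ} (hx : 0 < x) (n : ℕ) :
    Real.Gamma (x + n) = (ascPochhammer ℝ n).eval x * Real.Gamma x := by
  induction n with
  | zero => simp
  | succ n ih =>
    have h1 : x + (n + 1 : ℕ) = (x + n) + 1 := by push_cast; ring
    rw [h1, Real.Gamma_add_one (by positivity), ih, ascPochhammer_succ_right]
    simp only [Polynomial.eval_mul, Polynomial.eval_add, Polynomial.eval_X,
      Polynomial.eval_natCast]
    ring

lemma coeff_id {k : ℝ} (hk : 0 < k) (n : ℕ) :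
    Real.Gamma (k + 1/2) / (Real.Gamma (1/2) * Real.Gamma k) * (2 * 2^(k-1) * 2^k) *
      (Real.Gamma ((n:ℝ) + k) * Real.Gamma (k+1) / Real.Gamma (((n:ℝ)+k) + (k+1))) =
    (ascPochhammer ℝ n).eval k / (ascPochhammer ℝ n).eval (2*k+1) := by
  have hπ : Real.Gamma (1/2 : ℝ) = Real.sqrt Real.pi := Real.Gamma_one_half_eq
  have dup := Real.Gamma_mul_Gamma_add_half k
  have h2k1 : Real.Gamma (2*k+1) = 2*k * Real.Gamma (2*k) := by
    rw [Real.Gamma_add_one (by positivity)]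
  have hk1 : Real.Gamma (k+1) = k * Real.Gamma k := by
    rw [Real.Gamma_add_one hk.ne']
  have hnk : Real.Gamma ((n:ℝ) + k) = (ascPochhammer ℝ n).eval k * Real.Gamma k := by
    rw [add_comm]; exact gamma_poch hk n
  have hden : Real.Gamma (((n:ℝ)+k) + (k+1)) =
      (ascPochhammer ℝ n).eval (2*k+1) * Real.Gamma (2*k+1) := by
    have : ((n:ℝ)+k) + (k+1) = (2*k+1) + n := by ring
    rw [this]; exact gamma_poch (by positivity) n
  have hpow : (2:ℝ)^(k-1) * 2^k * 2^(1-2*k) = 1 := by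
    rw [← Real.rpow_add two_pos, ← Real.rpow_add two_pos]
    have h : k - 1 + k + (1 - 2*k) = 0 := by ring
    rw [h, Real.rpow_zero]
  have hG2k : Real.Gamma (2*k) = Real.Gamma k * Real.Gamma (k+1/2) / (2^(1-2*k) * Real.sqrt Real.pi) := by
    have hp : (2:ℝ)^(1-2*k) * Real.sqrt Real.pi ≠ 0 := by
      have := Real.rpow_pos_of_pos two_pos (1-2*k)
      have := Real.sqrt_pos.mpr Real.pi_pos
      positivity
    rw [eq_div_iff hp]
    linear_combination -dup
  have hGk : Real.Gamma k ≠ 0 := (Real.Gamma_pos_of_pos hk).ne'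
  have hGkh : Real.Gamma (k+1/2) ≠ 0 := (Real.Gamma_pos_of_pos (by positivity)).ne'
  have hsπ : Real.sqrt Real.pi ≠ 0 := (Real.sqrt_pos.mpr Real.pi_pos).ne'
  have hP : (ascPochhammer ℝ n).eval (2*k+1) ≠ 0 := (poch_pos (by positivity) n).ne'
  have hp1 : (2:ℝ)^(1-2*k) ≠ 0 := (Real.rpow_pos_of_pos two_pos _).ne'
  rw [hπ, hnk, hk1, hden, h2k1, hG2k]
  set Gk := Real.Gamma k with hGkd
  set Gh := Real.Gamma (k+1/2) with hGhd
  set sπ := Real.sqrt Real.pi with hsπd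
  set A := (2:ℝ)^(k-1) with hA
  set B := (2:ℝ)^k with hB
  set C := (2:ℝ)^(1-2*k) with hC
  set P := (ascPochhammer ℝ n).eval k with hPd
  set Q := (ascPochhammer ℝ n).eval (2*k+1) with hQd
  field_simp
  linear_combination P * hpow

lemma beta_real {a b : ℝ} (ha : 0 < a) (hb : 0 < b) :
    ∫ s in Ioc (0:ℝ) 1, s ^ (a-1) * (1-s) ^ (b-1) =
      Real.Gamma a * Real.Gamma b / Real.Gamma (a+b) := by
  have hab : (0:ℝ) < a + b := by positivity
  have hG : Real.Gamma (a+b) ≠ 0 := (Real.Gamma_pos_of_pos hab).ne'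
  have key : ((∫ s in Ioc (0:ℝ) 1, s ^ (a-1) * (1-s) ^ (b-1) : ℝ) : ℂ) =
      Complex.betaIntegral a b := by
    rw [← intervalIntegral.integral_of_le (by norm_num : (0:ℝ) ≤ 1),
      ← intervalIntegral.integral_ofReal, Complex.betaIntegral]
    refine intervalIntegral.integral_congr fun x hx => ?_
    rw [uIcc_of_le (by norm_num : (0:ℝ) ≤ 1)] at hx
    rw [Complex.ofReal_mul, Complex.ofReal_cpow hx.1,
      Complex.ofReal_cpow (by linarith [hx.2] : (0:ℝ) ≤ 1 - x)]
    push_cast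
    ring
  have h2 := Complex.Gamma_mul_Gamma_eq_betaIntegral
    (s := (a:ℂ)) (t := (b:ℂ)) (by simpa using ha) (by simpa using hb)
  have hGc : Complex.Gamma ((a:ℂ) + b) ≠ 0 := by
    rw [← Complex.ofReal_add, Complex.Gamma_ofReal]
    simpa using hG
  have : Complex.betaIntegral a b = Complex.Gamma a * Complex.Gamma b / Complex.Gamma (a+b) := by
    rw [eq_div_iff hGc]
    linear_combination -h2
  rw [this] at key
  rw [← Complex.ofReal_add, Complex.Gamma_ofReal, Complex.Gamma_ofReal,
    Complex.Gamma_ofReal] at key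
  exact_mod_cast key

lemma w_integrable {k : ℝ} (hk : 0 < k) :
    IntegrableOn (fun s => s ^ (k-1) * (1-s) ^ k) (Ioc (0:ℝ) 1) := by
  have hr : IntegrableOn (fun s : ℝ => s ^ (k-1)) (Ioc (0:ℝ) 1) := by
    rw [← intervalIntegrable_iff_integrableOn_Ioc_of_le (by norm_num : (0:ℝ) ≤ 1)]
    exact intervalIntegral.intervalIntegrable_rpow' (by linarith)
  refine Integrable.mono hr ?_ ?_
  · apply Measurable.aestronglyMeasurable
    fun_prop
  · filter_upwards [ae_restrict_mem measurableSet_Ioc] with s hs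
    have h0 : 0 < s := hs.1
    have h1 : s ≤ 1 := hs.2
    have hw1 : (1-s) ^ k ≤ 1 := by
      apply Real.rpow_le_one (by linarith) (by linarith) hk.le
    have hw0 : 0 ≤ (1-s) ^ k := Real.rpow_nonneg (by linarith) k
    have hs0 : 0 ≤ s ^ (k-1) := Real.rpow_nonneg h0.le _
    rw [Real.norm_eq_abs, Real.norm_eq_abs, abs_of_nonneg (by positivity),
      abs_of_nonneg hs0]
    nlinarith


/-- The rank-one Dunkl kernel, defined by its integral representation. -/
noncomputable def Dk (k : ℝ) (u : ℂ) : ℂ :=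
  ((Real.Gamma (k + 1/2) / (Real.Gamma (1/2) * Real.Gamma k) : ℝ) : ℂ) *
    ∫ t in Icc (-1 : ℝ) 1,
      Complex.exp ((t : ℂ) * u) * (((1 - t) ^ (k - 1) * (1 + t) ^ k : ℝ) : ℂ)

set_option maxHeartbeats 2000000 in
/-- The confluent hypergeometric representation of the rank-one Dunkl kernel:
`D_k(u) = e^u · ₁F₁(k, 2k+1, -2u)`, with the `₁F₁` series written via rising
factorials (Pochhammer symbols) and converging absolutely. -/
theorem dunkl_stmt9 (k : ℝ) (hk : 0 < k) (u : ℂ) :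
    Summable (fun n : ℕ =>
      ‖((((ascPochhammer ℝ n).eval k /
          ((ascPochhammer ℝ n).eval (2 * k + 1) * (n.factorial : ℝ))) : ℝ) : ℂ) *
        (-2 * u) ^ n‖) ∧
    Dk k u = Complex.exp u *
      ∑' n : ℕ,
        ((((ascPochhammer ℝ n).eval k /
            ((ascPochhammer ℝ n).eval (2 * k + 1) * (n.factorial : ℝ))) : ℝ) : ℂ) *
          (-2 * u) ^ n := by
  -- notation
  set w : ℝ → ℝ := fun s => s ^ (k-1) * (1-s) ^ k with hwdef
  have hw : IntegrableOn w (Ioc (0:ℝ) 1) := w_integrable hk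
  set a : ℕ → ℝ := fun n => (ascPochhammer ℝ n).eval k /
      ((ascPochhammer ℝ n).eval (2 * k + 1) * (n.factorial : ℝ)) with hadef
  -- Summability of the series
  have hsummable : Summable (fun n : ℕ => ‖((a n : ℝ) : ℂ) * (-2 * u) ^ n‖) := by
    apply Summable.of_nonneg_of_le (fun n => norm_nonneg _)
      (f := fun n => (2 * ‖u‖) ^ n / n.factorial)
    · intro n
      have hQ := poch_pos (by positivity : (0:ℝ) < 2*k+1) n
      have hP := poch_pos hk n
      have hmono := poch_mono (y := 2*k+1) hk (by linarith) n
      have hfac : (0:ℝ) < n.factorial := by positivity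
      have han : |a n| ≤ 1 / n.factorial := by
        have hval : a n = (ascPochhammer ℝ n).eval k /
            ((ascPochhammer ℝ n).eval (2 * k + 1) * (n.factorial : ℝ)) := by
          simp only [hadef]
        rw [hval, abs_of_nonneg (div_nonneg hP.le (mul_pos hQ hfac).le),
          div_le_div_iff₀ (mul_pos hQ hfac) hfac]
        nlinarith
      have hnorm : ‖(-2 * u : ℂ)‖ = 2 * ‖u‖ := by
        rw [norm_mul]; norm_num
      calc ‖((a n : ℝ) : ℂ) * (-2 * u) ^ n‖ = |a n| * ‖(-2*u : ℂ)‖ ^ n := by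
            rw [norm_mul, norm_pow, Complex.norm_real, Real.norm_eq_abs]
        _ ≤ (1 / n.factorial) * (2*‖u‖) ^ n := by
            rw [hnorm]
            exact mul_le_mul_of_nonneg_right han (by positivity)
        _ = (2*‖u‖) ^ n / n.factorial := by ring
    · exact Real.summable_pow_div_factorial _
  refine ⟨hsummable, ?_⟩
  -- integrability of the terms
  have hwn : ∀ n : ℕ, IntegrableOn (fun s => s ^ n * w s) (Ioc (0:ℝ) 1) := by
    intro n
    refine Integrable.mono hw ?_ ?_
    · apply Measurable.aestronglyMeasurable; fun_prop
    · filter_upwards [ae_restrict_mem measurableSet_Ioc] with s hs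
      have h0 : 0 < s := hs.1
      have h1 : s ≤ 1 := hs.2
      have hsn : s ^ n ≤ 1 := pow_le_one₀ h0.le h1
      have hsn0 : (0:ℝ) ≤ s ^ n := by positivity
      rw [Real.norm_eq_abs, Real.norm_eq_abs, abs_mul]
      have : |s ^ n| ≤ 1 := by rw [abs_of_nonneg hsn0]; exact hsn
      nlinarith [abs_nonneg (w s)]
  -- the key termwise integral expansion
  set c : ℕ → ℂ := fun n => ((-2 : ℂ) * u) ^ n / (n.factorial : ℂ) with hcdef
  set F : ℕ → ℝ → ℂ := fun n s => c n * ((s ^ n * w s : ℝ) : ℂ) with hFdef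
  have hFint : ∀ n, IntegrableOn (F n) (Ioc (0:ℝ) 1) := fun n =>
    ((hwn n).ofReal.const_mul (c n))
  have hcnorm : ∀ n : ℕ, ‖c n‖ = (2*‖u‖) ^ n / n.factorial := by
    intro n
    rw [hcdef]
    rw [norm_div, norm_pow, norm_mul, Complex.norm_natCast]
    norm_num
  have hFnormint : ∀ n : ℕ, ∫ s in Ioc (0:ℝ) 1, ‖F n s‖ ≤
      (2*‖u‖) ^ n / n.factorial * ∫ s in Ioc (0:ℝ) 1, w s := by
    intro n
    have heq : ∀ s : ℝ, ‖F n s‖ = ‖c n‖ * |s ^ n * w s| := by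
      intro s
      rw [hFdef]
      rw [norm_mul, Complex.norm_real, Real.norm_eq_abs]
    calc ∫ s in Ioc (0:ℝ) 1, ‖F n s‖ = ‖c n‖ * ∫ s in Ioc (0:ℝ) 1, |s ^ n * w s| := by
          simp_rw [heq]; rw [integral_const_mul]
      _ ≤ ‖c n‖ * ∫ s in Ioc (0:ℝ) 1, w s := by
          apply mul_le_mul_of_nonneg_left _ (norm_nonneg _)
          apply setIntegral_mono_on (hwn n).abs hw measurableSet_Ioc
          intro s hs
          have h0 : 0 < s := hs.1
          have h1 : s ≤ 1 := hs.2
          have hw0 : 0 ≤ w s := by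
            rw [hwdef]
            exact mul_nonneg (Real.rpow_nonneg h0.le _) (Real.rpow_nonneg (by linarith) _)
          have hsn : s ^ n ≤ 1 := pow_le_one₀ h0.le h1
          rw [abs_of_nonneg (mul_nonneg (by positivity) hw0)]
          nlinarith
      _ = (2*‖u‖) ^ n / n.factorial * ∫ s in Ioc (0:ℝ) 1, w s := by rw [hcnorm n]
  -- the expansion of exp as a series
  have hexp : ∀ z : ℂ, Complex.exp z = ∑' n : ℕ, z ^ n / n.factorial := by
    intro z
    rw [Complex.exp_eq_exp_ℂ, NormedSpace.exp_eq_tsum_div]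
  have hptwise : ∀ s : ℝ, Complex.exp ((-2*u) * s) * ((w s : ℝ) : ℂ) = ∑' n, F n s := by
    intro s
    rw [hexp]
    rw [← tsum_mul_right]
    apply tsum_congr
    intro n
    rw [hFdef, hcdef]
    push_cast
    ring
  have hIoc : ∫ s in Ioc (0:ℝ) 1, Complex.exp ((-2*u) * s) * ((w s : ℝ) : ℂ)
      = ∑' n : ℕ, c n * ((∫ s in Ioc (0:ℝ) 1, s ^ n * w s : ℝ) : ℂ) := by
    calc ∫ s in Ioc (0:ℝ) 1, Complex.exp ((-2*u) * s) * ((w s : ℝ) : ℂ)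
        = ∫ s in Ioc (0:ℝ) 1, ∑' n, F n s := by
          apply integral_congr_ae
          filter_upwards with s using hptwise s
      _ = ∑' n : ℕ, ∫ s in Ioc (0:ℝ) 1, F n s := by
          refine (integral_tsum_of_summable_integral_norm hFint ?_).symm
          apply Summable.of_nonneg_of_le
            (fun n => integral_nonneg (fun s => norm_nonneg _)) hFnormint
          exact (Real.summable_pow_div_factorial _).mul_right _
      _ = ∑' n : ℕ, c n * ((∫ s in Ioc (0:ℝ) 1, s ^ n * w s : ℝ) : ℂ) := by
          apply tsum_congr
          intro n
          simp only [hFdef]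
          rw [integral_const_mul]
          congr 1
          exact integral_ofReal
  -- evaluating the moment integrals via the Beta function
  have hR : ∀ n : ℕ, (∫ s in Ioc (0:ℝ) 1, s ^ n * w s : ℝ) =
      Real.Gamma ((n:ℝ) + k) * Real.Gamma (k+1) / Real.Gamma (((n:ℝ)+k) + (k+1)) := by
    intro n
    rw [← beta_real (by positivity : (0:ℝ) < (n:ℝ) + k) (by positivity : (0:ℝ) < k+1)]
    apply setIntegral_congr_fun measurableSet_Ioc
    intro s hs
    have h0 : 0 < s := hs.1
    rw [hwdef]
    simp only
    rw [← Real.rpow_natCast s n, ← mul_assoc, ← Real.rpow_add h0]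
    have h1 : (n:ℝ) + (k - 1) = (n:ℝ) + k - 1 := by ring
    have h2 : k + 1 - 1 = k := by ring
    rw [h1, h2]
  -- the substitution t = 1 - 2s
  have hsub : (∫ t in Icc (-1:ℝ) 1,
        Complex.exp ((t:ℂ) * u) * (((1 - t) ^ (k - 1) * (1 + t) ^ k : ℝ) : ℂ))
      = ((2 * 2^(k-1) * 2^k : ℝ) : ℂ) * Complex.exp u *
        ∫ s in Ioc (0:ℝ) 1, Complex.exp ((-2*u) * s) * ((w s : ℝ) : ℂ) := by
    set G : ℝ → ℂ := fun t =>
      Complex.exp ((t:ℂ) * u) * (((1 - t) ^ (k - 1) * (1 + t) ^ k : ℝ) : ℂ) with hGdef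
    have h1 : (∫ t in Icc (-1:ℝ) 1, G t) = ∫ t in (-1:ℝ)..1, G t := by
      rw [integral_Icc_eq_integral_Ioc, intervalIntegral.integral_of_le (by norm_num : (-1:ℝ) ≤ 1)]
    have h2 := intervalIntegral.integral_comp_mul_add (a := (0:ℝ)) (b := 1) (f := G)
      (by norm_num : (-2:ℝ) ≠ 0) 1
    rw [show (-2:ℝ)*0+1 = 1 by norm_num, show (-2:ℝ)*1+1 = -1 by norm_num,
      intervalIntegral.integral_symm (a := (-1:ℝ)) (b := 1)] at h2
    have h3 : (∫ t in (-1:ℝ)..1, G t) = 2 * ∫ s in (0:ℝ)..1, G (-2*s + 1) := by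
      rw [h2, smul_neg, Complex.real_smul]
      push_cast
      ring
    have h4 : (∫ s in (0:ℝ)..1, G (-2*s + 1)) = ∫ s in Ioc (0:ℝ) 1, G (-2*s + 1) := by
      rw [intervalIntegral.integral_of_le (by norm_num : (0:ℝ) ≤ 1)]
    have h5 : ∀ s ∈ Ioc (0:ℝ) 1, G (-2*s + 1) =
        ((2^(k-1) * 2^k : ℝ) : ℂ) * Complex.exp u *
          (Complex.exp ((-2*u) * s) * ((w s : ℝ) : ℂ)) := by
      intro s hs
      have h0 : (0:ℝ) ≤ s := hs.1.le
      have h1' : s ≤ 1 := hs.2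
      rw [hGdef]
      simp only
      have e1 : (1 : ℝ) - (-2*s + 1) = 2 * s := by ring
      have e2 : (1 : ℝ) + (-2*s + 1) = 2 * (1 - s) := by ring
      rw [e1, e2]
      have e3 : (2 * s : ℝ) ^ (k-1) = 2^(k-1) * s^(k-1) :=
        Real.mul_rpow (by norm_num) h0
      have e4 : (2 * (1 - s) : ℝ) ^ k = 2^k * (1-s)^k :=
        Real.mul_rpow (by norm_num) (by linarith)
      rw [e3, e4]
      have e5 : ((-2*s + 1 : ℝ) : ℂ) * u = u + (-2*u) * s := by push_cast; ring
      rw [e5, Complex.exp_add]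
      rw [hwdef]
      push_cast
      ring
    rw [h1, h3, h4]
    rw [setIntegral_congr_fun measurableSet_Ioc h5]
    rw [integral_const_mul]
    push_cast
    ring
  -- put everything together
  rw [Dk, hsub, hIoc]
  rw [← tsum_mul_left, ← tsum_mul_left, ← tsum_mul_left]
  apply tsum_congr
  intro n
  have hid := coeff_id hk n
  have hfac : ((n.factorial : ℝ) : ℂ) ≠ 0 := by
    exact_mod_cast Nat.cast_ne_zero.mpr n.factorial_ne_zero
  have hidC := congrArg (fun x : ℝ => (x:ℂ)) hid
  push_cast at hidC
  rw [hR n]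
  simp only [hadef, hcdef]
  push_cast
  linear_combination (Complex.exp u * (-2*u)^n / (n.factorial:ℂ)) * hidC
end

section
/- Let k > 0 be real and y ∈ ℝ, and define f : ℝ → ℝ by f(x) = D_k(xy). Then f(0) = 1, f is differentiable on ℝ, and for every x ≠ 0 it satisfies the rank-one Dunkl eigenvalue equation f′(x) + k·(f(x) − f(−x))/x = y·f(x). -/
open MeasureTheory Filter Set

namespace DunklAux

lemma wInt {p q : ℝ} (hp : -1 < p) (hq : -1 < q) :
    IntervalIntegrable (fun t : ℝ => (1 - t) ^ p * (1 + t) ^ q) volume (-1) 1 := by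
  have h1 : IntervalIntegrable (fun t : ℝ => (1 - t) ^ p * (1 + t) ^ q) volume 0 1 := by
    have hrp : IntervalIntegrable (fun t : ℝ => (1 - t) ^ p) volume 0 1 := by
      have := (intervalIntegral.intervalIntegrable_rpow' (a := 0) (b := 1) hp).comp_sub_left 1
      simpa using this.symm
    apply hrp.mul_continuousOn
    intro t ht
    simp only [uIcc_of_le (by norm_num : (0:ℝ) ≤ 1), mem_Icc] at ht
    exact ((Real.continuousAt_rpow_const (1 + t) q (Or.inl (by linarith))).comp
      (by fun_prop)).continuousWithinAt
  have h2 : IntervalIntegrable (fun t : ℝ => (1 - t) ^ p * (1 + t) ^ q) volume (-1) 0 := by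
    have hrq : IntervalIntegrable (fun t : ℝ => (1 + t) ^ q) volume (-1) 0 := by
      have := (intervalIntegral.intervalIntegrable_rpow' (a := 0) (b := 1) hq).comp_add_right 1
      simpa [add_comm] using this
    have := hrq.mul_continuousOn (g := fun t : ℝ => (1 - t) ^ p) ?_
    · simpa [mul_comm] using this
    intro t ht
    simp only [uIcc_of_le (by norm_num : (-1:ℝ) ≤ 0), mem_Icc] at ht
    exact ((Real.continuousAt_rpow_const (1 - t) p (Or.inl (by linarith))).comp
      (by fun_prop)).continuousWithinAt
  exact h2.trans h1

lemma wm {p q : ℝ} : Measurable (fun t : ℝ => (1 - t) ^ p * (1 + t) ^ q) := by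
  fun_prop

lemma wIcc {p q : ℝ} (hp : -1 < p) (hq : -1 < q) :
    IntegrableOn (fun t : ℝ => (1 - t) ^ p * (1 + t) ^ q) (Icc (-1:ℝ) 1) volume := by
  exact (intervalIntegrable_iff_integrableOn_Icc_of_le (by norm_num)).mp (wInt hp hq)

lemma realBeta {a b : ℝ} (ha : 0 < a) (hb : 0 < b) :
    ∫ s in (0:ℝ)..1, s ^ (a - 1) * (1 - s) ^ (b - 1) =
      Real.Gamma a * Real.Gamma b / Real.Gamma (a + b) := by
  have key := Complex.Gamma_mul_Gamma_eq_betaIntegral (s := (a:ℂ)) (t := (b:ℂ))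
    (by simpa using ha) (by simpa using hb)
  rw [Complex.betaIntegral] at key
  have hint : (∫ s in (0:ℝ)..1, (s:ℂ) ^ ((a:ℂ) - 1) * (1 - (s:ℂ)) ^ ((b:ℂ) - 1)) =
      ((∫ s in (0:ℝ)..1, s ^ (a - 1) * (1 - s) ^ (b - 1) : ℝ) : ℂ) := by
    rw [← intervalIntegral.integral_ofReal]
    apply intervalIntegral.integral_congr
    intro s hs
    simp only [uIcc_of_le (by norm_num : (0:ℝ) ≤ 1), mem_Icc] at hs
    have h1s : (0:ℝ) ≤ 1 - s := by linarith
    push_cast [Complex.ofReal_cpow hs.1, Complex.ofReal_cpow h1s]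
    ring
  rw [hint] at key
  have hGa : Complex.Gamma (a:ℂ) = (Real.Gamma a : ℂ) := Complex.Gamma_ofReal a
  have hGb : Complex.Gamma (b:ℂ) = (Real.Gamma b : ℂ) := Complex.Gamma_ofReal b
  have hGab : Complex.Gamma ((a:ℂ) + (b:ℂ)) = (Real.Gamma (a+b) : ℂ) := by
    rw [← Complex.ofReal_add]; exact Complex.Gamma_ofReal _
  rw [hGa, hGb, hGab] at key
  have hne : Real.Gamma (a + b) ≠ 0 := (Real.Gamma_pos_of_pos (by linarith)).ne'
  have : (Real.Gamma a * Real.Gamma b : ℂ) =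
      ((Real.Gamma (a+b) * ∫ s in (0:ℝ)..1, s ^ (a - 1) * (1 - s) ^ (b - 1) : ℝ) : ℂ) := by
    push_cast; exact key
  have hre : Real.Gamma a * Real.Gamma b =
      Real.Gamma (a+b) * ∫ s in (0:ℝ)..1, s ^ (a - 1) * (1 - s) ^ (b - 1) := by
    exact_mod_cast this
  field_simp
  linarith [hre]

lemma norm1 {k : ℝ} (hk : 0 < k) :
    (Real.Gamma (k + 1/2) / (Real.Gamma (1/2) * Real.Gamma k)) *
      ∫ t in (-1:ℝ)..1, (1 - t) ^ (k-1) * (1 + t) ^ k = 1 := by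
  have hcomp := intervalIntegral.integral_comp_mul_add
    (f := fun t : ℝ => (1 - t) ^ (k-1) * (1 + t) ^ k) (a := 0) (b := 1)
    (c := 2) (two_ne_zero) (-1)
  norm_num at hcomp
  have hval : ∫ s in (0:ℝ)..1, (1 - (2*s + -1)) ^ (k-1) * (2*s) ^ k
      = 2^(k-1) * 2^k * ∫ s in (0:ℝ)..1, s ^ ((k+1) - 1) * (1 - s) ^ (k - 1) := by
    rw [← intervalIntegral.integral_const_mul]
    apply intervalIntegral.integral_congr
    intro s hs
    simp only [uIcc_of_le (by norm_num : (0:ℝ) ≤ 1), mem_Icc] at hs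
    have h1 : (1 : ℝ) - (2*s + -1) = 2 * (1 - s) := by ring
    dsimp only
    rw [h1, Real.mul_rpow (by norm_num) (by linarith),
      Real.mul_rpow (by norm_num) hs.1]
    have : (k + 1) - 1 = k := by ring
    rw [this]; ring
  rw [hval, realBeta (by linarith) hk] at hcomp
  have e1 : Real.Gamma (k+1) = k * Real.Gamma k := Real.Gamma_add_one hk.ne'
  have e2 : Real.Gamma (k+1+k) = 2*k*Real.Gamma (2*k) := by
    have h : k+1+k = 2*k+1 := by ring
    rw [h, Real.Gamma_add_one (by positivity)]
  have e3 : Real.Gamma k * Real.Gamma (k+1/2)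
      = Real.Gamma (2*k) * 2^(1-2*k) * Real.sqrt Real.pi :=
    Real.Gamma_mul_Gamma_add_half k
  have e4 : Real.Gamma (1/2) = Real.sqrt Real.pi := Real.Gamma_one_half_eq
  have hpow : (2:ℝ)^(k-1) * 2^k = 2^(2*k-1) := by
    rw [← Real.rpow_add two_pos]; ring_nf
  have hGk : 0 < Real.Gamma k := Real.Gamma_pos_of_pos hk
  have hG2k : 0 < Real.Gamma (2*k) := Real.Gamma_pos_of_pos (by positivity)
  have hGkh : 0 < Real.Gamma (k+1/2) := Real.Gamma_pos_of_pos (by positivity)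
  have hsp : 0 < Real.sqrt Real.pi := Real.sqrt_pos.mpr Real.pi_pos
  have hp2 : 0 < (2:ℝ)^(2*k-1) := Real.rpow_pos_of_pos two_pos _
  have hI : ∫ t in (-1:ℝ)..1, (1 - t) ^ (k-1) * (1 + t) ^ k
      = 2 * (2^(k-1) * 2^k * (Real.Gamma (k+1) * Real.Gamma k / Real.Gamma (k+1+k))) := by
    linarith [hcomp]
  rw [hI, e1, e2, e4, hpow]
  have hpow2 : (2:ℝ)^(1-2*k) * 2^(2*k-1) = 1 := by
    rw [← Real.rpow_add two_pos]; norm_num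
  have key : Real.Gamma (2*k)
      = Real.Gamma k * Real.Gamma (k+1/2) * 2^(2*k-1) / Real.sqrt Real.pi := by
    rw [e3]; field_simp
    linear_combination -hpow2
  rw [key]
  field_simp

set_option maxHeartbeats 1000000 in
lemma hasDeriv_key {k : ℝ} (hk : 0 < k) (y x : ℝ) :
    HasDerivAt (fun x : ℝ => ∫ t in Icc (-1:ℝ) 1,
        Complex.exp ((t : ℂ) * ((x:ℂ) * (y:ℂ))) * (((1 - t) ^ (k - 1) * (1 + t) ^ k : ℝ) : ℂ))
      (∫ t in Icc (-1:ℝ) 1, ((t:ℂ) * (y:ℂ)) *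
        (Complex.exp ((t : ℂ) * ((x:ℂ) * (y:ℂ))) * (((1 - t) ^ (k - 1) * (1 + t) ^ k : ℝ) : ℂ))) x := by
  set w : ℝ → ℝ := fun t => (1 - t) ^ (k - 1) * (1 + t) ^ k with hw
  have hkm : (-1 : ℝ) < k - 1 := by linarith
  have hkq : (-1 : ℝ) < k := by linarith
  have hwm : Measurable w := wm
  have hwInt : IntegrableOn w (Icc (-1:ℝ) 1) volume := wIcc hkm hkq
  have hw0 : ∀ t ∈ Icc (-1:ℝ) 1, 0 ≤ w t := by
    intro t ht
    simp only [mem_Icc] at ht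
    have := Real.rpow_nonneg (x := 1 - t) (by linarith) (k - 1)
    have := Real.rpow_nonneg (x := 1 + t) (by linarith) k
    positivity
  have hd : ∀ (t : ℝ) (x' : ℝ),
      HasDerivAt (fun x' : ℝ => Complex.exp ((t:ℂ) * ((x':ℂ) * (y:ℂ))) * ((w t : ℝ) : ℂ))
        (((t:ℂ) * (y:ℂ)) * (Complex.exp ((t:ℂ) * ((x':ℂ) * (y:ℂ))) * ((w t : ℝ) : ℂ))) x' := by
    intro t x'
    have h0 : HasDerivAt (fun x' : ℝ => ((x' : ℝ) : ℂ)) 1 x' := by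
      simpa using (hasDerivAt_id x').ofReal_comp
    have h1 : HasDerivAt (fun x' : ℝ => (t:ℂ) * (((x':ℝ):ℂ) * (y:ℂ))) ((t:ℂ) * (y:ℂ)) x' := by
      simpa using (h0.mul_const (y:ℂ)).const_mul (t:ℂ)
    have h2 := h1.cexp.mul_const ((w t : ℝ) : ℂ)
    convert h2 using 1
    · rfl
    ring
  have hms : ∀ x' : ℝ, AEStronglyMeasurable
      (fun t : ℝ => Complex.exp ((t:ℂ) * ((x':ℂ) * (y:ℂ))) * ((w t : ℝ) : ℂ))
      (volume.restrict (Icc (-1:ℝ) 1)) := by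
    intro x'
    exact ((Complex.continuous_exp.comp (by fun_prop)).aestronglyMeasurable.mul
      ((Complex.measurable_ofReal.comp hwm).aestronglyMeasurable))
  have hre : ∀ t x' : ℝ, ((t:ℂ) * ((x':ℂ) * (y:ℂ))).re = t * (x' * y) := by
    intro t x'
    have : ((t:ℂ) * ((x':ℂ) * (y:ℂ))) = ((t * (x' * y) : ℝ) : ℂ) := by push_cast; ring
    rw [this, Complex.ofReal_re]
  have hFint : Integrable (fun t : ℝ => Complex.exp ((t:ℂ) * ((x:ℂ) * (y:ℂ))) * ((w t : ℝ) : ℂ))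
      (volume.restrict (Icc (-1:ℝ) 1)) := by
    apply Integrable.mono' (hwInt.const_mul (Real.exp (|y| * (|x| + 1))))
    · exact hms x
    · filter_upwards [ae_restrict_mem measurableSet_Icc] with t ht
      simp only [mem_Icc] at ht
      have h3 : 0 ≤ w t := hw0 t (mem_Icc.mpr ht)
      have ht1 : |t| ≤ 1 := abs_le.mpr ⟨ht.1, ht.2⟩
      simp only [norm_mul, Complex.norm_exp, Complex.norm_real, Real.norm_eq_abs, hre]
      rw [abs_of_nonneg h3]
      have h2 : t * (x * y) ≤ |y| * (|x| + 1) := by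
        calc t * (x * y) ≤ |t * (x * y)| := le_abs_self _
        _ = |t| * |x| * |y| := by rw [abs_mul, abs_mul]; ring
        _ ≤ 1 * |x| * |y| := by
            have h := mul_le_mul_of_nonneg_right
              (mul_le_mul_of_nonneg_right ht1 (abs_nonneg x)) (abs_nonneg y)
            exact h
        _ ≤ |y| * (|x| + 1) := by nlinarith [abs_nonneg x, abs_nonneg y]
      exact mul_le_mul_of_nonneg_right (Real.exp_le_exp.mpr h2) h3
  have hF'meas : AEStronglyMeasurable
      (fun t : ℝ => ((t:ℂ) * (y:ℂ)) * (Complex.exp ((t:ℂ) * ((x:ℂ) * (y:ℂ))) * ((w t : ℝ) : ℂ)))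
      (volume.restrict (Icc (-1:ℝ) 1)) :=
    ((Complex.measurable_ofReal.comp measurable_id).mul
      measurable_const).aestronglyMeasurable.mul (hms x)
  have hbound : ∀ᵐ t : ℝ ∂(volume.restrict (Icc (-1:ℝ) 1)), ∀ x' ∈ Metric.ball x 1,
      ‖((t:ℂ) * (y:ℂ)) * (Complex.exp ((t:ℂ) * ((x':ℂ) * (y:ℂ))) * ((w t : ℝ) : ℂ))‖
        ≤ |y| * Real.exp (|y| * (|x| + 1)) * w t := by
    filter_upwards [ae_restrict_mem measurableSet_Icc] with t ht
    intro x' hx'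
    simp only [mem_Icc] at ht
    have hxx : |x'| ≤ |x| + 1 := by
      rw [Metric.mem_ball, Real.dist_eq] at hx'
      have := abs_sub_abs_le_abs_sub x' x
      linarith
    have h3 : 0 ≤ w t := hw0 t (mem_Icc.mpr ht)
    have ht1 : |t| ≤ 1 := abs_le.mpr ⟨ht.1, ht.2⟩
    simp only [norm_mul, Complex.norm_exp, Complex.norm_real, Real.norm_eq_abs, hre]
    rw [abs_of_nonneg h3]
    have h6 : Real.exp (t * (x' * y)) ≤ Real.exp (|y| * (|x| + 1)) := by
      apply Real.exp_le_exp.mpr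
      calc t * (x' * y) ≤ |t * (x' * y)| := le_abs_self _
      _ = |t| * (|x'| * |y|) := by rw [abs_mul, abs_mul]
      _ ≤ 1 * ((|x| + 1) * |y|) := by
          apply mul_le_mul ht1 _ (by positivity) one_pos.le
          exact mul_le_mul_of_nonneg_right hxx (abs_nonneg y)
      _ = |y| * (|x| + 1) := by ring
    calc |t| * |y| * (Real.exp (t * (x' * y)) * w t)
        ≤ 1 * |y| * (Real.exp (|y| * (|x| + 1)) * w t) := by
          apply mul_le_mul (mul_le_mul_of_nonneg_right ht1 (abs_nonneg y))
            (mul_le_mul_of_nonneg_right h6 h3) (by positivity) (by positivity)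
      _ = |y| * Real.exp (|y| * (|x| + 1)) * w t := by ring
  have hbi : Integrable (fun t : ℝ => |y| * Real.exp (|y| * (|x| + 1)) * w t)
      (volume.restrict (Icc (-1:ℝ) 1)) := hwInt.const_mul _
  refine (_root_.hasDerivAt_integral_of_dominated_loc_of_deriv_le (x₀ := x)
    (μ := volume.restrict (Icc (-1:ℝ) 1)) (s := Metric.ball x 1) (Metric.ball_mem_nhds x one_pos)
    (F := fun (x' : ℝ) (t : ℝ) => Complex.exp ((t:ℂ) * ((x':ℂ) * (y:ℂ))) * ((w t : ℝ) : ℂ))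
    (F' := fun (x' : ℝ) (t : ℝ) =>
      ((t:ℂ) * (y:ℂ)) * (Complex.exp ((t:ℂ) * ((x':ℂ) * (y:ℂ))) * ((w t : ℝ) : ℂ)))
    (bound := fun t => |y| * Real.exp (|y| * (|x| + 1)) * w t)
    ?_ ?_ ?_ ?_ ?_ ?_).2
  · exact Eventually.of_forall hms
  · exact hFint
  · exact hF'meas
  · exact hbound
  · exact hbi
  · exact Eventually.of_forall (fun t x' _ => hd t x')

lemma intInt_ofReal {f : ℝ → ℝ} {a b : ℝ}
    (h : IntervalIntegrable f volume a b) :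
    IntervalIntegrable (fun t => ((f t : ℝ) : ℂ)) volume a b := by
  rw [intervalIntegrable_iff] at h ⊢
  exact h.ofReal

lemma vInt {k : ℝ} (hk : 0 < k) :
    IntervalIntegrable (fun t : ℝ => (1 - t^2) ^ (k-1)) volume (-1) 1 := by
  have h := wInt (p := k-1) (q := k-1) (by linarith) (by linarith)
  rw [intervalIntegrable_iff] at h ⊢
  apply h.congr_fun ?_ measurableSet_uIoc
  intro t ht
  rw [uIoc_of_le (by norm_num : (-1:ℝ) ≤ 1), mem_Ioc] at ht
  show (1 - t) ^ (k - 1) * (1 + t) ^ (k - 1) = (1 - t^2) ^ (k-1)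
  rw [← Real.mul_rpow (by linarith) (by linarith)]
  ring_nf

lemma uCont {k : ℝ} (hk : 0 < k) : Continuous (fun t : ℝ => (1 - t^2) ^ k) := by
  rw [continuous_iff_continuousAt]
  intro t
  exact (Real.continuousAt_rpow_const _ _ (Or.inr hk.le)).comp (by fun_prop)

lemma expCont (c : ℂ) : Continuous (fun t : ℝ => Complex.exp ((t:ℂ) * c)) :=
  Complex.continuous_exp.comp (by fun_prop)

lemma hasDerivAt_texp (c : ℂ) (t : ℝ) :
    HasDerivAt (fun t : ℝ => Complex.exp ((t:ℂ) * c)) (c * Complex.exp ((t:ℂ) * c)) t := by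
  have h0 : HasDerivAt (fun t : ℝ => ((t : ℝ) : ℂ)) 1 t := by
    simpa using (hasDerivAt_id t).ofReal_comp
  have h1 : HasDerivAt (fun t : ℝ => ((t:ℝ):ℂ) * c) c t := by simpa using h0.mul_const c
  have := h1.cexp
  simpa [mul_comm] using this

lemma ibp {k : ℝ} (hk : 0 < k) (c : ℂ) :
    (2*(k:ℂ)) * ∫ t in (-1:ℝ)..1, (t:ℂ) * (((1-t^2)^(k-1) : ℝ):ℂ) * Complex.exp ((t:ℂ)*c)
      = c * ∫ t in (-1:ℝ)..1, (((1-t^2)^k : ℝ):ℂ) * Complex.exp ((t:ℂ)*c) := by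
  set v : ℝ → ℝ := fun t => (1 - t^2) ^ (k-1) with hv
  set u : ℝ → ℝ := fun t => (1 - t^2) ^ k with hu
  set E : ℝ → ℂ := fun t => Complex.exp ((t:ℂ) * c) with hE
  set G : ℝ → ℂ := fun t => ((u t : ℝ) : ℂ) * E t with hG
  set A : ℝ → ℂ := fun t => ((v t : ℝ) : ℂ) * ((k:ℂ) * (-2*(t:ℂ)) * E t) with hA
  set B : ℝ → ℂ := fun t => ((u t : ℝ) : ℂ) * (c * E t) with hB
  have hAint : IntervalIntegrable A volume (-1) 1 := by
    apply (intInt_ofReal (vInt hk)).mul_continuousOn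
    exact (Continuous.continuousOn
      (by continuity : Continuous (fun t : ℝ => (k:ℂ) * (-2*(t:ℂ)) * E t)))
  have hBint : IntervalIntegrable B volume (-1) 1 := by
    apply Continuous.intervalIntegrable
    exact ((Complex.continuous_ofReal.comp (uCont hk)).mul (continuous_const.mul (expCont c)))
  have hd : ∀ t ∈ Ioo (-1:ℝ) 1, HasDerivAt G (A t + B t) t := by
    intro t ht
    rw [mem_Ioo] at ht
    have h0 : 1 - t^2 ≠ 0 := by nlinarith
    have h1 : HasDerivAt (fun t : ℝ => 1 - t^2) (-(2*t)) t := by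
      simpa using ((hasDerivAt_pow 2 t).const_sub 1)
    have h2 : HasDerivAt (fun s : ℝ => s ^ k) (k * (1-t^2) ^ (k-1)) (1 - t^2) :=
      Real.hasDerivAt_rpow_const (Or.inl h0)
    have h3 : HasDerivAt u (k * (1-t^2)^(k-1) * (-(2*t))) t := by
      have := h2.comp t h1; exact this
    have h4 := (h3.ofReal_comp).mul (hasDerivAt_texp c t)
    convert h4 using 1
    · rfl
    · rfl
    simp only [hA, hB, hE, hu, hv]
    push_cast
    ring
  have hGcont : ContinuousOn G (Icc (-1:ℝ) 1) :=
    ((Complex.continuous_ofReal.comp (uCont hk)).mul (expCont c)).continuousOn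
  have hFTC := intervalIntegral.integral_eq_sub_of_hasDeriv_right_of_le (by norm_num : (-1:ℝ) ≤ 1)
    hGcont (fun t ht => (hd t ht).hasDerivWithinAt) (hAint.add hBint)
  have hG1 : G 1 = 0 := by
    simp only [hG, hu]
    norm_num [Real.zero_rpow hk.ne']
  have hGm1 : G (-1) = 0 := by
    simp only [hG, hu]
    norm_num [Real.zero_rpow hk.ne']
  rw [hG1, hGm1, sub_zero, intervalIntegral.integral_add hAint hBint] at hFTC
  have hA' : ∫ t in (-1:ℝ)..1, A t
      = (-(2*(k:ℂ))) * ∫ t in (-1:ℝ)..1, (t:ℂ) * ((v t : ℝ):ℂ) * E t := by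
    rw [← intervalIntegral.integral_const_mul]
    apply intervalIntegral.integral_congr
    intro t _
    simp only [hA]
    ring
  have hB' : ∫ t in (-1:ℝ)..1, B t = c * ∫ t in (-1:ℝ)..1, ((u t : ℝ):ℂ) * E t := by
    rw [← intervalIntegral.integral_const_mul]
    apply intervalIntegral.integral_congr
    intro t _
    simp only [hB]
    ring
  rw [hA', hB'] at hFTC
  linear_combination -hFTC

lemma IccInt (g : ℝ → ℂ) :
    ∫ t in Icc (-1:ℝ) 1, g t = ∫ t in (-1:ℝ)..1, g t := by
  rw [intervalIntegral.integral_of_le (by norm_num : (-1:ℝ) ≤ 1),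
    ← integral_Icc_eq_integral_Ioc]

lemma IccIntR (g : ℝ → ℝ) :
    ∫ t in Icc (-1:ℝ) 1, g t = ∫ t in (-1:ℝ)..1, g t := by
  rw [intervalIntegral.integral_of_le (by norm_num : (-1:ℝ) ≤ 1),
    ← integral_Icc_eq_integral_Ioc]

end DunklAux

open DunklAux in
/-- `x ↦ D_k(xy)` is the solution of the rank-one Dunkl eigenvalue problem
`T(k)f = y·f`, `f(0) = 1`, where `T(k)f(x) = f'(x) + k (f(x) - f(-x))/x`. -/
theorem dunkl_stmt10 (k : ℝ) (hk : 0 < k) (y : ℝ)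
    (f : ℝ → ℂ) (hf : ∀ x : ℝ, f x = Dk k ((x : ℂ) * (y : ℂ))) :
    f 0 = 1 ∧ Differentiable ℝ f ∧
      ∀ x : ℝ, x ≠ 0 →
        deriv f x + (k : ℂ) * (f x - f (-x)) / (x : ℂ) = (y : ℂ) * f x := by
  have hkm : (-1 : ℝ) < k - 1 := by linarith
  have hkq : (-1 : ℝ) < k := by linarith
  set w : ℝ → ℝ := fun t => (1 - t) ^ (k - 1) * (1 + t) ^ k with hwdef
  set c0 : ℝ := Real.Gamma (k + 1/2) / (Real.Gamma (1/2) * Real.Gamma k) with hc0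
  have hc0pos : 0 < c0 := by
    rw [hc0]
    have h1 := Real.Gamma_pos_of_pos (show (0:ℝ) < k + 1/2 by linarith)
    have h2 := Real.Gamma_pos_of_pos (show (0:ℝ) < 1/2 by norm_num)
    have h3 := Real.Gamma_pos_of_pos hk
    positivity
  -- f as explicit formula
  have hfe : ∀ x : ℝ, f x = (c0:ℂ) *
      ∫ t in Icc (-1:ℝ) 1, Complex.exp ((t:ℂ) * ((x:ℂ) * (y:ℂ))) * ((w t : ℝ) : ℂ) := by
    intro x
    rw [hf x]
    rfl
  -- the split rpow identity
  have hsplit : ∀ a : ℝ, 0 ≤ a → a ^ k = a ^ (k-1) * a := by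
    intro a ha
    rcases eq_or_lt_of_le ha with h | h
    · rw [← h, Real.zero_rpow hk.ne', mul_zero]
    · have : k = (k - 1) + 1 := by ring
      rw [this, Real.rpow_add_one h.ne']
      ring_nf
  refine ⟨?_, ?_, ?_⟩
  · -- f 0 = 1
    rw [hfe 0]
    have h1 : ∀ t : ℝ, Complex.exp ((t:ℂ) * (((0:ℝ):ℂ) * (y:ℂ))) * ((w t : ℝ) : ℂ)
        = ((w t : ℝ) : ℂ) := by
      intro t
      norm_num
    simp only [h1]
    rw [show (∫ t in Icc (-1:ℝ) 1, ((w t : ℝ) : ℂ))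
        = ((∫ t in Icc (-1:ℝ) 1, w t : ℝ) : ℂ) from _root_.integral_ofReal]
    rw [IccIntR]
    rw [← Complex.ofReal_mul]
    rw [Complex.ofReal_eq_one]
    exact norm1 hk
  · -- differentiable
    have : f = fun x : ℝ => (c0:ℂ) *
        ∫ t in Icc (-1:ℝ) 1, Complex.exp ((t:ℂ) * ((x:ℂ) * (y:ℂ))) * ((w t : ℝ) : ℂ) := by
      funext x; exact hfe x
    rw [this]
    exact fun x => ((hasDeriv_key hk y x).const_mul (c0:ℂ)).differentiableAt
  · -- the Dunkl equation
    intro x hx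
    have hxC : (x:ℂ) ≠ 0 := by exact_mod_cast hx
    -- derivative value
    have hDf : deriv f x = (c0:ℂ) * ∫ t in Icc (-1:ℝ) 1,
        ((t:ℂ) * (y:ℂ)) * (Complex.exp ((t:ℂ) * ((x:ℂ) * (y:ℂ))) * ((w t : ℝ) : ℂ)) := by
      have heq : f = fun x : ℝ => (c0:ℂ) *
          ∫ t in Icc (-1:ℝ) 1, Complex.exp ((t:ℂ) * ((x:ℂ) * (y:ℂ))) * ((w t : ℝ) : ℂ) := by
        funext x; exact hfe x
      rw [heq]
      exact (((hasDeriv_key hk y x).const_mul (c0:ℂ))).deriv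
    set E : ℝ → ℂ := fun t => Complex.exp ((t:ℂ) * ((x:ℂ) * (y:ℂ))) with hE
    set u : ℝ → ℝ := fun t => (1 - t^2) ^ k with hu
    set v : ℝ → ℝ := fun t => (1 - t^2) ^ (k-1) with hv
    -- interval integral forms
    have hI0 : (∫ t in Icc (-1:ℝ) 1, E t * ((w t : ℝ) : ℂ))
        = ∫ t in (-1:ℝ)..1, E t * ((w t : ℝ) : ℂ) := IccInt _
    have hI1 : (∫ t in Icc (-1:ℝ) 1, ((t:ℂ) * (y:ℂ)) * (E t * ((w t : ℝ) : ℂ)))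
        = ∫ t in (-1:ℝ)..1, ((t:ℂ) * (y:ℂ)) * (E t * ((w t : ℝ) : ℂ)) := IccInt _
    -- f (-x) rewritten
    have hfm : f (-x) = (c0:ℂ) * ∫ t in (-1:ℝ)..1, E t * ((w (-t) : ℝ) : ℂ) := by
      rw [hfe (-x), IccInt]
      congr 1
      have hneg := intervalIntegral.integral_comp_neg (a := (-1:ℝ)) (b := 1)
        (fun s => E s * ((w (-s) : ℝ) : ℂ))
      norm_num at hneg
      rw [← hneg]
      apply intervalIntegral.integral_congr
      intro t _
      have : ((-t:ℝ):ℂ) * ((x:ℂ) * (y:ℂ)) = (t:ℂ) * (((-x:ℝ):ℂ) * (y:ℂ)) := by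
        push_cast; ring
      simp only [hE, neg_neg, this]
    -- integrability facts
    have hEwInt : IntervalIntegrable (fun t => E t * ((w t : ℝ) : ℂ)) volume (-1) 1 := by
      have h := (intInt_ofReal (wInt hkm hkq)).mul_continuousOn
        (g := E) ((expCont _).continuousOn)
      have he : (fun t : ℝ => ((w t : ℝ) : ℂ) * E t) = fun t => E t * ((w t : ℝ) : ℂ) := by
        funext t; ring
      rw [← he]
      exact h
    have hwneg : (fun t : ℝ => w (-t)) = fun t : ℝ => (1 - t) ^ k * (1 + t) ^ (k-1) := by
      funext t
      simp only [hwdef]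
      rw [sub_neg_eq_add, show ((1:ℝ) + -t) = 1 - t by ring, show ((1:ℝ) + t) = 1 - (-t) by ring]
      rw [show ((1:ℝ) - -t) = 1 + t by ring]
      ring
    have hwnInt : IntervalIntegrable (fun t : ℝ => w (-t)) volume (-1) 1 := by
      rw [hwneg]
      exact wInt hkq hkm
    have hEwnInt : IntervalIntegrable (fun t => E t * ((w (-t) : ℝ) : ℂ)) volume (-1) 1 := by
      have h := (intInt_ofReal hwnInt).mul_continuousOn (g := E) ((expCont _).continuousOn)
      have he : (fun t : ℝ => ((w (-t) : ℝ) : ℂ) * E t) = fun t => E t * ((w (-t) : ℝ) : ℂ) := by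
        funext t; ring
      rw [← he]
      exact h
    have hEuInt : IntervalIntegrable (fun t => E t * ((u t : ℝ) : ℂ)) volume (-1) 1 := by
      apply Continuous.intervalIntegrable
      exact (expCont _).mul (Complex.continuous_ofReal.comp (uCont hk))
    -- pointwise identities on Icc
    have hwsub : ∀ t ∈ Icc (-1:ℝ) 1, w t - w (-t) = 2 * t * v t := by
      intro t ht
      rw [mem_Icc] at ht
      have h1m : (0:ℝ) ≤ 1 - t := by linarith
      have h1p : (0:ℝ) ≤ 1 + t := by linarith
      simp only [hwdef, hv]
      rw [sub_neg_eq_add, add_comm (1:ℝ) (-t), show (-t + 1 : ℝ) = 1 - t by ring]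
      rw [hsplit (1+t) h1p, hsplit (1-t) h1m]
      rw [show (1 - t^2 : ℝ) = (1-t)*(1+t) by ring, Real.mul_rpow h1m h1p]
      ring
    have htw : ∀ t ∈ Icc (-1:ℝ) 1, t * w t = w t - u t := by
      intro t ht
      rw [mem_Icc] at ht
      have h1m : (0:ℝ) ≤ 1 - t := by linarith
      have h1p : (0:ℝ) ≤ 1 + t := by linarith
      simp only [hwdef, hu]
      rw [show (1 - t^2 : ℝ) = (1-t)*(1+t) by ring, Real.mul_rpow h1m h1p]
      rw [hsplit (1-t) h1m]
      ring
    -- main complex identities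
    set I0 : ℂ := ∫ t in (-1:ℝ)..1, E t * ((w t : ℝ) : ℂ) with hI0def
    set I2 : ℂ := ∫ t in (-1:ℝ)..1, E t * ((w (-t) : ℝ) : ℂ) with hI2def
    set U : ℂ := ∫ t in (-1:ℝ)..1, E t * ((u t : ℝ) : ℂ) with hUdef
    -- e2 : k * (I0 - I2) = x*y*U
    have hibp := ibp hk ((x:ℂ) * (y:ℂ))
    have hibp' : (2*(k:ℂ)) * ∫ t in (-1:ℝ)..1, E t * ((t:ℂ) * ((v t : ℝ):ℂ))
        = ((x:ℂ) * (y:ℂ)) * U := by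
      rw [hUdef]
      have l1 : ∫ t in (-1:ℝ)..1, E t * ((t:ℂ) * ((v t : ℝ):ℂ))
          = ∫ t in (-1:ℝ)..1, (t:ℂ) * (((1-t^2)^(k-1) : ℝ):ℂ) * Complex.exp ((t:ℂ)*((x:ℂ)*(y:ℂ))) := by
        apply intervalIntegral.integral_congr
        intro t _
        simp only [hE, hv]
        ring
      have l2 : ∫ t in (-1:ℝ)..1, E t * ((u t : ℝ):ℂ)
          = ∫ t in (-1:ℝ)..1, (((1-t^2)^k : ℝ):ℂ) * Complex.exp ((t:ℂ)*((x:ℂ)*(y:ℂ))) := by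
        apply intervalIntegral.integral_congr
        intro t _
        simp only [hE, hu]
        ring
      rw [l1, l2]
      exact hibp
    have e2 : (k:ℂ) * (I0 - I2) = (x:ℂ) * (y:ℂ) * U := by
      have hsub : I0 - I2 = ∫ t in (-1:ℝ)..1, E t * (((w t : ℝ):ℂ) - ((w (-t) : ℝ):ℂ)) := by
        rw [hI0def, hI2def, ← intervalIntegral.integral_sub hEwInt hEwnInt]
        apply intervalIntegral.integral_congr
        intro t _
        ring
      have hsub2 : (∫ t in (-1:ℝ)..1, E t * (((w t : ℝ):ℂ) - ((w (-t) : ℝ):ℂ)))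
          = 2 * ∫ t in (-1:ℝ)..1, E t * ((t:ℂ) * ((v t : ℝ):ℂ)) := by
        rw [← intervalIntegral.integral_const_mul]
        apply intervalIntegral.integral_congr
        intro t ht
        rw [uIcc_of_le (by norm_num : (-1:ℝ) ≤ 1)] at ht
        have := hwsub t ht
        have hcast : ((w t : ℝ):ℂ) - ((w (-t) : ℝ):ℂ) = 2 * (t:ℂ) * ((v t : ℝ):ℂ) := by
          rw [← Complex.ofReal_sub, this]
          push_cast
          ring
        dsimp only
        rw [hcast]
        ring
      rw [hsub, hsub2]
      rw [← hibp']
      ring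
    -- e1 : I1 = y * (I0 - U)
    have e1 : (∫ t in (-1:ℝ)..1, ((t:ℂ) * (y:ℂ)) * (E t * ((w t : ℝ) : ℂ)))
        = (y:ℂ) * (I0 - U) := by
      have l1 : (∫ t in (-1:ℝ)..1, ((t:ℂ) * (y:ℂ)) * (E t * ((w t : ℝ) : ℂ)))
          = (y:ℂ) * ∫ t in (-1:ℝ)..1, E t * (((w t : ℝ):ℂ) - ((u t : ℝ):ℂ)) := by
        rw [← intervalIntegral.integral_const_mul]
        apply intervalIntegral.integral_congr
        intro t ht
        rw [uIcc_of_le (by norm_num : (-1:ℝ) ≤ 1)] at ht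
        have := htw t ht
        have hcast : (t:ℂ) * ((w t : ℝ):ℂ) = ((w t : ℝ):ℂ) - ((u t : ℝ):ℂ) := by
          rw [← Complex.ofReal_sub, ← this]
          push_cast
          ring
        calc ((t:ℂ) * (y:ℂ)) * (E t * ((w t : ℝ) : ℂ))
            = (y:ℂ) * (E t * ((t:ℂ) * ((w t : ℝ):ℂ))) := by ring
          _ = (y:ℂ) * (E t * (((w t : ℝ):ℂ) - ((u t : ℝ):ℂ))) := by rw [hcast]
      rw [l1]
      congr 1
      rw [hI0def, hUdef, ← intervalIntegral.integral_sub hEwInt hEuInt]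
      apply intervalIntegral.integral_congr
      intro t _
      ring
    -- assemble
    rw [hDf, hI1, hfe x, hI0, hfm, e1]
    field_simp
    linear_combination ((c0:ℂ)) * e2
end
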